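/- arXiv:0811.3617 — 8 statements merged into one kernel-verified Lean document; each statement's English description precedes it below -/
import Mathlib

section
/- Let S = ∏_{j=1}^n [c_j, c_j + Δ_j] ⊂ ℝⁿ be a rectangular cell with edge lengths Δ_j > 0, and let g : S → ℝ be continuous and such that for each j ∈ {1,…,n} and all x, x' ∈ S differing only in the j-th coordinate, |g(x) − g(x')| ≤ b_j·|x_j − x'_j|. If X is uniformly distributed on S, then Var(g(X)) ≤ ∑_{j=1}^n b_j²·Δ_j²/12. -/
open MeasureTheory ProbabilityTheory Set
open scoped BigOperators

section Helpers

lemma contOn_of_bound {α : Type*} [PseudoMetricSpace α] {s : Set α} {F : α → ℝ} {K : ℝ}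
    (h : ∀ x ∈ s, ∀ y ∈ s, |F x - F y| ≤ K * dist x y) : ContinuousOn F s := by
  have : LipschitzOnWith (Real.toNNReal K) F s := by
    rw [lipschitzOnWith_iff_dist_le_mul]
    intro x hx y hy
    rw [Real.dist_eq]
    exact (h x hx y hy).trans (mul_le_mul_of_nonneg_right (Real.le_coe_toNNReal K) dist_nonneg)
  exact this.continuousOn

open intervalIntegral in
lemma myintegral_id {a b : ℝ} : ∫ x in a..b, x = (b^2 - a^2)/2 := integral_id

open intervalIntegral in
lemma myintegral_sq {a b : ℝ} : ∫ x in a..b, x^2 = (b^3 - a^3)/3 := by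
  have h := integral_pow (a := a) (b := b) 2
  push_cast at h
  rw [h]; norm_num

lemma innerId {a d : ℝ} (hd : 0 < d) {u : ℝ → ℝ} (hu : ContinuousOn u (Icc a (a+d))) (x : ℝ) :
    ∫ y in Icc a (a+d), (u x - u y)^2
      = d*(u x)^2 - 2*u x*(∫ y in Icc a (a+d), u y) + ∫ y in Icc a (a+d), (u y)^2 := by
  have hvol : volume (Icc a (a+d)) = ENNReal.ofReal d := by
    rw [Real.volume_Icc]; congr 1; ring
  have hfin : volume (Icc a (a+d)) < ⊤ := by rw [hvol]; exact ENNReal.ofReal_lt_top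
  have hu1 : IntegrableOn u (Icc a (a+d)) := hu.integrableOn_compact isCompact_Icc
  have hu2 : IntegrableOn (fun y => (u y)^2) (Icc a (a+d)) :=
    (hu.pow 2).integrableOn_compact isCompact_Icc
  have hc : IntegrableOn (fun _ : ℝ => (u x)^2) (Icc a (a+d)) :=
    integrableOn_const hfin.ne
  have expand : ∀ y : ℝ, (u x - u y)^2 = (u x)^2 + ((-(2*u x))*u y + (u y)^2) := by
    intro y; ring
  have hm : IntegrableOn (fun y => (-(2*u x))*u y) (Icc a (a+d)) := hu1.const_mul _
  have hadd : IntegrableOn (fun y => (-(2*u x))*u y + (u y)^2) (Icc a (a+d)) := hm.add hu2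
  simp_rw [expand]
  rw [integral_add hc hadd, integral_add hm hu2,
      integral_const_mul, setIntegral_const, measureReal_def, hvol, ENNReal.toReal_ofReal hd.le, smul_eq_mul]
  ring

lemma oneDim_var_bound {a d : ℝ} (bb : ℝ) (hd : 0 < d) (f : ℝ → ℝ)
    (hL : ∀ x ∈ Icc a (a+d), ∀ y ∈ Icc a (a+d), |f x - f y| ≤ bb * |x - y|) :
    d * (∫ x in Icc a (a+d), (f x)^2) - (∫ x in Icc a (a+d), f x)^2 ≤ bb^2 * d^4 / 12 := by
  have hfc : ContinuousOn f (Icc a (a+d)) := by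
    refine contOn_of_bound (K := bb) ?_
    intro x hx y hy
    simpa [Real.dist_eq] using hL x hx y hy
  have hic : ContinuousOn (fun y : ℝ => y) (Icc a (a+d)) := continuousOn_id
  set F := ∫ x in Icc a (a+d), f x with hF
  set Q := ∫ x in Icc a (a+d), (f x)^2 with hQ
  set Fi := ∫ x in Icc a (a+d), x with hFi
  set Qi := ∫ x in Icc a (a+d), x^2 with hQi
  have hvol : volume (Icc a (a+d)) = ENNReal.ofReal d := by
    rw [Real.volume_Icc]; congr 1; ring
  have hfin : volume (Icc a (a+d)) < ⊤ := by rw [hvol]; exact ENNReal.ofReal_lt_top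
  have key : ∀ x ∈ Icc a (a+d),
      d*(f x)^2 - 2*f x*F + Q ≤ bb^2*(d*x^2 - 2*x*Fi + Qi) := by
    intro x hx
    have h1 := innerId hd hfc x
    have h2 := innerId hd hic x
    rw [← hF, ← hQ] at h1
    rw [← hFi, ← hQi] at h2
    rw [← h1]
    have h2' : bb^2*(d*x^2 - 2*x*Fi + Qi) = ∫ y in Icc a (a+d), bb^2*(x - y)^2 := by
      rw [integral_const_mul, h2]
    rw [h2']
    have hint1 : IntegrableOn (fun y => (f x - f y)^2) (Icc a (a+d)) :=
      ((continuousOn_const.sub hfc).pow 2).integrableOn_compact isCompact_Icc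
    have hint2 : IntegrableOn (fun y => bb^2*(x - y)^2) (Icc a (a+d)) :=
      (continuousOn_const.mul ((continuousOn_const.sub continuousOn_id).pow 2)).integrableOn_compact
        isCompact_Icc
    refine setIntegral_mono_on hint1 hint2 measurableSet_Icc ?_
    intro y hy
    calc (f x - f y)^2 = |f x - f y|^2 := (sq_abs _).symm
    _ ≤ (bb*|x - y|)^2 := pow_le_pow_left₀ (abs_nonneg _) (hL x hx y hy) 2
    _ = bb^2*(x - y)^2 := by rw [mul_pow, sq_abs]
  have hLint : IntegrableOn (fun x => d*(f x)^2 - 2*f x*F + Q) (Icc a (a+d)) :=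
    (((continuousOn_const.mul (hfc.pow 2)).sub
      ((continuousOn_const.mul hfc).mul continuousOn_const)).add continuousOn_const).integrableOn_compact
      isCompact_Icc
  have hRint : IntegrableOn (fun x => bb^2*(d*x^2 - 2*x*Fi + Qi)) (Icc a (a+d)) :=
    (continuousOn_const.mul (((continuousOn_const.mul ((continuousOn_id : ContinuousOn (fun y : ℝ => y) _).pow 2)).sub
      ((continuousOn_const.mul continuousOn_id).mul continuousOn_const)).add continuousOn_const)).integrableOn_compact
      isCompact_Icc
  have hmono := setIntegral_mono_on hLint hRint measurableSet_Icc key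
  have hLval : ∫ x in Icc a (a+d), (d*(f x)^2 - 2*f x*F + Q) = 2*d*Q - 2*F^2 := by
    have e1 : IntegrableOn (fun x => d*(f x)^2) (Icc a (a+d)) :=
      (continuousOn_const.mul (hfc.pow 2)).integrableOn_compact isCompact_Icc
    have e2 : IntegrableOn (fun x => (-(2*F))*f x + Q) (Icc a (a+d)) :=
      ((continuousOn_const.mul hfc).add continuousOn_const).integrableOn_compact isCompact_Icc
    have e3 : IntegrableOn (fun x => (-(2*F))*f x) (Icc a (a+d)) :=
      (continuousOn_const.mul hfc).integrableOn_compact isCompact_Icc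
    have e4 : IntegrableOn (fun _ : ℝ => Q) (Icc a (a+d)) := integrableOn_const hfin.ne
    have expand : ∀ x : ℝ, d*(f x)^2 - 2*f x*F + Q = d*(f x)^2 + ((-(2*F))*f x + Q) := by
      intro x; ring
    simp_rw [expand]
    rw [integral_add e1 e2, integral_add e3 e4, integral_const_mul, integral_const_mul,
      setIntegral_const, measureReal_def, hvol, ENNReal.toReal_ofReal hd.le, smul_eq_mul, ← hF, ← hQ]
    ring
  have hRval : ∫ x in Icc a (a+d), bb^2*(d*x^2 - 2*x*Fi + Qi) = bb^2*(2*d*Qi - 2*Fi^2) := by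
    have e1 : IntegrableOn (fun x : ℝ => d*x^2) (Icc a (a+d)) :=
      (continuousOn_const.mul ((continuousOn_id : ContinuousOn (fun y : ℝ => y) _).pow 2)).integrableOn_compact isCompact_Icc
    have e2 : IntegrableOn (fun x : ℝ => (-(2*Fi))*x + Qi) (Icc a (a+d)) :=
      ((continuousOn_const.mul continuousOn_id).add continuousOn_const).integrableOn_compact isCompact_Icc
    have e3 : IntegrableOn (fun x : ℝ => (-(2*Fi))*x) (Icc a (a+d)) :=
      (continuousOn_const.mul continuousOn_id).integrableOn_compact isCompact_Icc
    have e4 : IntegrableOn (fun _ : ℝ => Qi) (Icc a (a+d)) := integrableOn_const hfin.ne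
    have expand : ∀ x : ℝ, d*x^2 - 2*x*Fi + Qi = d*x^2 + ((-(2*Fi))*x + Qi) := by
      intro x; ring
    simp_rw [expand]
    rw [integral_const_mul, integral_add e1 e2, integral_add e3 e4, integral_const_mul,
      integral_const_mul, setIntegral_const, measureReal_def, hvol, ENNReal.toReal_ofReal hd.le, smul_eq_mul,
      ← hFi, ← hQi]
    ring
  have hFival : Fi = ((a+d)^2 - a^2)/2 := by
    rw [hFi, integral_Icc_eq_integral_Ioc,
      ← intervalIntegral.integral_of_le (by linarith : a ≤ a + d)]
    exact myintegral_id
  have hQival : Qi = ((a+d)^3 - a^3)/3 := by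
    rw [hQi, integral_Icc_eq_integral_Ioc,
      ← intervalIntegral.integral_of_le (by linarith : a ≤ a + d)]
    exact myintegral_sq
  have hfinal : bb^2*(2*d*Qi - 2*Fi^2) = bb^2*d^4/6 := by
    rw [hFival, hQival]; ring
  rw [hLval, hRval, hfinal] at hmono
  linarith

lemma tele_abs {n : ℕ} (c Δ b : Fin n → ℝ) (g : (Fin n → ℝ) → ℝ)
    (hLip : ∀ j : Fin n, ∀ x ∈ Set.univ.pi fun j => Icc (c j) (c j + Δ j),
      ∀ x' ∈ Set.univ.pi fun j => Icc (c j) (c j + Δ j),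
      (∀ i, i ≠ j → x i = x' i) → |g x - g x'| ≤ b j * |x j - x' j|) :
    ∀ x ∈ Set.univ.pi fun j => Icc (c j) (c j + Δ j),
    ∀ x' ∈ Set.univ.pi fun j => Icc (c j) (c j + Δ j),
      |g x - g x'| ≤ ∑ j, b j * |x j - x' j| := by
  intro x hx x' hx'
  set S := Set.univ.pi fun j => Icc (c j) (c j + Δ j) with hS
  set z : Finset (Fin n) → (Fin n → ℝ) := fun t i => if i ∈ t then x i else x' i with hz
  have hzS : ∀ t, z t ∈ S := by
    intro t
    intro i _
    by_cases h : i ∈ t <;> simp only [hz, h, if_true, if_false] <;>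
      [exact hx i (mem_univ i); exact hx' i (mem_univ i)]
  have main : ∀ t : Finset (Fin n), |g (z t) - g x'| ≤ ∑ j ∈ t, b j * |x j - x' j| := by
    intro t
    induction t using Finset.induction_on with
    | empty =>
        have : z ∅ = x' := by funext i; simp [hz]
        simp [this]
    | insert _ _ hj ih =>
        rename_i j t
        have h1 : |g (z (insert j t)) - g (z t)| ≤ b j * |x j - x' j| := by
          have := hLip j (z (insert j t)) (hzS _) (z t) (hzS _) ?_
          · have hzj : (z (insert j t)) j = x j := by simp [hz]
            have hzj' : (z t) j = x' j := by simp [hz, hj]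
            rwa [hzj, hzj'] at this
          · intro i hij
            simp only [hz]
            by_cases h : i ∈ t
            · simp [h, Finset.mem_insert, h]
            · simp [h, Finset.mem_insert, hij, h]
        calc |g (z (insert j t)) - g x'|
            ≤ |g (z (insert j t)) - g (z t)| + |g (z t) - g x'| := abs_sub_le _ _ _
          _ ≤ b j * |x j - x' j| + ∑ i ∈ t, b i * |x i - x' i| := add_le_add h1 ih
          _ = ∑ i ∈ insert j t, b i * |x i - x' i| := by rw [Finset.sum_insert hj]
  have hzu : z Finset.univ = x := by funext i; simp [hz]
  simpa [hzu] using main Finset.univ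

lemma contOn_box {n : ℕ} (c Δ b : Fin n → ℝ) (g : (Fin n → ℝ) → ℝ)
    (hLip : ∀ j : Fin n, ∀ x ∈ Set.univ.pi fun j => Icc (c j) (c j + Δ j),
      ∀ x' ∈ Set.univ.pi fun j => Icc (c j) (c j + Δ j),
      (∀ i, i ≠ j → x i = x' i) → |g x - g x'| ≤ b j * |x j - x' j|) :
    ContinuousOn g (Set.univ.pi fun j => Icc (c j) (c j + Δ j)) := by
  refine contOn_of_bound (K := ∑ j, max (b j) 0) ?_
  intro x hx y hy
  refine (tele_abs c Δ b g hLip x hx y hy).trans ?_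
  rw [Finset.sum_mul]
  refine Finset.sum_le_sum fun j _ => ?_
  calc b j * |x j - y j| ≤ max (b j) 0 * |x j - y j| :=
        mul_le_mul_of_nonneg_right (le_max_left _ _) (abs_nonneg _)
    _ ≤ max (b j) 0 * dist x y := by
        refine mul_le_mul_of_nonneg_left ?_ (le_max_right _ _)
        rw [← Real.dist_eq]
        exact dist_le_pi_dist x y j

lemma vol_box_toReal {n : ℕ} (c Δ : Fin n → ℝ) (hΔ : ∀ j, 0 ≤ Δ j) :
    (volume (Set.univ.pi fun j => Icc (c j) (c j + Δ j))).toReal = ∏ j, Δ j := by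
  rw [volume_pi_pi, ENNReal.toReal_prod]
  refine Finset.prod_congr rfl fun j _ => ?_
  rw [Real.volume_Icc, show c j + Δ j - c j = Δ j by ring, ENNReal.toReal_ofReal (hΔ j)]

lemma cons_mem_box {n : ℕ} (c Δ : Fin (n+1) → ℝ) (x : ℝ) (y : Fin n → ℝ) :
    Fin.cons x y ∈ (Set.univ.pi fun j => Icc (c j) (c j + Δ j)) ↔
      x ∈ Icc (c 0) (c 0 + Δ 0) ∧
        y ∈ (Set.univ.pi fun j : Fin n => Icc (c j.succ) (c j.succ + Δ j.succ)) := by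
  simp only [Set.mem_univ_pi]
  rw [Fin.forall_fin_succ]
  simp [Fin.cons_succ]

lemma cont_cons_left {n : ℕ} (y : Fin n → ℝ) :
    Continuous (fun x : ℝ => (Fin.cons x y : Fin (n+1) → ℝ)) := by
  apply continuous_pi
  intro i
  refine Fin.cases ?_ ?_ i
  · simpa using continuous_id'
  · intro j; simpa using continuous_const

lemma slice_avg_lip {n : ℕ} (c Δ β : Fin (n+1) → ℝ) (hΔ0 : 0 ≤ Δ 0)
    (u : (Fin (n+1) → ℝ) → ℝ)
    (hcont : ContinuousOn u (Set.univ.pi fun j => Icc (c j) (c j + Δ j)))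
    (hu : ∀ j : Fin (n+1), ∀ x ∈ Set.univ.pi fun j => Icc (c j) (c j + Δ j),
      ∀ x' ∈ Set.univ.pi fun j => Icc (c j) (c j + Δ j),
      (∀ i, i ≠ j → x i = x' i) → |u x - u x'| ≤ β j * |x j - x' j|) :
    ∀ j : Fin n,
    ∀ y ∈ (Set.univ.pi fun j : Fin n => Icc (c j.succ) (c j.succ + Δ j.succ)),
    ∀ y' ∈ (Set.univ.pi fun j : Fin n => Icc (c j.succ) (c j.succ + Δ j.succ)),
      (∀ i, i ≠ j → y i = y' i) →
      |(∫ x in Icc (c 0) (c 0 + Δ 0), u (Fin.cons x y))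
        - (∫ x in Icc (c 0) (c 0 + Δ 0), u (Fin.cons x y'))|
        ≤ (Δ 0 * β j.succ) * |y j - y' j| := by
  intro j y hy y' hy' hdiff
  have hconsmem : ∀ x ∈ Icc (c 0) (c 0 + Δ 0), ∀ w ∈ (Set.univ.pi fun j : Fin n =>
      Icc (c j.succ) (c j.succ + Δ j.succ)),
      Fin.cons x w ∈ (Set.univ.pi fun j => Icc (c j) (c j + Δ j)) :=
    fun x hx w hw => (cons_mem_box c Δ x w).2 ⟨hx, hw⟩
  have hint : ∀ w ∈ (Set.univ.pi fun j : Fin n => Icc (c j.succ) (c j.succ + Δ j.succ)),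
      IntegrableOn (fun x => u (Fin.cons x w)) (Icc (c 0) (c 0 + Δ 0)) := by
    intro w hw
    refine (hcont.comp (cont_cons_left w).continuousOn ?_).integrableOn_compact isCompact_Icc
    exact fun x hx => hconsmem x hx w hw
  rw [← integral_sub (hint y hy) (hint y' hy')]
  have hvolI : volume (Icc (c 0) (c 0 + Δ 0)) < ⊤ := isCompact_Icc.measure_lt_top
  have hbound : ∀ x ∈ Icc (c 0) (c 0 + Δ 0),
      ‖u (Fin.cons x y) - u (Fin.cons x y')‖ ≤ β j.succ * |y j - y' j| := by
    intro x hx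
    have := hu j.succ (Fin.cons x y) (hconsmem x hx y hy) (Fin.cons x y')
      (hconsmem x hx y' hy') ?_
    · simpa [Fin.cons_succ] using this
    · intro i hij
      induction i using Fin.cases with
      | zero => simp
      | succ k =>
          simp only [Fin.cons_succ]
          exact hdiff k (fun hkj => hij (by rw [hkj]))
  have key := norm_setIntegral_le_of_norm_le_const hvolI hbound
  rw [Real.norm_eq_abs] at key
  refine key.trans ?_
  rw [measureReal_def, Real.volume_Icc, show c 0 + Δ 0 - c 0 = Δ 0 by ring, ENNReal.toReal_ofReal hΔ0]
  ring_nf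
  exact le_refl _

lemma integral_cons_box {n : ℕ} (c Δ : Fin (n+1) → ℝ) (F : (Fin (n+1) → ℝ) → ℝ)
    (hF : ContinuousOn F (Set.univ.pi fun j => Icc (c j) (c j + Δ j))) :
    ∫ z in Set.univ.pi fun j => Icc (c j) (c j + Δ j), F z
      = ∫ y in (Set.univ.pi fun j : Fin n =>
            Icc (c j.succ) (c j.succ + Δ j.succ)),
          ∫ x in Icc (c 0) (c 0 + Δ 0), F (Fin.cons x y) := by
  set S : Set (Fin (n+1) → ℝ) := Set.univ.pi fun j => Icc (c j) (c j + Δ j) with hSdef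
  set S' : Set (Fin n → ℝ) := Set.univ.pi fun j : Fin n =>
    Icc (c j.succ) (c j.succ + Δ j.succ) with hS'def
  set I : Set ℝ := Icc (c 0) (c 0 + Δ 0) with hIdef
  have hSm : MeasurableSet S := (MeasurableSet.univ_pi fun j => measurableSet_Icc)
  have hS'm : MeasurableSet S' := (MeasurableSet.univ_pi fun j => measurableSet_Icc)
  have hmem : ∀ (x : ℝ) (y : Fin n → ℝ), Fin.cons x y ∈ S ↔ x ∈ I ∧ y ∈ S' := by
    intro x y
    simp only [hSdef, hS'def, hIdef, Set.mem_univ_pi]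
    rw [Fin.forall_fin_succ]
    simp [Fin.cons_succ]
  have step2 : ∫ z, S.indicator F z
      = ∫ p : ℝ × (Fin n → ℝ), S.indicator F (Fin.cons p.1 p.2) := by
    rw [← ((volume_preserving_piFinSuccAbove (fun _ : Fin (n+1) => ℝ) 0).symm).integral_comp'
      (S.indicator F)]
    congr 1
    funext p
    congr 1
    simp [MeasurableEquiv.piFinSuccAbove_symm_apply, Fin.insertNthEquiv, Fin.insertNth_zero']
  have hind : ∀ p : ℝ × (Fin n → ℝ),
      S.indicator F (Fin.cons p.1 p.2)
        = (I ×ˢ S').indicator (fun q : ℝ × (Fin n → ℝ) => F (Fin.cons q.1 q.2)) p := by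
    intro p
    by_cases h : p.1 ∈ I ∧ p.2 ∈ S'
    · rw [Set.indicator_of_mem ((hmem p.1 p.2).2 h), Set.indicator_of_mem (Set.mem_prod.2 h)]
    · rw [Set.indicator_of_notMem (fun hc => h ((hmem p.1 p.2).1 hc)),
        Set.indicator_of_notMem (fun hc => h (Set.mem_prod.1 hc))]
  have hcont : ContinuousOn (fun q : ℝ × (Fin n → ℝ) => F (Fin.cons q.1 q.2)) (I ×ˢ S') := by
    have hc : Continuous (fun q : ℝ × (Fin n → ℝ) => (Fin.cons q.1 q.2 : Fin (n+1) → ℝ)) := by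
      apply continuous_pi
      intro i
      refine Fin.cases ?_ ?_ i
      · simpa using continuous_fst
      · intro j; simpa [Function.comp_def] using (continuous_apply j).comp continuous_snd
    refine hF.comp hc.continuousOn ?_
    intro q hq
    exact (hmem q.1 q.2).2 ⟨hq.1, hq.2⟩
  have hcompact : IsCompact (I ×ˢ S') :=
    (isCompact_Icc).prod (isCompact_univ_pi fun j => isCompact_Icc)
  have hintg : Integrable (fun q : ℝ × (Fin n → ℝ) => F (Fin.cons q.1 q.2))
      ((volume.restrict I).prod (volume.restrict S')) := by
    rw [Measure.prod_restrict]
    exact hcont.integrableOn_compact hcompact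
  calc ∫ z in S, F z = ∫ z, S.indicator F z := (integral_indicator hSm).symm
    _ = ∫ p : ℝ × (Fin n → ℝ), S.indicator F (Fin.cons p.1 p.2) := step2
    _ = ∫ p : ℝ × (Fin n → ℝ),
          (I ×ˢ S').indicator (fun q : ℝ × (Fin n → ℝ) => F (Fin.cons q.1 q.2)) p := by
        simp_rw [hind]
    _ = ∫ p in I ×ˢ S', F (Fin.cons p.1 p.2) :=
        integral_indicator (measurableSet_Icc.prod hS'm)
    _ = ∫ p, F (Fin.cons p.1 p.2) ∂((volume.restrict I).prod (volume.restrict S')) := by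
        rw [Measure.volume_eq_prod, Measure.prod_restrict]
    _ = ∫ y in S', ∫ x in I, F (Fin.cons x y) := integral_prod_symm _ hintg

end Helpers

lemma box_var_bound : ∀ (n : ℕ) (c Δ b : Fin n → ℝ), (∀ j, 0 < Δ j) →
    ∀ g : (Fin n → ℝ) → ℝ,
    (∀ j : Fin n, ∀ x ∈ Set.univ.pi fun j => Icc (c j) (c j + Δ j),
      ∀ x' ∈ Set.univ.pi fun j => Icc (c j) (c j + Δ j),
      (∀ i, i ≠ j → x i = x' i) → |g x - g x'| ≤ b j * |x j - x' j|) →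
    (∏ j, Δ j) * (∫ x in Set.univ.pi fun j => Icc (c j) (c j + Δ j), (g x)^2)
        - (∫ x in Set.univ.pi fun j => Icc (c j) (c j + Δ j), g x)^2
      ≤ (∏ j, Δ j)^2 * ∑ j, b j^2 * Δ j^2 / 12 := by
  intro n
  induction n with
  | zero =>
      intro c Δ b hΔ g hLip
      have hset : (Set.univ.pi fun j : Fin 0 => Icc (c j) (c j + Δ j)) = Set.univ := by
        ext z; simp
      rw [hset, Measure.restrict_univ]
      rw [integral_unique (f := fun x => (g x)^2), integral_unique (f := g)]
      simp [volume_pi, Measure.pi_empty_univ, measureReal_def]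
  | succ n IH =>
      intro c Δ b hΔ g hLip
      have hΔ0 : 0 < Δ 0 := hΔ 0
      have hgc : ContinuousOn g (Set.univ.pi fun j => Icc (c j) (c j + Δ j)) :=
        contOn_box c Δ b g hLip
      obtain ⟨M, hM⟩ := (isCompact_univ_pi fun j : Fin (n+1) =>
        isCompact_Icc).exists_bound_of_continuousOn hgc
      have hcmem : (fun j => c j) ∈ (Set.univ.pi fun j : Fin (n+1) =>
          Icc (c j) (c j + Δ j)) := by
        intro j _; exact ⟨le_refl _, by linarith [(hΔ j).le]⟩
      have hM0 : 0 ≤ M := le_trans (norm_nonneg _) (hM _ hcmem)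
      have hg2Lip : ∀ j : Fin (n+1), ∀ x ∈ Set.univ.pi fun j => Icc (c j) (c j + Δ j),
          ∀ x' ∈ Set.univ.pi fun j => Icc (c j) (c j + Δ j),
          (∀ i, i ≠ j → x i = x' i) → |(g x)^2 - (g x')^2| ≤ (2*M*b j) * |x j - x' j| := by
        intro j x hx x' hx' hd
        have h1 := hLip j x hx x' hx' hd
        have e : (g x)^2 - (g x')^2 = (g x + g x')*(g x - g x') := by ring
        rw [e, abs_mul]
        have h2 : |g x + g x'| ≤ 2*M := by
          have hmx := hM x hx; have hmx' := hM x' hx'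
          simp only [Real.norm_eq_abs] at hmx hmx'
          calc |g x + g x'| ≤ |g x| + |g x'| := abs_add_le _ _
            _ ≤ 2*M := by linarith
        calc |g x + g x'| * |g x - g x'| ≤ (2*M) * (b j * |x j - x' j|) :=
              mul_le_mul h2 h1 (abs_nonneg _) (by linarith)
          _ = (2*M*b j) * |x j - x' j| := by ring
      set S' : Set (Fin n → ℝ) := Set.univ.pi fun j : Fin n =>
        Icc (c j.succ) (c j.succ + Δ j.succ) with hS'def
      set G : (Fin n → ℝ) → ℝ :=
        fun y => ∫ x in Icc (c 0) (c 0 + Δ 0), g (Fin.cons x y) with hGdef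
      set K : (Fin n → ℝ) → ℝ :=
        fun y => ∫ x in Icc (c 0) (c 0 + Δ 0), (g (Fin.cons x y))^2 with hKdef
      have hGlip : ∀ j : Fin n, ∀ y ∈ S', ∀ y' ∈ S',
          (∀ i, i ≠ j → y i = y' i) → |G y - G y'| ≤ (Δ 0 * b j.succ) * |y j - y' j| :=
        slice_avg_lip c Δ b hΔ0.le g hgc hLip
      have hKlip : ∀ j : Fin n, ∀ y ∈ S', ∀ y' ∈ S',
          (∀ i, i ≠ j → y i = y' i) →
            |K y - K y'| ≤ (Δ 0 * (2*M*b j.succ)) * |y j - y' j| :=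
        slice_avg_lip c Δ (fun j => 2*M*b j) hΔ0.le (fun z => (g z)^2) (hgc.pow 2) hg2Lip
      have hGc : ContinuousOn G S' :=
        contOn_box (fun j => c j.succ) (fun j => Δ j.succ) (fun j => Δ 0 * b j.succ) G hGlip
      have hKc : ContinuousOn K S' :=
        contOn_box (fun j => c j.succ) (fun j => Δ j.succ)
          (fun j => Δ 0 * (2*M*b j.succ)) K hKlip
      have hS'cpt : IsCompact S' := isCompact_univ_pi fun j => isCompact_Icc
      have hS'm : MeasurableSet S' := MeasurableSet.univ_pi fun j => measurableSet_Icc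
      have A1 : (∫ z in Set.univ.pi fun j => Icc (c j) (c j + Δ j), g z)
          = ∫ y in S', G y := integral_cons_box c Δ g hgc
      have A2 : (∫ z in Set.univ.pi fun j => Icc (c j) (c j + Δ j), (g z)^2)
          = ∫ y in S', K y := integral_cons_box c Δ (fun z => (g z)^2) (hgc.pow 2)
      have hW : ∀ y ∈ S', Δ 0 * K y - (G y)^2 ≤ (b 0)^2*(Δ 0)^4/12 := by
        intro y hy
        refine oneDim_var_bound (b 0) hΔ0 (fun x => g (Fin.cons x y)) ?_
        intro x hx x' hx'
        have hm1 := (cons_mem_box c Δ x y).2 ⟨hx, hy⟩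
        have hm2 := (cons_mem_box c Δ x' y).2 ⟨hx', hy⟩
        have h := hLip 0 _ hm1 _ hm2 ?_
        · simpa using h
        · intro i hi
          induction i using Fin.cases with
          | zero => exact absurd rfl hi
          | succ k => simp
      have hKint : IntegrableOn K S' := hKc.integrableOn_compact hS'cpt
      have hGint : IntegrableOn G S' := hGc.integrableOn_compact hS'cpt
      have hG2int : IntegrableOn (fun y => (G y)^2) S' :=
        (hGc.pow 2).integrableOn_compact hS'cpt
      have hWint : IntegrableOn (fun y => Δ 0 * K y - (G y)^2) S' :=
        ((continuousOn_const.mul hKc).sub (hGc.pow 2)).integrableOn_compact hS'cpt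
      have hCint : IntegrableOn (fun _ : Fin n → ℝ => (b 0)^2*(Δ 0)^4/12) S' :=
        integrableOn_const hS'cpt.measure_lt_top.ne
      have hmono := setIntegral_mono_on hWint hCint hS'm hW
      have hvolS' : (volume S').toReal = ∏ j : Fin n, Δ j.succ :=
        vol_box_toReal (fun j => c j.succ) (fun j => Δ j.succ) (fun j => (hΔ j.succ).le)
      rw [setIntegral_const, smul_eq_mul, measureReal_def, hvolS'] at hmono
      have hsplit : ∫ y in S', (Δ 0 * K y - (G y)^2)
          = Δ 0 * (∫ y in S', K y) - ∫ y in S', (G y)^2 := by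
        rw [integral_sub (hKint.const_mul _) hG2int, integral_const_mul]
      rw [hsplit] at hmono
      have hhLip : ∀ j : Fin n, ∀ y ∈ S', ∀ y' ∈ S', (∀ i, i ≠ j → y i = y' i) →
          |(Δ 0)⁻¹ * G y - (Δ 0)⁻¹ * G y'| ≤ b j.succ * |y j - y' j| := by
        intro j y hy y' hy' hd
        have h1 := hGlip j y hy y' hy' hd
        have e : (Δ 0)⁻¹ * G y - (Δ 0)⁻¹ * G y' = (Δ 0)⁻¹ * (G y - G y') := by ring
        rw [e, abs_mul, abs_of_nonneg (inv_nonneg.2 hΔ0.le)]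
        calc (Δ 0)⁻¹ * |G y - G y'| ≤ (Δ 0)⁻¹ * ((Δ 0 * b j.succ) * |y j - y' j|) :=
              mul_le_mul_of_nonneg_left h1 (inv_nonneg.2 hΔ0.le)
          _ = b j.succ * |y j - y' j| := by
              field_simp
      have hIH' : (∏ j : Fin n, Δ j.succ) * (∫ y in S', ((Δ 0)⁻¹ * G y)^2)
          - (∫ y in S', (Δ 0)⁻¹ * G y)^2
          ≤ (∏ j : Fin n, Δ j.succ)^2 * ∑ j : Fin n, (b j.succ)^2*(Δ j.succ)^2/12 :=
        IH (fun j => c j.succ) (fun j => Δ j.succ) (fun j => b j.succ)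
          (fun j => hΔ j.succ) (fun y => (Δ 0)⁻¹ * G y) hhLip
      have e1 : ∫ y in S', (Δ 0)⁻¹ * G y = (Δ 0)⁻¹ * ∫ y in S', G y :=
        integral_const_mul _ _
      have e2 : ∫ y in S', ((Δ 0)⁻¹ * G y)^2 = ((Δ 0)⁻¹)^2 * ∫ y in S', (G y)^2 := by
        simp_rw [mul_pow]
        exact integral_const_mul _ _
      rw [e1, e2] at hIH'
      rw [A1, A2, Fin.prod_univ_succ, Fin.sum_univ_succ]
      set P' := ∏ j : Fin n, Δ j.succ with hP'def
      have hP'pos : 0 < P' := Finset.prod_pos fun j _ => hΔ j.succ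
      set Sig := ∑ j : Fin n, (b j.succ)^2*(Δ j.succ)^2/12 with hSigdef
      set IK := ∫ y in S', K y with hIK
      set IG := ∫ y in S', G y with hIG
      set IG2 := ∫ y in S', (G y)^2 with hIG2
      have T2' : P' * IG2 - IG^2 ≤ (Δ 0)^2 * (P'^2 * Sig) := by
        have hc : P' * IG2 - IG^2
            = (Δ 0)^2 * (P' * (((Δ 0)⁻¹)^2 * IG2) - ((Δ 0)⁻¹ * IG)^2) := by
          field_simp
        rw [hc]
        exact mul_le_mul_of_nonneg_left hIH' (sq_nonneg _)
      have T1' : P' * (Δ 0 * IK - IG2) ≤ P' * (P' * ((b 0)^2*(Δ 0)^4/12)) :=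
        mul_le_mul_of_nonneg_left hmono hP'pos.le
      have hrew : (Δ 0 * P')^2 * ((b 0)^2*(Δ 0)^2/12 + Sig)
          = P' * (P' * ((b 0)^2*(Δ 0)^4/12)) + (Δ 0)^2 * (P'^2 * Sig) := by ring
      linarith [T1', T2']

/-- Upper bound of Lemma 10: if `g` is continuous on a rectangular cell `S` and is
coordinatewise Lipschitz with constants `b_j`, and `X` is uniformly distributed on `S`,
then `Var(g(X)) ≤ ∑ b_j² Δ_j² / 12`. -/
theorem variance_uniform_cell_upper (n : ℕ) (c Δ : Fin n → ℝ) (hΔ : ∀ j, 0 < Δ j)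
    (S : Set (Fin n → ℝ)) (hS : S = Set.univ.pi fun j => Set.Icc (c j) (c j + Δ j))
    (b : Fin n → ℝ)
    (g : (Fin n → ℝ) → ℝ) (hg : ContinuousOn g S)
    (hLip : ∀ j : Fin n, ∀ x ∈ S, ∀ x' ∈ S,
      (∀ i, i ≠ j → x i = x' i) → |g x - g x'| ≤ b j * |x j - x' j|)
    (μ : Measure (Fin n → ℝ)) (hμ : μ = (volume S)⁻¹ • volume.restrict S) :
    variance g μ ≤ ∑ j, b j ^ 2 * Δ j ^ 2 / 12 := by
  subst hS
  subst hμ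
  set S : Set (Fin n → ℝ) := Set.univ.pi fun j => Set.Icc (c j) (c j + Δ j) with hSdef
  have hSm : MeasurableSet S := MeasurableSet.univ_pi fun j => measurableSet_Icc
  have hScpt : IsCompact S := isCompact_univ_pi fun j => isCompact_Icc
  have htoReal : (volume S).toReal = ∏ j, Δ j := vol_box_toReal c Δ (fun j => (hΔ j).le)
  have hP : 0 < ∏ j, Δ j := Finset.prod_pos fun j _ => hΔ j
  have hvol_ne_top : volume S ≠ ⊤ := hScpt.measure_lt_top.ne
  have hvol_ne0 : volume S ≠ 0 := by
    intro h
    rw [h] at htoReal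
    simp at htoReal
    linarith
  haveI : IsProbabilityMeasure ((volume S)⁻¹ • volume.restrict S) := by
    constructor
    rw [Measure.smul_apply, Measure.restrict_apply_univ, smul_eq_mul]
    exact ENNReal.inv_mul_cancel hvol_ne0 hvol_ne_top
  have hsm0 : AEStronglyMeasurable g (volume.restrict S) := hg.aestronglyMeasurable hSm
  have hsm : AEStronglyMeasurable g ((volume S)⁻¹ • volume.restrict S) :=
    hsm0.mono_ac Measure.smul_absolutelyContinuous
  obtain ⟨M, hM⟩ := hScpt.exists_bound_of_continuousOn hg
  have hbd : ∀ᵐ x ∂((volume S)⁻¹ • volume.restrict S), ‖g x‖ ≤ M := by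
    exact Measure.ae_smul_measure ((ae_restrict_iff' hSm).2 (Filter.Eventually.of_forall hM)) _
  have hmem2 : MemLp g 2 ((volume S)⁻¹ • volume.restrict S) := MemLp.of_bound hsm M hbd
  rw [variance_eq_sub hmem2]
  have hgsq : ∫ x, (g ^ 2) x ∂((volume S)⁻¹ • volume.restrict S)
      = ∫ x, (g x)^2 ∂((volume S)⁻¹ • volume.restrict S) := by
    congr 1
  rw [hgsq, integral_smul_measure, integral_smul_measure, ENNReal.toReal_inv, htoReal,
    smul_eq_mul, smul_eq_mul]
  have hmain := box_var_bound n c Δ b hΔ g hLip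
  rw [← hSdef] at hmain
  set P := ∏ j, Δ j with hPdef
  set Q := ∫ x in S, (g x)^2 with hQdef
  set F := ∫ x in S, g x with hFdef
  set Sig := ∑ j, b j ^ 2 * Δ j ^ 2 / 12 with hSigdef
  have hPne : P ≠ 0 := ne_of_gt hP
  calc P⁻¹ * Q - (P⁻¹ * F)^2 = (P⁻¹)^2 * (P * Q - F^2) := by field_simp
    _ ≤ (P⁻¹)^2 * (P^2 * Sig) := mul_le_mul_of_nonneg_left hmain (by positivity)
    _ = Sig := by field_simp
end

section
/- Let S = ∏_{j=1}^n [c_j, c_j + Δ_j] ⊂ ℝⁿ be a rectangular cell with edge lengths Δ_j > 0, and let g : S → ℝ be continuously differentiable on S with |∂g/∂x_j (x)| ≥ a_j for every x ∈ S and every j ∈ {1,…,n}, where a_j ≥ 0. If X is uniformly distributed on S, then Var(g(X)) ≥ ∑_{j=1}^n a_j²·Δ_j²/12. -/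
open MeasureTheory ProbabilityTheory Set
open scoped BigOperators ENNReal

-- aux 1: restrict of volume on a box is pi of restricted
lemma aux_restrict_pi (n : ℕ) (I : Fin n → Set ℝ) (hI : ∀ i, MeasurableSet (I i)) :
    (volume : Measure (Fin n → ℝ)).restrict (Set.univ.pi I)
      = Measure.pi (fun i => (volume : Measure ℝ).restrict (I i)) := by
  refine (Measure.pi_eq fun s hs => ?_).symm
  rw [Measure.restrict_apply (MeasurableSet.univ_pi hs), ← Set.pi_inter_distrib,
    volume_pi, Measure.pi_pi]
  exact Finset.prod_congr rfl fun i _ => (Measure.restrict_apply (hs i)).symm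

-- 1D normalized measure
lemma aux_nu_prob (cj Δj : ℝ) (hΔ : 0 < Δj) :
    IsProbabilityMeasure ((ENNReal.ofReal Δj)⁻¹ • (volume : Measure ℝ).restrict (Set.Icc cj (cj + Δj))) := by
  constructor
  rw [Measure.smul_apply, Measure.restrict_apply MeasurableSet.univ, Set.univ_inter,
    Real.volume_Icc, smul_eq_mul]
  simp only [add_sub_cancel_left]
  rw [ENNReal.inv_mul_cancel (by simpa using hΔ) ENNReal.ofReal_ne_top]

lemma aux_mu_eq_pi (n : ℕ) (c Δ : Fin n → ℝ) (hΔ : ∀ j, 0 < Δ j) :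
    ((volume (Set.univ.pi fun j => Set.Icc (c j) (c j + Δ j)))⁻¹ •
      (volume : Measure (Fin n → ℝ)).restrict (Set.univ.pi fun j => Set.Icc (c j) (c j + Δ j)))
    = Measure.pi (fun j => (ENNReal.ofReal (Δ j))⁻¹ • (volume : Measure ℝ).restrict (Set.Icc (c j) (c j + Δ j))) := by
  haveI : ∀ j, IsProbabilityMeasure ((ENNReal.ofReal (Δ j))⁻¹ • (volume : Measure ℝ).restrict (Set.Icc (c j) (c j + Δ j))) :=
    fun j => aux_nu_prob _ _ (hΔ j)
  refine (Measure.pi_eq fun s hs => ?_).symm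
  rw [Measure.smul_apply, Measure.restrict_apply (MeasurableSet.univ_pi hs),
    ← Set.pi_inter_distrib, volume_pi, Measure.pi_pi, Measure.pi_pi]
  simp only [Real.volume_Icc, add_sub_cancel_left, Measure.smul_apply, smul_eq_mul,
    Measure.restrict_apply (hs _)]
  rw [ENNReal.prod_inv_distrib fun i _ j _ _ => Or.inl (by simpa using (hΔ i)),
    ← Finset.prod_mul_distrib]

-- sign constancy on a preconnected set
lemma aux_sign (S : Set (Fin n → ℝ)) (hconn : IsPreconnected S) (h : (Fin n → ℝ) → ℝ)
    (hc : ContinuousOn h S) (aj : ℝ) (haj : 0 < aj) (hb : ∀ x ∈ S, aj ≤ |h x|) :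
    (∀ x ∈ S, aj ≤ h x) ∨ (∀ x ∈ S, aj ≤ -h x) := by
  by_contra hcon
  push_neg at hcon
  obtain ⟨⟨x, hx, hx2⟩, ⟨y, hy, hy2⟩⟩ := hcon
  have himg : IsPreconnected (h '' S) := hconn.image h hc
  have hxneg : h x < 0 := by
    rcases abs_cases (h x) with ⟨he, _⟩ | ⟨_, hn⟩
    · exact absurd (he ▸ hb x hx) (not_le.2 hx2)
    · linarith [hb x hx, haj]
  have hypos : 0 < h y := by
    rcases abs_cases (h y) with ⟨_, hn⟩ | ⟨he, _⟩
    · linarith [hb y hy, haj]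
    · exact absurd (he ▸ hb y hy) (by linarith)
  have h0 : (0 : ℝ) ∈ h '' S :=
    himg.Icc_subset ⟨x, hx, rfl⟩ ⟨y, hy, rfl⟩ ⟨hxneg.le, hypos.le⟩
  obtain ⟨z, hz, hz0⟩ := h0
  have := hb z hz
  rw [hz0] at this
  simp only [abs_zero] at this
  linarith

lemma aux_oneD (cj Δj aj σ : ℝ) (hΔ : 0 < Δj) (ha : 0 ≤ aj)
    (G G' : ℝ → ℝ)
    (hG : ∀ t ∈ Icc cj (cj + Δj), HasDerivWithinAt G (G' t) (Icc cj (cj + Δj)) t)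
    (hlow : ∀ t ∈ Icc cj (cj + Δj), aj ≤ σ * G' t) :
    aj * Δj ^ 3 / 12 ≤ σ * ∫ t in cj..(cj + Δj), G t * (t - (cj + Δj / 2)) := by
  set b := cj + Δj with hb
  set m := cj + Δj / 2 with hm
  have hcb : cj ≤ b := by simp [hb]; positivity
  have hmI : m ∈ Icc cj b := by constructor <;> [skip; skip] <;> simp [hm, hb] <;> linarith
  have hGc : ContinuousOn G (Icc cj b) := fun t ht => (hG t ht).continuousWithinAt
  set φ : ℝ → ℝ := fun t => σ * G t - aj * t with hφ
  have hφc : ContinuousOn φ (Icc cj b) :=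
    (continuousOn_const.mul hGc).sub (continuousOn_const.mul continuousOn_id)
  have hφmono : MonotoneOn φ (Icc cj b) := by
    apply monotoneOn_of_hasDerivWithinAt_nonneg (convex_Icc cj b) hφc
      (f' := fun t => σ * G' t - aj)
    · intro x hx
      have h := (((hG x (interior_subset hx)).const_mul σ).sub
        ((hasDerivWithinAt_id x _).const_mul aj)).mono interior_subset
      simp only [mul_one] at h
      exact h
    · intro x hx
      have := hlow x (interior_subset hx)
      linarith
  have huIcc : uIcc cj b = Icc cj b := uIcc_of_le hcb
  have hint1 : IntervalIntegrable (fun t => (φ t - φ m) * (t - m)) volume cj b := by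
    apply ContinuousOn.intervalIntegrable
    rw [huIcc]
    exact ((hφc.sub continuousOn_const).mul ((continuous_id.sub continuous_const).continuousOn))
  have hint2 : IntervalIntegrable (fun t => φ m * (t - m)) volume cj b := by
    apply ContinuousOn.intervalIntegrable
    rw [huIcc]
    exact continuousOn_const.mul ((continuous_id.sub continuous_const).continuousOn)
  have hint3 : IntervalIntegrable (fun t => aj * (t * (t - m))) volume cj b := by
    apply ContinuousOn.intervalIntegrable
    rw [huIcc]
    exact continuousOn_const.mul (continuousOn_id.mul ((continuous_id.sub continuous_const).continuousOn))
  have key1 : 0 ≤ ∫ t in cj..b, (φ t - φ m) * (t - m) := by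
    apply intervalIntegral.integral_nonneg hcb
    intro t ht
    rcases le_total t m with h | h
    · have h1 : φ t ≤ φ m := hφmono ht hmI h
      have h2 : t - m ≤ 0 := by linarith
      nlinarith [mul_nonneg (by linarith : (0:ℝ) ≤ φ m - φ t) (by linarith : (0:ℝ) ≤ m - t)]
    · have h1 : φ m ≤ φ t := hφmono hmI ht h
      have h2 : 0 ≤ t - m := by linarith
      exact mul_nonneg (by linarith) h2
  have key2 : (∫ t in cj..b, (t - m)) = 0 := by
    rw [intervalIntegral.integral_sub intervalIntegral.intervalIntegrable_id
      (intervalIntegrable_const (c := m)), integral_id,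
      intervalIntegral.integral_const]
    simp only [hb, hm, smul_eq_mul]
    ring
  have key3 : (∫ t in cj..b, t * (t - m)) = Δj ^ 3 / 12 := by
    have h2 : (fun t : ℝ => t * (t - m)) = fun t : ℝ => t ^ 2 - m * t := by funext t; ring
    have i1 : IntervalIntegrable (fun t : ℝ => t ^ 2) volume cj b :=
      (continuous_pow 2).intervalIntegrable cj b
    have i2 : IntervalIntegrable (fun t : ℝ => m * t) volume cj b :=
      (continuous_const.mul continuous_id).intervalIntegrable cj b
    rw [h2, intervalIntegral.integral_sub i1 i2, integral_pow,
      intervalIntegral.integral_const_mul, integral_id]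
    simp only [hb, hm]
    push_cast
    ring
  have hsplit : (fun t => σ * (G t * (t - m)))
      = fun t => (φ t - φ m) * (t - m) + (φ m * (t - m) + aj * (t * (t - m))) := by
    funext t; simp only [hφ]; ring
  rw [← intervalIntegral.integral_const_mul, hsplit,
    intervalIntegral.integral_add hint1 (hint2.add hint3),
    intervalIntegral.integral_add hint2 hint3,
    intervalIntegral.integral_const_mul, intervalIntegral.integral_const_mul, key2, key3]
  linarith [key1]

lemma aux_marginal {k : ℕ} (ν : Fin (k+1) → Measure ℝ) [∀ i, SigmaFinite (ν i)]
    (i : Fin (k+1)) (f : (Fin (k+1) → ℝ) → ℝ) :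
    ∫ x, f x ∂(Measure.pi ν)
      = ∫ p : ℝ × (Fin k → ℝ), f (i.insertNth p.1 p.2)
          ∂((ν i).prod (Measure.pi fun j => ν (i.succAbove j))) := by
  rw [← (measurePreserving_piFinSuccAbove ν i).integral_comp'
    (g := fun p : ℝ × (Fin k → ℝ) => f (i.insertNth p.1 p.2))]
  congr 1
  funext x
  congr 1
  exact ((Fin.insertNthEquiv (fun _ => ℝ) i).apply_symm_apply x).symm

lemma aux_single {k : ℕ} (ν : Fin (k+1) → Measure ℝ) [∀ i, IsProbabilityMeasure (ν i)]
    (i : Fin (k+1)) (u : ℝ → ℝ) :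
    ∫ x, u (x i) ∂(Measure.pi ν) = ∫ t, u t ∂(ν i) := by
  rw [aux_marginal ν i (fun x => u (x i))]
  simp only [Fin.insertNth_apply_same]
  calc ∫ p : ℝ × (Fin k → ℝ), u p.1 ∂((ν i).prod (Measure.pi fun j => ν (i.succAbove j)))
      = ∫ p : ℝ × (Fin k → ℝ), u p.1 * (1:ℝ)
          ∂((ν i).prod (Measure.pi fun j => ν (i.succAbove j))) := by simp
    _ = (∫ t, u t ∂(ν i)) * ∫ _z : Fin k → ℝ, (1:ℝ) ∂(Measure.pi fun j => ν (i.succAbove j)) :=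
          integral_prod_mul u (fun _ => (1:ℝ))
    _ = ∫ t, u t ∂(ν i) := by simp

lemma aux_cross {k : ℕ} (ν : Fin (k+1) → Measure ℝ) [∀ i, IsProbabilityMeasure (ν i)]
    (i j : Fin (k+1)) (hij : j ≠ i) (u v : ℝ → ℝ) (hu : ∫ t, u t ∂(ν i) = 0) :
    ∫ x, u (x i) * v (x j) ∂(Measure.pi ν) = 0 := by
  obtain ⟨j', hj'⟩ := Fin.exists_succAbove_eq hij
  rw [aux_marginal ν i (fun x => u (x i) * v (x j))]
  simp only [Fin.insertNth_apply_same, ← hj', Fin.insertNth_apply_succAbove]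
  rw [integral_prod_mul u (fun z : Fin k → ℝ => v (z j')), hu, zero_mul]

lemma aux_int_prod {k : ℕ} (ν : Fin (k+1) → Measure ℝ) [∀ i, IsProbabilityMeasure (ν i)]
    (j : Fin (k+1)) (F : (Fin (k+1) → ℝ) → ℝ) (hF : Integrable F (Measure.pi ν)) :
    Integrable (fun p : ℝ × (Fin k → ℝ) => F (j.insertNth p.1 p.2))
      ((ν j).prod (Measure.pi fun j' => ν (j.succAbove j'))) := by
  have h := ((measurePreserving_piFinSuccAbove ν j).symm
      (MeasurableEquiv.piFinSuccAbove (fun _ => ℝ) j)).integrable_comp_emb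
      (MeasurableEquiv.measurableEmbedding _) (g := F)
  rw [← h] at hF
  convert hF using 2 with p
  rfl

lemma aux_fubini {k : ℕ} (ν : Fin (k+1) → Measure ℝ) [∀ i, IsProbabilityMeasure (ν i)]
    (j : Fin (k+1)) (F : (Fin (k+1) → ℝ) → ℝ) (hF : Integrable F (Measure.pi ν)) :
    ∫ x, F x ∂(Measure.pi ν)
      = ∫ z, (∫ t, F (j.insertNth t z) ∂(ν j)) ∂(Measure.pi fun j' => ν (j.succAbove j')) := by
  rw [aux_marginal ν j F]
  exact integral_prod_symm _ (aux_int_prod ν j F hF)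


lemma aux_mom1 (cj Δj : ℝ) : (∫ t in cj..(cj+Δj), (t - (cj + Δj/2))) = 0 := by
  rw [intervalIntegral.integral_sub intervalIntegral.intervalIntegrable_id
    (intervalIntegrable_const (c := cj + Δj/2)), integral_id,
    intervalIntegral.integral_const]
  simp only [smul_eq_mul]
  ring

lemma aux_mom2 (cj Δj : ℝ) : (∫ t in cj..(cj+Δj), (t - (cj + Δj/2))^2) = Δj^3/12 := by
  have h2 : (fun t : ℝ => (t - (cj + Δj/2))^2)
      = fun t : ℝ => t ^ 2 - (2*(cj + Δj/2)) * t + (cj+Δj/2)^2 := by funext t; ring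
  have i1 : IntervalIntegrable (fun t : ℝ => t ^ 2) volume cj (cj+Δj) :=
    (continuous_pow 2).intervalIntegrable _ _
  have i2 : IntervalIntegrable (fun t : ℝ => (2*(cj + Δj/2)) * t) volume cj (cj+Δj) :=
    (continuous_const.mul continuous_id).intervalIntegrable _ _
  rw [h2, intervalIntegral.integral_add (i1.sub i2) intervalIntegrable_const,
    intervalIntegral.integral_sub i1 i2, integral_pow,
    intervalIntegral.integral_const_mul, integral_id, intervalIntegral.integral_const]
  simp only [smul_eq_mul]
  push_cast
  ring

/-- Lower bound of Lemma 10: if `g` is continuously differentiable on a rectangular cell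
`S` with `|∂g/∂x_j| ≥ a_j` everywhere on `S`, and `X` is uniformly distributed on `S`,
then `Var(g(X)) ≥ ∑ a_j² Δ_j² / 12`. -/
theorem variance_uniform_cell_lower (n : ℕ) (c Δ : Fin n → ℝ) (hΔ : ∀ j, 0 < Δ j)
    (S : Set (Fin n → ℝ)) (hS : S = Set.univ.pi fun j => Set.Icc (c j) (c j + Δ j))
    (g : (Fin n → ℝ) → ℝ) (g' : (Fin n → ℝ) → (Fin n → ℝ) →L[ℝ] ℝ)
    (hg : ∀ x ∈ S, HasFDerivWithinAt g (g' x) S x)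
    (hg'c : ContinuousOn g' S)
    (a : Fin n → ℝ) (ha0 : ∀ j, 0 ≤ a j)
    (ha : ∀ j : Fin n, ∀ x ∈ S, a j ≤ |g' x (Pi.single j 1)|)
    (μ : Measure (Fin n → ℝ)) (hμ : μ = (volume S)⁻¹ • volume.restrict S) :
    (∑ j, a j ^ 2 * Δ j ^ 2 / 12) ≤ variance g μ := by
  cases n with
  | zero => simpa using variance_nonneg g μ
  | succ k =>
  -- basic facts about S
  have hcb : ∀ j, c j ≤ c j + Δ j := fun j => by linarith [hΔ j]
  have hSm : MeasurableSet S := hS ▸ MeasurableSet.univ_pi fun j => measurableSet_Icc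
  have hScomp : IsCompact S := hS ▸ isCompact_univ_pi fun j => isCompact_Icc
  have hSconv : Convex ℝ S := hS ▸ convex_pi fun j _ => convex_Icc _ _
  have hSne : S.Nonempty := ⟨c, hS ▸ fun j _ => ⟨le_rfl, hcb j⟩⟩
  have hgcS : ContinuousOn g S := fun x hx => (hg x hx).continuousWithinAt
  -- the product measure
  set ν : Fin (k+1) → Measure ℝ :=
    fun j => (ENNReal.ofReal (Δ j))⁻¹ • (volume : Measure ℝ).restrict (Icc (c j) (c j + Δ j))
    with hνdef
  haveI hνprob : ∀ j, IsProbabilityMeasure (ν j) := fun j => aux_nu_prob _ _ (hΔ j)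
  have hμπ : μ = Measure.pi ν := by rw [hμ, hS]; exact aux_mu_eq_pi _ c Δ hΔ
  haveI hProb : IsProbabilityMeasure μ := by rw [hμπ]; infer_instance
  have hrest : μ.restrict S = μ := by
    rw [hμ, Measure.restrict_smul, Measure.restrict_restrict hSm, Set.inter_self]
  have haeS : ∀ᵐ x ∂μ, x ∈ S := by
    rw [← hrest]
    exact ae_restrict_mem hSm
  have hgaesm : AEStronglyMeasurable g μ := by
    rw [← hrest]; exact hgcS.aestronglyMeasurable hSm
  obtain ⟨M, hM⟩ := hScomp.exists_bound_of_continuousOn hgcS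
  have hM0 : 0 ≤ M := (norm_nonneg _).trans (hM _ hSne.choose_spec)
  have hg2 : MemLp g 2 μ := MemLp.of_bound hgaesm M (haeS.mono fun x hx => hM x hx)
  -- the centered coordinates
  set m : Fin (k+1) → ℝ := fun j => c j + Δ j / 2 with hm
  have hecont : ∀ j, Continuous fun x : Fin (k+1) → ℝ => x j - m j :=
    fun j => (continuous_apply j).sub continuous_const
  have hebd : ∀ j, ∀ x ∈ S, |x j - m j| ≤ Δ j / 2 := by
    intro j x hx
    rw [hS] at hx
    have h1 := hx j (Set.mem_univ j)
    rw [abs_le]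
    constructor
    · simp only [hm]; linarith [h1.1]
    · simp only [hm]; linarith [h1.2]
  have hmem : ∀ (f : (Fin (k+1) → ℝ) → ℝ) (p : ℝ≥0∞) (C : ℝ), AEStronglyMeasurable f μ →
      (∀ x ∈ S, |f x| ≤ C) → MemLp f p μ := fun f p C hf hC =>
    MemLp.of_bound hf C (haeS.mono fun x hx => by simpa using hC x hx)
  -- 1-d integrals against ν
  have hν_int : ∀ (j : Fin (k+1)) (u : ℝ → ℝ),
      ∫ t, u t ∂(ν j) = (Δ j)⁻¹ * ∫ t in (c j)..(c j + Δ j), u t := by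
    intro j u
    rw [hνdef]
    rw [integral_smul_measure, ENNReal.toReal_inv, ENNReal.toReal_ofReal (hΔ j).le,
      intervalIntegral.integral_of_le (hcb j), ← integral_Icc_eq_integral_Ioc, smul_eq_mul]
  -- moments
  have hA : ∀ j, ∫ x, (x j - m j) ∂μ = 0 := by
    intro j
    rw [hμπ, aux_single ν j (fun t => t - m j), hν_int j, hm, aux_mom1, mul_zero]
  have hB : ∀ j, ∫ x, (x j - m j)^2 ∂μ = Δ j^2/12 := by
    intro j
    rw [hμπ, aux_single ν j (fun t => (t - m j)^2), hν_int j, hm, aux_mom2]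
    field_simp [(hΔ j).ne']
  have hC : ∀ i j, j ≠ i → ∫ x, (x i - m i) * (x j - m j) ∂μ = 0 := by
    intro i j hij
    rw [hμπ]
    exact aux_cross ν i j hij (fun t => t - m i) (fun t => t - m j)
      (by rw [hν_int i, hm, aux_mom1, mul_zero])
  -- integrability of g against coordinates
  have hge_int : ∀ j, Integrable (fun x => g x * (x j - m j)) μ := by
    intro j
    refine memLp_one_iff_integrable.mp (hmem _ 1 (M * (Δ j / 2))
      (hgaesm.mul (hecont j).aestronglyMeasurable) fun x hx => ?_)
    rw [abs_mul]
    exact mul_le_mul (hM x hx) (hebd j x hx) (abs_nonneg _) hM0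
  have he_int : ∀ j, Integrable (fun x => x j - m j) μ :=
    fun j => memLp_one_iff_integrable.mp (hmem _ 1 (Δ j / 2)
      (hecont j).aestronglyMeasurable (hebd j))
  -- the key one-dimensional lower bound
  have hD : ∀ j, a j * Δ j^2/12 ≤ |∫ x, g x * (x j - m j) ∂μ| := by
    intro j
    rcases eq_or_lt_of_le (ha0 j) with h0 | hpos
    · rw [← h0]; simpa using abs_nonneg _
    -- sign constancy
    have hcontj : ContinuousOn (fun x => g' x (Pi.single j 1)) S :=
      hg'c.clm_apply continuousOn_const
    obtain ⟨σ, hσpm, hσ⟩ : ∃ σ : ℝ, (σ = 1 ∨ σ = -1) ∧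
        ∀ x ∈ S, a j ≤ σ * g' x (Pi.single j 1) := by
      rcases aux_sign S hSconv.isPreconnected _ hcontj (a j) hpos (ha j) with hps | hng
      · exact ⟨1, Or.inl rfl, fun x hx => by simpa using hps x hx⟩
      · exact ⟨-1, Or.inr rfl, fun x hx => by simpa [neg_mul] using hng x hx⟩
    suffices hkey : a j * Δ j^2/12 ≤ σ * ∫ x, g x * (x j - m j) ∂μ by
      rcases hσpm with rfl | rfl
      · rw [one_mul] at hkey; exact hkey.trans (le_abs_self _)
      · rw [neg_one_mul] at hkey; exact hkey.trans (neg_le_abs _)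
    set F : (Fin (k+1) → ℝ) → ℝ := fun x => g x * (x j - m j) with hFdef
    have hFint : Integrable F (Measure.pi ν) := hμπ ▸ hge_int j
    set π : Measure (Fin k → ℝ) := Measure.pi fun j' => ν (j.succAbove j') with hπdef
    haveI : IsProbabilityMeasure π := by rw [hπdef]; infer_instance
    set T : Set (Fin k → ℝ) :=
      Set.univ.pi fun j' => Icc (c (j.succAbove j')) (c (j.succAbove j') + Δ (j.succAbove j'))
      with hTdef
    have hTm : MeasurableSet T := MeasurableSet.univ_pi fun j' => measurableSet_Icc
    have hTfull : π T = 1 := by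
      rw [hπdef, hTdef, Measure.pi_pi]
      have h1 : ∀ j', ν (j.succAbove j')
          (Icc (c (j.succAbove j')) (c (j.succAbove j') + Δ (j.succAbove j'))) = 1 := by
        intro j'
        rw [hνdef]
        simp only [Measure.smul_apply, Measure.restrict_apply measurableSet_Icc,
          Set.inter_self, Real.volume_Icc, add_sub_cancel_left, smul_eq_mul]
        rw [ENNReal.inv_mul_cancel (by simpa using hΔ (j.succAbove j')) ENNReal.ofReal_ne_top]
      simp [h1]
    have hgoodae : ∀ᵐ z ∂π, z ∈ T := by
      rw [ae_iff]
      have : {z : Fin k → ℝ | ¬ z ∈ T} = Tᶜ := rfl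
      rw [this, measure_compl hTm (measure_ne_top _ _), hTfull, measure_univ, tsub_self]
    -- the slice bound
    have hslice : ∀ z ∈ T, a j * Δ j^2/12 ≤ σ * ∫ t, F (j.insertNth t z) ∂(ν j) := by
      intro z hz
      have hmaps : ∀ t ∈ Icc (c j) (c j + Δ j), j.insertNth t z ∈ S := by
        intro t ht
        rw [hS]
        intro i _
        rcases eq_or_ne i j with rfl | hij
        · simpa [Fin.insertNth_apply_same] using ht
        · obtain ⟨i', rfl⟩ := Fin.exists_succAbove_eq hij
          rw [Fin.insertNth_apply_succAbove]
          exact hz i' (Set.mem_univ _)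
      have hL : ∀ t : ℝ, HasDerivAt (fun s : ℝ => j.insertNth s z)
          (Pi.single j 1 : Fin (k+1) → ℝ) t := by
        intro t
        have heq : (fun s : ℝ => j.insertNth s z)
            = fun s : ℝ => j.insertNth (0:ℝ) z + s • (Pi.single j 1 : Fin (k+1) → ℝ) := by
          funext s
          funext i
          rcases eq_or_ne i j with rfl | hij
          · simp [Fin.insertNth_apply_same]
          · obtain ⟨i', rfl⟩ := Fin.exists_succAbove_eq hij
            simp [Fin.insertNth_apply_succAbove, Pi.single_eq_of_ne (Fin.succAbove_ne j i')]
        rw [heq]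
        simpa using ((hasDerivAt_id t).smul_const (Pi.single j 1 : Fin (k+1) → ℝ)).const_add
          (j.insertNth (0:ℝ) z)
      have hGder : ∀ t ∈ Icc (c j) (c j + Δ j),
          HasDerivWithinAt (fun s => g (j.insertNth s z))
            (g' (j.insertNth t z) (Pi.single j 1)) (Icc (c j) (c j + Δ j)) t := by
        intro t ht
        exact (hg _ (hmaps t ht)).comp_hasDerivWithinAt t ((hL t).hasDerivWithinAt)
          (fun s hs => hmaps s hs)
      have h1d := aux_oneD (c j) (Δ j) (a j) σ (hΔ j) (ha0 j)
        (fun s => g (j.insertNth s z)) (fun t => g' (j.insertNth t z) (Pi.single j 1))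
        hGder (fun t ht => hσ _ (hmaps t ht))
      have hFz : ∀ t, F (j.insertNth t z) = g (j.insertNth t z) * (t - m j) := by
        intro t
        rw [hFdef]
        simp [Fin.insertNth_apply_same]
      calc a j * Δ j^2/12 = (Δ j)⁻¹ * (a j * Δ j^3/12) := by
            field_simp [(hΔ j).ne']
        _ ≤ (Δ j)⁻¹ * (σ * ∫ t in (c j)..(c j + Δ j), g (j.insertNth t z) * (t - (c j + Δ j/2))) :=
            mul_le_mul_of_nonneg_left h1d (inv_nonneg.2 (hΔ j).le)
        _ = σ * ∫ t, F (j.insertNth t z) ∂(ν j) := by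
            rw [hν_int j]
            simp only [hFz, hm]
            ring
    -- put the slices together
    have hinner_int : Integrable (fun z => ∫ t, F (j.insertNth t z) ∂(ν j)) π :=
      (aux_int_prod ν j F hFint).integral_prod_right
    rw [hμπ, aux_fubini ν j F hFint]
    have hmono := integral_mono_ae (integrable_const (a j * Δ j^2/12)) (hinner_int.const_mul σ)
      (hgoodae.mono fun z hz => hslice z hz)
    calc a j * Δ j ^2/12 = ∫ _z, a j * Δ j^2/12 ∂π := by simp [measure_univ]
      _ ≤ ∫ z, σ * ∫ t, F (j.insertNth t z) ∂(ν j) ∂π := hmono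
      _ = σ * ∫ z, (∫ t, F (j.insertNth t z) ∂(ν j)) ∂π := integral_const_mul σ _
  -- Bessel's inequality setup
  set gbar : ℝ := ∫ x, g x ∂μ with hgbar
  set u : (Fin (k+1) → ℝ) → ℝ := fun x => g x - gbar with hudef
  have hu2 : MemLp u 2 μ := hg2.sub (memLp_const gbar)
  have hvar : variance g μ = ∫ x, u x ^ 2 ∂μ := by
    rw [variance_eq_integral hg2.aestronglyMeasurable.aemeasurable]
  set β : Fin (k+1) → ℝ := fun j => Real.sqrt 12 / Δ j with hβ
  have hβpos : ∀ j, 0 < β j := fun j => div_pos (Real.sqrt_pos.2 (by norm_num)) (hΔ j)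
  set eh : Fin (k+1) → (Fin (k+1) → ℝ) → ℝ := fun j x => β j * (x j - m j) with heh
  have heh2 : ∀ j, MemLp (eh j) 2 μ := by
    intro j
    refine hmem _ 2 (β j * (Δ j / 2))
      ((continuous_const.mul (hecont j)).aestronglyMeasurable) fun x hx => ?_
    simp only [heh]
    rw [abs_mul, abs_of_pos (hβpos j)]
    exact mul_le_mul_of_nonneg_left (hebd j x hx) (hβpos j).le
  set E : Fin (k+1) → Lp ℝ 2 μ := fun j => (heh2 j).toLp (eh j) with hE
  set U : Lp ℝ 2 μ := hu2.toLp u with hU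
  have hinner : ∀ (f1 f2 : (Fin (k+1) → ℝ) → ℝ) (h1 : MemLp f1 2 μ) (h2 : MemLp f2 2 μ),
      inner ℝ (h1.toLp f1) (h2.toLp f2) = ∫ x, f1 x * f2 x ∂μ := by
    intro f1 f2 h1 h2
    rw [L2.inner_def]
    refine integral_congr_ae ?_
    filter_upwards [h1.coeFn_toLp, h2.coeFn_toLp] with x e1 e2
    rw [e1, e2]
    simp [RCLike.inner_apply, mul_comm]
  have hON : Orthonormal ℝ E := by
    rw [orthonormal_iff_ite]
    intro i1 i2
    rw [hE]
    rw [hinner _ _ (heh2 i1) (heh2 i2)]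
    by_cases hcase : i1 = i2
    · subst hcase
      rw [if_pos rfl]
      have hsq : (fun x => eh i1 x * eh i1 x)
          = fun x => β i1^2 * (x i1 - m i1)^2 := by
        funext x; simp only [heh]; ring
      rw [hsq, integral_const_mul, hB, hβ]
      rw [div_pow, Real.sq_sqrt (by norm_num : (0:ℝ) ≤ 12)]
      field_simp [(hΔ i1).ne']
    · rw [if_neg hcase]
      have hsq : (fun x => eh i1 x * eh i2 x)
          = fun x => (β i1 * β i2) * ((x i1 - m i1) * (x i2 - m i2)) := by
        funext x; simp only [heh]; ring
      rw [hsq, integral_const_mul, hC i1 i2 (Ne.symm hcase), mul_zero]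
  have hBessel : ∑ j, ‖inner ℝ (E j) U‖^2 ≤ ‖U‖^2 := hON.sum_inner_products_le U
  have hUnorm : ‖U‖^2 = ∫ x, u x^2 ∂μ := by
    rw [← real_inner_self_eq_norm_sq, hU, hinner _ _ hu2 hu2]
    congr 1
    funext x
    ring
  have hinnerU : ∀ j, inner ℝ (E j) U = β j * ∫ x, g x * (x j - m j) ∂μ := by
    intro j
    rw [hE, hU, hinner _ _ (heh2 j) hu2]
    have hsplit : (fun x => eh j x * u x)
        = fun x => β j * (g x * (x j - m j)) - (β j * gbar) * (x j - m j) := by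
      funext x; simp only [heh, hudef]; ring
    rw [hsplit, integral_sub ((hge_int j).const_mul (β j)) ((he_int j).const_mul (β j * gbar)),
      integral_const_mul, integral_const_mul, hA, mul_zero, sub_zero]
  rw [hvar, ← hUnorm]
  refine le_trans (Finset.sum_le_sum fun j _ => ?_) hBessel
  rw [hinnerU j]
  have h1 : (a j * Δ j^2/12)^2 ≤ (∫ x, g x * (x j - m j) ∂μ)^2 := by
    rw [← sq_abs (∫ x, g x * (x j - m j) ∂μ)]
    exact pow_le_pow_left₀ (by have h1 := ha0 j; have h2 := (hΔ j).le; positivity) (hD j) 2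
  rw [Real.norm_eq_abs, sq_abs, mul_pow]
  calc a j^2 * Δ j^2/12 = β j^2 * (a j * Δ j^2/12)^2 := by
        rw [hβ, div_pow, Real.sq_sqrt (by norm_num : (0:ℝ) ≤ 12)]
        field_simp [(hΔ j).ne']
    _ ≤ β j^2 * (∫ x, g x * (x j - m j) ∂μ)^2 :=
        mul_le_mul_of_nonneg_left h1 (sq_nonneg _)
end

section
/- Let X be a random variable with density f that is continuous and strictly positive on [0,1], and let w : [0,1] → [0,1] be a continuously differentiable increasing bijection with derivative λ := w' continuous and strictly positive. For K ∈ ℕ, K ≥ 1, let p_i := P(X ∈ w^{−1}(((i−1)/K, i/K])) for i = 1,…,K, and let H_K := −∑_{i=1}^K p_i·log₂ p_i (with the convention 0·log₂ 0 = 0). Then lim_{K→∞} ( H_K − log₂ K ) = h(X) + E[log₂ λ(X)], where h(X) := −∫_0^1 f(x)·log₂ f(x) dx is the differential entropy of X. -/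
set_option maxHeartbeats 1000000

open MeasureTheory ProbabilityTheory Filter Set
open scoped BigOperators Topology

private lemma aux_abs_log_sub_log {c u v : ℝ} (hc : 0 < c) (hu : c ≤ u) (hv : c ≤ v) :
    |Real.log u - Real.log v| ≤ |u - v| / c := by
  have key : ∀ {a b : ℝ}, c ≤ a → c ≤ b → a ≤ b → Real.log b - Real.log a ≤ (b - a) / c := by
    intro a b ha hb hab
    have ha0 : (0:ℝ) < a := lt_of_lt_of_le hc ha
    have hb0 : (0:ℝ) < b := lt_of_lt_of_le hc hb
    rw [← Real.log_div hb0.ne' ha0.ne']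
    have h1 : Real.log (b / a) ≤ b / a - 1 := Real.log_le_sub_one_of_pos (by positivity)
    have h2 : b / a - 1 = (b - a) / a := by field_simp
    have h3 : (b - a) / a ≤ (b - a) / c :=
      div_le_div_of_nonneg_left (sub_nonneg.2 hab) hc ha
    linarith
  rcases le_total u v with h | h
  · rw [abs_sub_comm, abs_of_nonneg (sub_nonneg.2 (Real.log_le_log (lt_of_lt_of_le hc hu) h)),
      abs_sub_comm u v, abs_of_nonneg (sub_nonneg.2 h)]
    exact key hu hv h
  · rw [abs_of_nonneg (sub_nonneg.2 (Real.log_le_log (lt_of_lt_of_le hc hv) h)),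
      abs_of_nonneg (sub_nonneg.2 h)]
    exact key hv hu h

/-- Lemma 1: entropy of the output of a companding quantizer.  If `X` has density `f`,
continuous and strictly positive on `[0,1]`, and `w` is a compander with continuous
strictly positive point density `lam = w'`, then the output entropy
`H_K = −∑ p_i log₂ p_i` of the resolution-`K` quantizer satisfies
`H_K − log₂ K → h(X) + E[log₂ λ(X)]`. -/
theorem compander_output_entropy_asymptotics
    {Ω : Type*} [MeasurableSpace Ω] (μ : Measure Ω) [IsProbabilityMeasure μ]
    (X : Ω → ℝ) (hX : Measurable X)
    (f : ℝ → ℝ)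
    (hf_density : Measure.map X μ = volume.withDensity fun x => ENNReal.ofReal (f x))
    (hf_supp : ∀ x ∉ Icc (0 : ℝ) 1, f x = 0)
    (hf_cont : ContinuousOn f (Icc 0 1))
    (hf_pos : ∀ x ∈ Icc (0 : ℝ) 1, 0 < f x)
    (w lam : ℝ → ℝ) (hw0 : w 0 = 0) (hw1 : w 1 = 1)
    (hw_deriv : ∀ x ∈ Icc (0 : ℝ) 1, HasDerivWithinAt w (lam x) (Icc 0 1) x)
    (hlam_cont : ContinuousOn lam (Icc 0 1))
    (hlam_pos : ∀ x ∈ Icc (0 : ℝ) 1, 0 < lam x)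
    (p : ℕ → ℕ → ℝ)
    (hp : ∀ K i, p K i =
      (μ (X ⁻¹' {x ∈ Icc (0 : ℝ) 1 | w x ∈ Ioc (((i : ℝ) - 1) / K) ((i : ℝ) / K)})).toReal)
    (H : ℕ → ℝ)
    (hH : ∀ K, H K = -∑ i ∈ Finset.Icc 1 K, p K i * Real.logb 2 (p K i)) :
    Tendsto (fun K : ℕ => H K - Real.logb 2 K) atTop
      (𝓝 ((-∫ x in Icc (0 : ℝ) 1, f x * Real.logb 2 (f x)) +
          ∫ x in Icc (0 : ℝ) 1, f x * Real.logb 2 (lam x))) := by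
  -- ## groundwork
  have h01 : (0:ℝ) ≤ 1 := zero_le_one
  have hf_nonneg : ∀ x, 0 ≤ f x := by
    intro x
    by_cases hx : x ∈ Icc (0:ℝ) 1
    · exact (hf_pos x hx).le
    · rw [hf_supp x hx]
  have hcontw : ContinuousOn w (Icc 0 1) := fun x hx => (hw_deriv x hx).continuousWithinAt
  have hmono : StrictMonoOn w (Icc 0 1) := by
    apply strictMonoOn_of_hasDerivWithinAt_pos (convex_Icc 0 1) hcontw
    · exact fun x hx => ((hw_deriv x (interior_subset hx)).mono interior_subset)
    · exact fun x hx => hlam_pos x (interior_subset hx)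
  have hsurj : Icc (0:ℝ) 1 ⊆ w '' Icc 0 1 := by
    have := intermediate_value_Icc h01 hcontw
    rwa [hw0, hw1] at this
  set v : ℝ → ℝ := Function.invFunOn w (Icc 0 1) with hv
  have hv_ex : ∀ y ∈ Icc (0:ℝ) 1, ∃ x ∈ Icc (0:ℝ) 1, w x = y := by
    intro y hy; obtain ⟨x, hx, hxy⟩ := hsurj hy; exact ⟨x, hx, hxy⟩
  have hv_mem : ∀ y ∈ Icc (0:ℝ) 1, v y ∈ Icc (0:ℝ) 1 :=
    fun y hy => Function.invFunOn_mem (hv_ex y hy)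
  have hwv : ∀ y ∈ Icc (0:ℝ) 1, w (v y) = y :=
    fun y hy => Function.invFunOn_eq (hv_ex y hy)
  -- the quantization points
  set A : ℕ → ℕ → ℝ := fun K i => v ((i:ℝ)/K) with hA
  have hfrac : ∀ {K i : ℕ}, 1 ≤ K → i ≤ K → (i:ℝ)/K ∈ Icc (0:ℝ) 1 := by
    intro K i hK hiK
    have hK0 : (0:ℝ) < K := by exact_mod_cast hK
    constructor
    · positivity
    · rw [div_le_one hK0]; exact_mod_cast hiK
  have hA_mem : ∀ {K i : ℕ}, 1 ≤ K → i ≤ K → A K i ∈ Icc (0:ℝ) 1 :=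
    fun hK hiK => hv_mem _ (hfrac hK hiK)
  have hwA : ∀ {K i : ℕ}, 1 ≤ K → i ≤ K → w (A K i) = (i:ℝ)/K :=
    fun hK hiK => hwv _ (hfrac hK hiK)
  have hA0 : ∀ {K : ℕ}, 1 ≤ K → A K 0 = 0 := by
    intro K hK
    apply hmono.injOn (hA_mem hK (Nat.zero_le K)) (left_mem_Icc.2 h01)
    rw [hwA hK (Nat.zero_le K), hw0]; simp
  have hAK : ∀ {K : ℕ}, 1 ≤ K → A K K = 1 := by
    intro K hK
    apply hmono.injOn (hA_mem hK le_rfl) (right_mem_Icc.2 h01)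
    have hK0 : (K:ℝ) ≠ 0 := by positivity
    rw [hwA hK le_rfl, hw1, div_self hK0]
  have hAlt : ∀ {K i j : ℕ}, 1 ≤ K → i < j → j ≤ K → A K i < A K j := by
    intro K i j hK hij hjK
    have hK0 : (0:ℝ) < K := by exact_mod_cast hK
    rw [← hmono.lt_iff_lt (hA_mem hK (le_of_lt (lt_of_lt_of_le hij hjK))) (hA_mem hK hjK),
      hwA hK (le_of_lt (lt_of_lt_of_le hij hjK)), hwA hK hjK]
    apply div_lt_div_of_pos_right ?_ hK0
    exact_mod_cast hij
  -- integrability of f on subintervals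
  have hf_int : ∀ {a b : ℝ}, a ∈ Icc (0:ℝ) 1 → b ∈ Icc (0:ℝ) 1 →
      IntervalIntegrable f volume a b :=
    fun ha hb => (hf_cont.mono (uIcc_subset_Icc ha hb)).intervalIntegrable
  -- ## measures as integrals
  have hmeas_int : ∀ s : Set ℝ, MeasurableSet s → s ⊆ Icc (0:ℝ) 1 →
      (μ (X ⁻¹' s)).toReal = ∫ x in s, f x := by
    intro s hs hsub
    have h1 : μ (X ⁻¹' s) = ∫⁻ x in s, ENNReal.ofReal (f x) := by
      rw [← Measure.map_apply hX hs, hf_density, withDensity_apply _ hs]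
    have h2 : ∫ x in s, f x = (∫⁻ x in s, ENNReal.ofReal (f x)).toReal := by
      apply integral_eq_lintegral_of_nonneg_ae (ae_of_all _ fun x => hf_nonneg x)
      exact ((hf_cont.mono hsub).aemeasurable hs).aestronglyMeasurable
    rw [h1, h2]
  have htot : ∫⁻ x in Icc (0:ℝ) 1, ENNReal.ofReal (f x) = 1 := by
    have hcompl : ∫⁻ x in (Icc (0:ℝ) 1)ᶜ, ENNReal.ofReal (f x) = 0 := by
      rw [setLIntegral_congr_fun measurableSet_Icc.compl
        (fun x hx => by rw [hf_supp x hx, ENNReal.ofReal_zero])]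
      simp
    have hadd := lintegral_add_compl (fun x => ENNReal.ofReal (f x))
      (measurableSet_Icc (a := (0:ℝ)) (b := 1)) (μ := volume)
    have huniv : ∫⁻ x, ENNReal.ofReal (f x) = 1 := by
      have h1 : (volume.withDensity fun x => ENNReal.ofReal (f x)) univ = 1 := by
        rw [← hf_density, Measure.map_apply hX MeasurableSet.univ, preimage_univ, measure_univ]
      rwa [withDensity_apply _ MeasurableSet.univ, Measure.restrict_univ] at h1
    rw [hcompl, add_zero] at hadd
    rw [hadd, huniv]
  have hint01 : ∫ x in (0:ℝ)..1, f x = 1 := by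
    rw [intervalIntegral.integral_of_le h01,
      integral_eq_lintegral_of_nonneg_ae (ae_of_all _ fun x => hf_nonneg x)
        ((hf_cont.mono Ioc_subset_Icc_self).aemeasurable measurableSet_Ioc).aestronglyMeasurable,
      setLIntegral_congr Ioc_ae_eq_Icc, htot, ENNReal.toReal_one]
  -- ## cell probabilities
  have hpq : ∀ {K j : ℕ}, 1 ≤ K → j < K →
      p K (1 + j) = ∫ x in A K j..A K (j+1), f x := by
    intro K j hK hjK
    have hj1K : j + 1 ≤ K := hjK
    have ha : A K j ∈ Icc (0:ℝ) 1 := hA_mem hK hjK.le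
    have hb : A K (j+1) ∈ Icc (0:ℝ) 1 := hA_mem hK hj1K
    have hsub : Ioc (A K j) (A K (j+1)) ⊆ Icc (0:ℝ) 1 :=
      fun x hx => ⟨le_trans ha.1 (le_of_lt hx.1), le_trans hx.2 hb.2⟩
    have hset : {x ∈ Icc (0:ℝ) 1 | w x ∈ Ioc ((((1+j:ℕ):ℝ) - 1) / (K:ℝ)) (((1+j:ℕ):ℝ) / (K:ℝ))}
        = Ioc (A K j) (A K (j+1)) := by
      have e1 : ((((1+j:ℕ)):ℝ) - 1) / (K:ℝ) = (j:ℝ)/K := by push_cast; ring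
      have e2 : (((1+j:ℕ)):ℝ) / (K:ℝ) = ((j+1:ℕ):ℝ)/K := by push_cast; ring
      rw [e1, e2]
      ext x
      simp only [mem_setOf_eq, mem_Ioc, mem_Icc]
      constructor
      · rintro ⟨hxI, hlo, hhi⟩
        exact ⟨(hmono.lt_iff_lt ha hxI).1 (by rw [hwA hK hjK.le]; exact hlo),
          (hmono.le_iff_le hxI hb).1 (by rw [hwA hK hj1K]; exact hhi)⟩
      · rintro ⟨hlo, hhi⟩
        have hxI : x ∈ Icc (0:ℝ) 1 := hsub ⟨hlo, hhi⟩
        refine ⟨hxI, ?_, ?_⟩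
        · rw [← hwA hK hjK.le]; exact (hmono.lt_iff_lt ha hxI).2 hlo
        · rw [← hwA hK hj1K]; exact (hmono.le_iff_le hxI hb).2 hhi
    rw [hp, hset, hmeas_int _ measurableSet_Ioc hsub,
      intervalIntegral.integral_of_le (le_of_lt (hAlt hK (Nat.lt_succ_self j) hj1K))]
  -- sum of cell masses is 1
  have hqsum : ∀ {K : ℕ}, 1 ≤ K →
      ∑ j ∈ Finset.range K, ∫ x in A K j..A K (j+1), f x = 1 := by
    intro K hK
    rw [intervalIntegral.sum_integral_adjacent_intervals
      (fun k hk => hf_int (hA_mem hK hk.le) (hA_mem hK hk)), hA0 hK, hAK hK, hint01]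
  -- ## extremal constants
  obtain ⟨xfm, hxfm, hxfmin⟩ := isCompact_Icc.exists_isMinOn (nonempty_Icc.2 h01) hf_cont
  obtain ⟨xfM, hxfM, hxfmax⟩ := isCompact_Icc.exists_isMaxOn (nonempty_Icc.2 h01) hf_cont
  obtain ⟨xlm, hxlm, hxlmin⟩ := isCompact_Icc.exists_isMinOn (nonempty_Icc.2 h01) hlam_cont
  obtain ⟨xlM, hxlM, hxlmax⟩ := isCompact_Icc.exists_isMaxOn (nonempty_Icc.2 h01) hlam_cont
  set mf := f xfm with hmf
  set Mf := f xfM with hMf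
  set ml := lam xlm with hml
  set Ml := lam xlM with hMl
  have hmf_pos : 0 < mf := hf_pos _ hxfm
  have hml_pos : 0 < ml := hlam_pos _ hxlm
  have hmf_le : ∀ x ∈ Icc (0:ℝ) 1, mf ≤ f x := fun x hx => hxfmin hx
  have hMf_ge : ∀ x ∈ Icc (0:ℝ) 1, f x ≤ Mf := fun x hx => hxfmax hx
  have hml_le : ∀ x ∈ Icc (0:ℝ) 1, ml ≤ lam x := fun x hx => hxlmin hx
  have hMl_ge : ∀ x ∈ Icc (0:ℝ) 1, lam x ≤ Ml := fun x hx => hxlmax hx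
  have hMf_pos : 0 < Mf := lt_of_lt_of_le hmf_pos (hmf_le _ hxfM)
  have hMl_pos : 0 < Ml := lt_of_lt_of_le hml_pos (hml_le _ hxlM)
  -- ## the limit integrand
  have hψ_cont : ContinuousOn
      (fun x => f x * (Real.logb 2 (f x) - Real.logb 2 (lam x))) (Icc 0 1) := by
    have h1 : ContinuousOn (fun x => Real.log (f x)) (Icc (0:ℝ) 1) :=
      hf_cont.log (fun x hx => (hf_pos x hx).ne')
    have h2 : ContinuousOn (fun x => Real.log (lam x)) (Icc (0:ℝ) 1) :=
      hlam_cont.log (fun x hx => (hlam_pos x hx).ne')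
    simp only [Real.logb]
    exact hf_cont.mul ((h1.div_const _).sub (h2.div_const _))
  have hfψ_int : ∀ {a b : ℝ}, a ∈ Icc (0:ℝ) 1 → b ∈ Icc (0:ℝ) 1 →
      IntervalIntegrable (fun x => f x * (Real.logb 2 (f x) - Real.logb 2 (lam x))) volume a b :=
    fun ha hb => (hψ_cont.mono (uIcc_subset_Icc ha hb)).intervalIntegrable
  set I : ℝ := ∫ x in (0:ℝ)..1, f x * (Real.logb 2 (f x) - Real.logb 2 (lam x)) with hI
  have htarget : (-∫ x in Icc (0:ℝ) 1, f x * Real.logb 2 (f x)) +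
      ∫ x in Icc (0:ℝ) 1, f x * Real.logb 2 (lam x) = -I := by
    have hint1 : IntegrableOn (fun x => f x * Real.logb 2 (f x)) (Icc (0:ℝ) 1) volume := by
      apply ContinuousOn.integrableOn_compact isCompact_Icc
      simp only [Real.logb]
      exact hf_cont.mul ((hf_cont.log (fun x hx => (hf_pos x hx).ne')).div_const _)
    have hint2 : IntegrableOn (fun x => f x * Real.logb 2 (lam x)) (Icc (0:ℝ) 1) volume := by
      apply ContinuousOn.integrableOn_compact isCompact_Icc
      simp only [Real.logb]
      exact hf_cont.mul ((hlam_cont.log (fun x hx => (hlam_pos x hx).ne')).div_const _)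
    have hsplit : (fun x => f x * (Real.logb 2 (f x) - Real.logb 2 (lam x)))
        = fun x => f x * Real.logb 2 (f x) - f x * Real.logb 2 (lam x) :=
      funext fun x => by ring
    rw [hI, intervalIntegral.integral_of_le h01, ← integral_Icc_eq_integral_Ioc, hsplit,
      integral_sub hint1 hint2]
    ring
  rw [htarget, Metric.tendsto_atTop]
  intro ε hε
  have hlog2 : (0:ℝ) < Real.log 2 := Real.log_pos (by norm_num)
  set c : ℝ := mf / Ml with hc
  have hc_pos : 0 < c := by positivity
  set ε₂ : ℝ := ε / (2 * (Mf + 1)) with hε₂def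
  have hε₂_pos : 0 < ε₂ := by positivity
  set D : ℝ := 1 / ml + Mf / (ml * ml) with hD
  have hD_pos : 0 < D := by positivity
  set ε' : ℝ := ε₂ * c * Real.log 2 / D with hε'def
  have hε'_pos : 0 < ε' := by positivity
  obtain ⟨δ₁, hδ₁, hδ₁'⟩ := Metric.uniformContinuousOn_iff.1
    (isCompact_Icc.uniformContinuousOn_of_continuous hf_cont) ε' hε'_pos
  obtain ⟨δ₂, hδ₂, hδ₂'⟩ := Metric.uniformContinuousOn_iff.1
    (isCompact_Icc.uniformContinuousOn_of_continuous hlam_cont) ε' hε'_pos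
  set δ : ℝ := min δ₁ δ₂ with hδdef
  have hδ_pos : 0 < δ := lt_min hδ₁ hδ₂
  refine ⟨max 1 (⌈1/(δ*ml)⌉₊ + 1), fun K hK => ?_⟩
  have hK1 : 1 ≤ K := le_trans (le_max_left _ _) hK
  have hK0 : (0:ℝ) < K := by exact_mod_cast hK1
  have hKδ : 1 / ((K:ℝ) * ml) < δ := by
    have h1 : (⌈1/(δ*ml)⌉₊ + 1 : ℕ) ≤ K := le_trans (le_max_right _ _) hK
    have h2 : (1/(δ*ml) : ℝ) < K := by
      calc (1/(δ*ml) : ℝ) ≤ (⌈1/(δ*ml)⌉₊ : ℝ) := Nat.le_ceil _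
        _ < K := by exact_mod_cast Nat.lt_of_lt_of_le (Nat.lt_succ_self _) h1
    rw [div_lt_iff₀ (by positivity)]
    rw [div_lt_iff₀ (by positivity : (0:ℝ) < δ * ml)] at h2
    nlinarith
  -- ## per-cell estimates
  have hcell : ∀ j, j < K →
      0 < (∫ x in A K j..A K (j+1), f x) ∧
      |(∫ x in A K j..A K (j+1), f x) * Real.logb 2 ((K:ℝ) * ∫ x in A K j..A K (j+1), f x)
        - ∫ x in A K j..A K (j+1), f x * (Real.logb 2 (f x) - Real.logb 2 (lam x))|
        ≤ Mf * ε₂ * (A K (j+1) - A K j) := by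
    intro j hjK
    have hj1K : j + 1 ≤ K := hjK
    set a := A K j with ha'
    set b := A K (j+1) with hb'
    have haI : a ∈ Icc (0:ℝ) 1 := hA_mem hK1 hjK.le
    have hbI : b ∈ Icc (0:ℝ) 1 := hA_mem hK1 hj1K
    have hab : a < b := hAlt hK1 (Nat.lt_succ_self j) hj1K
    have hIooI : Ioo a b ⊆ Ioo (0:ℝ) 1 :=
      fun x hx => ⟨lt_of_le_of_lt haI.1 hx.1, lt_of_lt_of_le hx.2 hbI.2⟩
    have hIccI : Icc a b ⊆ Icc (0:ℝ) 1 := Icc_subset_Icc haI.1 hbI.2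
    obtain ⟨ξ, hξ, hξeq⟩ := exists_hasDerivAt_eq_slope w lam hab (hcontw.mono hIccI)
      (fun x hx => (hw_deriv x (Ioo_subset_Icc_self (hIooI hx))).hasDerivAt
        (Icc_mem_nhds (hIooI hx).1 (hIooI hx).2))
    have hξI : ξ ∈ Icc (0:ℝ) 1 := Ioo_subset_Icc_self (hIooI hξ)
    have hξab : ξ ∈ Icc a b := Ioo_subset_Icc_self hξ
    have hlamξ : 0 < lam ξ := hlam_pos ξ hξI
    have hL_pos : 0 < b - a := sub_pos.2 hab
    have hwba : w b - w a = 1 / (K:ℝ) := by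
      rw [hb', ha', hwA hK1 hj1K, hwA hK1 hjK.le]
      push_cast
      ring
    have hKL : (K:ℝ) * (b - a) = 1 / lam ξ := by
      have h1 : lam ξ = (1/(K:ℝ)) / (b - a) := by rw [hξeq, hwba]
      rw [h1]
      field_simp
    have hL_eq : b - a = 1 / ((K:ℝ) * lam ξ) := by
      rw [eq_div_iff (by positivity : ((K:ℝ) * lam ξ) ≠ 0)]
      have h2 := hKL
      field_simp at h2 ⊢
      linear_combination h2
    have hL_lt : b - a < δ := by
      rw [hL_eq]
      calc 1/((K:ℝ) * lam ξ) ≤ 1/((K:ℝ) * ml) :=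
            one_div_le_one_div_of_le (by positivity)
              (mul_le_mul_of_nonneg_left (hml_le ξ hξI) hK0.le)
        _ < δ := hKδ
    have hclose : ∀ x ∈ Icc a b, ∀ y ∈ Icc a b, dist x y < δ := by
      intro x hx y hy
      rw [Real.dist_eq, abs_sub_lt_iff]
      constructor <;> linarith [hx.1, hx.2, hy.1, hy.2, hL_lt]
    have hfcl : ∀ x ∈ Icc a b, ∀ y ∈ Icc a b, |f x - f y| < ε' := by
      intro x hx y hy
      have h := hδ₁' x (hIccI hx) y (hIccI hy)
        (lt_of_lt_of_le (hclose x hx y hy) (min_le_left _ _))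
      rwa [Real.dist_eq] at h
    have hlcl : ∀ x ∈ Icc a b, ∀ y ∈ Icc a b, |lam x - lam y| < ε' := by
      intro x hx y hy
      have h := hδ₂' x (hIccI hx) y (hIccI hy)
        (lt_of_lt_of_le (hclose x hx y hy) (min_le_right _ _))
      rwa [Real.dist_eq] at h
    set q := ∫ x in a..b, f x with hq'
    have hq_lb : mf * (b - a) ≤ q := by
      have h := intervalIntegral.integral_mono_on hab.le (intervalIntegrable_const)
        (hf_int haI hbI) (fun x hx => hmf_le x (hIccI hx))
      rwa [intervalIntegral.integral_const, smul_eq_mul, mul_comm] at h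
    have hq_ub : q ≤ Mf * (b - a) := by
      have h := intervalIntegral.integral_mono_on hab.le (hf_int haI hbI)
        (intervalIntegrable_const) (fun x hx => hMf_ge x (hIccI hx))
      rwa [intervalIntegral.integral_const, smul_eq_mul, mul_comm] at h
    have hq_pos : 0 < q := lt_of_lt_of_le (by positivity) hq_lb
    refine ⟨hq_pos, ?_⟩
    have hKq_lb : c ≤ (K:ℝ) * q := by
      calc c = mf / Ml := hc
        _ ≤ mf / lam ξ := div_le_div_of_nonneg_left hmf_pos.le hlamξ (hMl_ge ξ hξI)
        _ = mf * ((K:ℝ) * (b - a)) := by rw [hKL]; ring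
        _ ≤ (K:ℝ) * q := by nlinarith [hq_lb, hK0]
    have hpoint : ∀ x ∈ uIoc a b,
        |Real.logb 2 ((K:ℝ)*q) - (Real.logb 2 (f x) - Real.logb 2 (lam x))| ≤ ε₂ := by
      intro x hx
      rw [uIoc_of_le hab.le] at hx
      have hxab : x ∈ Icc a b := Ioc_subset_Icc_self hx
      have hxI : x ∈ Icc (0:ℝ) 1 := hIccI hxab
      have hlx : 0 < lam x := hlam_pos x hxI
      have hfx : 0 < f x := hf_pos x hxI
      have hsub : q - f x * (b - a) = ∫ t in a..b, (f t - f x) := by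
        rw [intervalIntegral.integral_sub (hf_int haI hbI) intervalIntegrable_const,
          intervalIntegral.integral_const, smul_eq_mul, hq']
        ring
      have hbd : |∫ t in a..b, (f t - f x)| ≤ ε' * (b - a) := by
        have h := intervalIntegral.norm_integral_le_of_norm_le_const (C := ε')
          (f := fun t => f t - f x) (a := a) (b := b) ?_
        · rwa [Real.norm_eq_abs, abs_of_pos hL_pos] at h
        · intro t ht
          rw [uIoc_of_le hab.le] at ht
          rw [Real.norm_eq_abs]
          exact (hfcl t (Ioc_subset_Icc_self ht) x hxab).le
      have h1 : |(K:ℝ)*q - f x * ((K:ℝ)*(b - a))| ≤ ε' / ml := by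
        have he : (K:ℝ)*q - f x * ((K:ℝ)*(b - a)) = (K:ℝ) * (q - f x * (b - a)) := by ring
        rw [he, abs_mul, abs_of_nonneg hK0.le, hsub]
        calc (K:ℝ) * |∫ t in a..b, (f t - f x)| ≤ (K:ℝ) * (ε' * (b - a)) :=
              mul_le_mul_of_nonneg_left hbd hK0.le
          _ = ε' * ((K:ℝ) * (b - a)) := by ring
          _ = ε' * (1 / lam ξ) := by rw [hKL]
          _ ≤ ε' * (1 / ml) := mul_le_mul_of_nonneg_left
              (one_div_le_one_div_of_le hml_pos (hml_le ξ hξI)) hε'_pos.le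
          _ = ε' / ml := by ring
      have h2 : |f x * ((K:ℝ)*(b - a)) - f x / lam x| ≤ Mf * (ε' / (ml * ml)) := by
        have he : f x * ((K:ℝ)*(b - a)) - f x / lam x = f x * (1/lam ξ - 1/lam x) := by
          rw [hKL]; ring
        rw [he, abs_mul, abs_of_nonneg (hf_nonneg x)]
        have h3 : |1/lam ξ - 1/lam x| ≤ ε' / (ml * ml) := by
          have he2 : 1/lam ξ - 1/lam x = (lam x - lam ξ) / (lam ξ * lam x) := by
            field_simp
          rw [he2, abs_div, abs_of_pos (by positivity : (0:ℝ) < lam ξ * lam x)]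
          exact div_le_div₀ hε'_pos.le (hlcl x hxab ξ hξab).le (by positivity)
            (mul_le_mul (hml_le ξ hξI) (hml_le x hxI) hml_pos.le hlamξ.le)
        exact mul_le_mul (hMf_ge x hxI) h3 (abs_nonneg _) hMf_pos.le
      have hdiff : |(K:ℝ)*q - f x / lam x| ≤ D * ε' := by
        calc |(K:ℝ)*q - f x / lam x|
            ≤ |(K:ℝ)*q - f x * ((K:ℝ)*(b-a))| + |f x * ((K:ℝ)*(b-a)) - f x / lam x| :=
              abs_sub_le _ _ _
          _ ≤ ε'/ml + Mf * (ε'/(ml*ml)) := add_le_add h1 h2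
          _ = D * ε' := by rw [hD]; ring
      have hflam_lb : c ≤ f x / lam x := by
        rw [hc]
        exact div_le_div₀ hfx.le (hmf_le x hxI) hlx (hMl_ge x hxI)
      have hlog := aux_abs_log_sub_log hc_pos hKq_lb hflam_lb
      have hlogb_eq : Real.logb 2 (f x) - Real.logb 2 (lam x) = Real.logb 2 (f x / lam x) :=
        (Real.logb_div hfx.ne' hlx.ne').symm
      rw [hlogb_eq]
      have he3 : Real.logb 2 ((K:ℝ)*q) - Real.logb 2 (f x / lam x)
          = (Real.log ((K:ℝ)*q) - Real.log (f x / lam x)) / Real.log 2 := by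
        simp only [Real.logb]; ring
      rw [he3, abs_div, abs_of_pos hlog2]
      have hstep : |Real.log ((K:ℝ)*q) - Real.log (f x / lam x)| ≤ D * ε' / c := by
        calc |Real.log ((K:ℝ)*q) - Real.log (f x / lam x)|
            ≤ |(K:ℝ)*q - f x / lam x| / c := hlog
          _ ≤ D * ε' / c := by gcongr
      calc |Real.log ((K:ℝ)*q) - Real.log (f x / lam x)| / Real.log 2
          ≤ (D * ε' / c) / Real.log 2 := by gcongr
        _ = ε₂ := by
            rw [hε'def]
            field_simp
    -- per-cell bound
    have heq : q * Real.logb 2 ((K:ℝ)*q) = ∫ x in a..b, f x * Real.logb 2 ((K:ℝ)*q) := by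
      rw [intervalIntegral.integral_mul_const, hq']
    rw [heq, ← intervalIntegral.integral_sub
      (((hf_cont.mono (uIcc_subset_Icc haI hbI)).intervalIntegrable).mul_const _)
      (hfψ_int haI hbI)]
    have h := intervalIntegral.norm_integral_le_of_norm_le_const (C := Mf * ε₂)
      (f := fun x => f x * Real.logb 2 ((K:ℝ)*q)
        - f x * (Real.logb 2 (f x) - Real.logb 2 (lam x))) (a := a) (b := b) ?_
    · rwa [Real.norm_eq_abs, abs_of_pos hL_pos] at h
    · intro x hx
      have h4 := hpoint x hx
      have hxI : x ∈ Icc (0:ℝ) 1 := by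
        rw [uIoc_of_le hab.le] at hx
        exact hIccI (Ioc_subset_Icc_self hx)
      have he : f x * Real.logb 2 ((K:ℝ)*q) - f x * (Real.logb 2 (f x) - Real.logb 2 (lam x))
          = f x * (Real.logb 2 ((K:ℝ)*q) - (Real.logb 2 (f x) - Real.logb 2 (lam x))) := by
        ring
      simp only [Real.norm_eq_abs]
      rw [he, abs_mul, abs_of_nonneg (hf_nonneg x)]
      exact mul_le_mul (hMf_ge x hxI) h4 (abs_nonneg _) hMf_pos.le
  -- ## assemble
  have hIsum : I = ∑ j ∈ Finset.range K, ∫ x in A K j..A K (j+1),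
      f x * (Real.logb 2 (f x) - Real.logb 2 (lam x)) := by
    rw [intervalIntegral.sum_integral_adjacent_intervals
      (fun k hk => hfψ_int (hA_mem hK1 hk.le) (hA_mem hK1 hk)), hA0 hK1, hAK hK1]
  set S : ℝ := ∑ j ∈ Finset.range K, (∫ x in A K j..A K (j+1), f x) *
      Real.logb 2 ((K:ℝ) * ∫ x in A K j..A K (j+1), f x) with hS
  have hSI : |S - I| ≤ Mf * ε₂ := by
    rw [hIsum, hS, ← Finset.sum_sub_distrib]
    calc |∑ j ∈ Finset.range K, ((∫ x in A K j..A K (j+1), f x) *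
            Real.logb 2 ((K:ℝ) * ∫ x in A K j..A K (j+1), f x)
            - ∫ x in A K j..A K (j+1), f x * (Real.logb 2 (f x) - Real.logb 2 (lam x)))|
        ≤ ∑ j ∈ Finset.range K, |(∫ x in A K j..A K (j+1), f x) *
            Real.logb 2 ((K:ℝ) * ∫ x in A K j..A K (j+1), f x)
            - ∫ x in A K j..A K (j+1), f x * (Real.logb 2 (f x) - Real.logb 2 (lam x))| :=
          Finset.abs_sum_le_sum_abs _ _
      _ ≤ ∑ j ∈ Finset.range K, Mf * ε₂ * (A K (j+1) - A K j) :=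
          Finset.sum_le_sum (fun j hj => (hcell j (Finset.mem_range.1 hj)).2)
      _ = Mf * ε₂ * ∑ j ∈ Finset.range K, (A K (j+1) - A K j) := by rw [Finset.mul_sum]
      _ = Mf * ε₂ := by
          rw [Finset.sum_range_sub (fun i => A K i), hAK hK1, hA0 hK1]
          ring
  have hred : H K - Real.logb 2 K = -S := by
    rw [hH K, ← Finset.Ico_add_one_right_eq_Icc, Finset.sum_Ico_eq_sum_range]
    norm_num
    have hrw : ∀ j ∈ Finset.range K, p K (1+j) * Real.logb 2 (p K (1+j))
        = (∫ x in A K j..A K (j+1), f x) * Real.logb 2 (∫ x in A K j..A K (j+1), f x) := by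
      intro j hj
      rw [hpq hK1 (Finset.mem_range.1 hj)]
    rw [Finset.sum_congr rfl hrw, hS]
    have hmul : ∀ j ∈ Finset.range K,
        (∫ x in A K j..A K (j+1), f x) * Real.logb 2 ((K:ℝ) * ∫ x in A K j..A K (j+1), f x)
        = (∫ x in A K j..A K (j+1), f x) * Real.logb 2 (∫ x in A K j..A K (j+1), f x)
          + (∫ x in A K j..A K (j+1), f x) * Real.logb 2 (K:ℝ) := by
      intro j hj
      rw [Real.logb_mul (ne_of_gt hK0) (ne_of_gt (hcell j (Finset.mem_range.1 hj)).1)]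
      ring
    rw [Finset.sum_congr rfl hmul, Finset.sum_add_distrib, ← Finset.sum_mul, hqsum hK1]
    ring
  rw [Real.dist_eq, hred]
  have hflip : -S - -I = -(S - I) := by ring
  rw [hflip, abs_neg]
  have hfin : Mf * ε₂ < ε := by
    have h1 : Mf * ε₂ = ε * (Mf/(2*(Mf+1))) := by rw [hε₂def]; ring
    have h2 : Mf/(2*(Mf+1)) < 1 := by
      rw [div_lt_one (by positivity)]
      linarith
    rw [h1]
    exact mul_lt_of_lt_one_right hε h2
  exact lt_of_le_of_lt hSI hfin
end

section
/- Let X = (X₁,…,Xₙ) be a random vector with joint density f that is continuous and strictly positive on [0,1]ⁿ. For each j let w_j : [0,1] → [0,1] be a continuously differentiable increasing bijection with derivative λ_j := w_j' continuous and strictly positive, let α₁,…,αₙ > 0 with ∑_j α_j = 1, and for K ∈ ℕ set K_j := ⌊K^{α_j}⌋. Let H_K denote the Shannon entropy (in bits) of the random cell-index vector, i.e., H_K := −∑ P(X ∈ S)·log₂ P(X ∈ S), the sum running over the product cells S = ∏_{j=1}^n w_j^{−1}(((i_j−1)/K_j, i_j/K_j]). Then lim_{K→∞} ( H_K − ∑_{j=1}^n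 log₂ K_j ) = h(X₁,…,Xₙ) + ∑_{j=1}^n E[log₂ λ_j(X_j)], where h(X₁,…,Xₙ) := −∫_{[0,1]ⁿ} f(x)·log₂ f(x) dx is the joint differential entropy. -/
open MeasureTheory ProbabilityTheory Filter Set
open scoped BigOperators Topology

lemma scalar_compander_inverse (w lam : ℝ → ℝ) (hw0 : w 0 = 0) (hw1 : w 1 = 1)
    (hw_deriv : ∀ x ∈ Icc (0:ℝ) 1, HasDerivWithinAt w (lam x) (Icc 0 1) x)
    (hlam_pos : ∀ x ∈ Icc (0:ℝ) 1, 0 < lam x) :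
    ∃ g : ℝ → ℝ,
      (∀ y ∈ Icc (0:ℝ) 1, g y ∈ Icc (0:ℝ) 1 ∧ w (g y) = y) ∧
      g 0 = 0 ∧
      (∀ t ∈ Icc (0:ℝ) 1, w t ∈ Icc (0:ℝ) 1) ∧
      (∀ t ∈ Icc (0:ℝ) 1, w t = 0 → t = 0) ∧
      (∀ y1 y2, 0 ≤ y1 → y1 < y2 → y2 ≤ 1 → g y1 < g y2 ∧
        {t ∈ Icc (0:ℝ) 1 | w t ∈ Ioc y1 y2} = Ioc (g y1) (g y2) ∧
        ∃ ζ ∈ Icc (0:ℝ) 1, ζ ∈ Icc (g y1) (g y2) ∧ g y2 - g y1 = (y2 - y1) / lam ζ) := by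
  have hcont : ContinuousOn w (Icc 0 1) := fun x hx => (hw_deriv x hx).continuousWithinAt
  have hderiv_at : ∀ x ∈ Ioo (0:ℝ) 1, HasDerivAt w (lam x) x := by
    intro x hx
    exact (hw_deriv x (Ioo_subset_Icc_self hx)).hasDerivAt (Icc_mem_nhds hx.1 hx.2)
  have hmono : StrictMonoOn w (Icc 0 1) := by
    apply strictMonoOn_of_deriv_pos (convex_Icc 0 1) hcont
    intro x hx
    rw [interior_Icc] at hx
    rw [(hderiv_at x hx).deriv]
    exact hlam_pos x (Ioo_subset_Icc_self hx)
  have hsurj : ∀ y ∈ Icc (0:ℝ) 1, ∃ t ∈ Icc (0:ℝ) 1, w t = y := by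
    intro y hy
    have := intermediate_value_Icc (zero_le_one) hcont
    rw [hw0, hw1] at this
    obtain ⟨t, ht, hwt⟩ := this hy
    exact ⟨t, ht, hwt⟩
  classical
  set g : ℝ → ℝ := fun y => if hy : y ∈ Icc (0:ℝ) 1 then (hsurj y hy).choose else 0 with hg
  have hgspec : ∀ y ∈ Icc (0:ℝ) 1, g y ∈ Icc (0:ℝ) 1 ∧ w (g y) = y := by
    intro y hy
    simp only [hg, dif_pos hy]
    exact ⟨(hsurj y hy).choose_spec.1, (hsurj y hy).choose_spec.2⟩
  have h01 : (0:ℝ) ∈ Icc (0:ℝ) 1 := ⟨le_refl _, zero_le_one⟩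
  have h11 : (1:ℝ) ∈ Icc (0:ℝ) 1 := ⟨zero_le_one, le_refl _⟩
  have hg0 : g 0 = 0 := by
    have h := hgspec 0 h01
    exact hmono.injOn h.1 h01 (by rw [h.2, hw0])
  have hrange : ∀ t ∈ Icc (0:ℝ) 1, w t ∈ Icc (0:ℝ) 1 := by
    intro t ht
    constructor
    · rw [← hw0]; exact hmono.monotoneOn h01 ht ht.1
    · rw [← hw1]; exact hmono.monotoneOn ht h11 ht.2
  have hzero : ∀ t ∈ Icc (0:ℝ) 1, w t = 0 → t = 0 := by
    intro t ht hwt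
    exact hmono.injOn ht h01 (by rw [hwt, hw0])
  refine ⟨g, hgspec, hg0, hrange, hzero, ?_⟩
  intro y1 y2 h0 h12 h21
  have hy1 : y1 ∈ Icc (0:ℝ) 1 := ⟨h0, h12.le.trans h21⟩
  have hy2 : y2 ∈ Icc (0:ℝ) 1 := ⟨h0.trans h12.le, h21⟩
  obtain ⟨hga, hwa⟩ := hgspec y1 hy1
  obtain ⟨hgb, hwb⟩ := hgspec y2 hy2
  have hab : g y1 < g y2 := by
    by_contra h
    push_neg at h
    rcases eq_or_lt_of_le h with h | h
    · rw [← h] at hwa; rw [hwa] at hwb; exact absurd hwb h12.ne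
    · exact absurd (hwb ▸ hwa ▸ hmono hgb hga h) (not_lt.mpr h12.le)
  have hset : {t ∈ Icc (0:ℝ) 1 | w t ∈ Ioc y1 y2} = Ioc (g y1) (g y2) := by
    ext t
    simp only [mem_setOf_eq, mem_Ioc, mem_sep_iff]
    constructor
    · rintro ⟨ht, h1, h2⟩
      constructor
      · by_contra h; push_neg at h
        have := hmono.monotoneOn ht hga h
        rw [hwa] at this; exact absurd h1 (not_lt.mpr this)
      · by_contra h; push_neg at h
        have := hmono hgb ht h
        rw [hwb] at this; exact absurd h2 (not_le.mpr this)
    · rintro ⟨h1, h2⟩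
      have ht : t ∈ Icc (0:ℝ) 1 := ⟨hga.1.trans h1.le, h2.trans hgb.2⟩
      refine ⟨ht, ?_, ?_⟩
      · have := hmono hga ht h1; rwa [hwa] at this
      · have := hmono.monotoneOn ht hgb h2; rwa [hwb] at this
  obtain ⟨ζ, hζ, hζeq⟩ := exists_hasDerivAt_eq_slope w lam hab
    (hcont.mono (Icc_subset_Icc hga.1 hgb.2))
    (fun x hx => hderiv_at x ⟨lt_of_le_of_lt hga.1 hx.1, lt_of_lt_of_le hx.2 hgb.2⟩)
  have hζ01 : ζ ∈ Icc (0:ℝ) 1 := ⟨hga.1.trans hζ.1.le, hζ.2.le.trans hgb.2⟩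
  refine ⟨hab, hset, ζ, hζ01, Ioo_subset_Icc_self hζ, ?_⟩
  rw [hwa, hwb] at hζeq
  have hlz := hlam_pos ζ hζ01
  rw [hζeq, div_div_eq_mul_div, mul_comm, mul_div_assoc,
    div_self (by linarith : y2 - y1 ≠ 0), mul_one]

lemma abs_logb_sub_le_of_le {c u v : ℝ} (hc : 0 < c) (hu : c ≤ u) (hv : c ≤ v) :
    |Real.logb 2 u - Real.logb 2 v| ≤ |u - v| / (c * Real.log 2) := by
  have key : ∀ a b : ℝ, c ≤ a → c ≤ b → Real.log a - Real.log b ≤ |a - b| / c := by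
    intro a b ha hb
    have hb0 : 0 < b := lt_of_lt_of_le hc hb
    have ha0 : 0 < a := lt_of_lt_of_le hc ha
    rcases le_or_gt a b with h | h
    · have h1 : Real.log a ≤ Real.log b := Real.log_le_log ha0 h
      have h2 : 0 ≤ |a - b| / c := div_nonneg (abs_nonneg _) hc.le
      linarith
    · have h1 : Real.log a - Real.log b = Real.log (a / b) := (Real.log_div ha0.ne' hb0.ne').symm
      rw [h1]
      have h2 : Real.log (a / b) ≤ a / b - 1 := Real.log_le_sub_one_of_pos (div_pos ha0 hb0)
      have h3 : a / b - 1 = (a - b) / b := by field_simp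
      have h4 : (a - b) / b ≤ |a - b| / c := by
        gcongr <;> first | exact le_abs_self _ | exact hb | positivity | linarith
      linarith
  have hlog2 : 0 < Real.log 2 := Real.log_pos one_lt_two
  have h1 : |Real.log u - Real.log v| ≤ |u - v| / c := by
    rw [abs_sub_le_iff]
    exact ⟨key u v hu hv, by rw [abs_sub_comm]; exact key v u hv hu⟩
  rw [Real.logb, Real.logb, div_sub_div_same, abs_div, abs_of_pos hlog2]
  rw [div_le_iff₀ hlog2] at *
  calc |Real.log u - Real.log v| ≤ |u - v| / c := h1
    _ = |u - v| / (c * Real.log 2) * Real.log 2 := by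
        field_simp

lemma logb_mul_prod {ι : Type*} (s : Finset ι) (c : ℝ) (v : ι → ℝ) (hc : 0 < c)
    (hv : ∀ j ∈ s, 0 < v j) :
    Real.logb 2 (c * ∏ j ∈ s, v j) = Real.logb 2 c + ∑ j ∈ s, Real.logb 2 (v j) := by
  have hprod : (0:ℝ) < ∏ j ∈ s, v j := Finset.prod_pos hv
  rw [Real.logb_mul hc.ne' hprod.ne']
  congr 1
  rw [Real.logb, Real.log_prod (fun j hj => (hv j hj).ne'), Finset.sum_div]
  rfl

set_option maxHeartbeats 2000000 in
/-- Lemma 7 (joint-entropy resolution-rate): for a distributed companding quantizer with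
companders `w j` (point densities `lam j`) applied at resolutions `K_j = ⌊K^{α_j}⌋` to a
source vector with joint density `f` continuous and strictly positive on `[0,1]ⁿ`, the
joint output entropy `H_K` satisfies
`H_K − ∑_j log₂ K_j → h(X₁,…,Xₙ) + ∑_j E[log₂ λ_j(X_j)]`. -/
theorem distributed_joint_entropy_asymptotics
    (n : ℕ) {Ω : Type*} [MeasurableSpace Ω] (μ : Measure Ω) [IsProbabilityMeasure μ]
    (Box : Set (Fin n → ℝ)) (hBox : Box = Set.univ.pi fun _ => Icc (0 : ℝ) 1)
    (X : Ω → Fin n → ℝ) (hX : Measurable X)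
    (f : (Fin n → ℝ) → ℝ)
    (hf_density : Measure.map X μ = volume.withDensity fun x => ENNReal.ofReal (f x))
    (hf_supp : ∀ x ∉ Box, f x = 0)
    (hf_cont : ContinuousOn f Box)
    (hf_pos : ∀ x ∈ Box, 0 < f x)
    (w lam : Fin n → ℝ → ℝ)
    (hw0 : ∀ j, w j 0 = 0) (hw1 : ∀ j, w j 1 = 1)
    (hw_deriv : ∀ j, ∀ x ∈ Icc (0 : ℝ) 1, HasDerivWithinAt (w j) (lam j x) (Icc 0 1) x)
    (hlam_cont : ∀ j, ContinuousOn (lam j) (Icc 0 1))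
    (hlam_pos : ∀ j, ∀ x ∈ Icc (0 : ℝ) 1, 0 < lam j x)
    (α : Fin n → ℝ) (hα : ∀ j, 0 < α j) (hαsum : (∑ j, α j) = 1)
    (Kres : ℕ → Fin n → ℕ) (hKres : ∀ K j, Kres K j = ⌊(K : ℝ) ^ (α j)⌋₊)
    (Ssc : Fin n → ℕ → ℕ → Set ℝ)
    (hSsc : ∀ j Kc i, Ssc j Kc i =
      {t ∈ Icc (0 : ℝ) 1 | w j t ∈ Ioc (((i : ℝ) - 1) / Kc) ((i : ℝ) / Kc)
        ∨ (i = 1 ∧ w j t = 0)})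
    (Scell : ℕ → (Fin n → ℕ) → Set (Fin n → ℝ))
    (hScell : ∀ K i, Scell K i = {x | ∀ j, x j ∈ Ssc j (Kres K j) (i j)})
    (H : ℕ → ℝ)
    (hH : ∀ K, H K = -∑ i ∈ Fintype.piFinset (fun j => Finset.Icc 1 (Kres K j)),
      (μ (X ⁻¹' Scell K i)).toReal * Real.logb 2 (μ (X ⁻¹' Scell K i)).toReal) :
    Tendsto (fun K : ℕ => H K - ∑ j, Real.logb 2 (Kres K j)) atTop
      (𝓝 ((-∫ x in Box, f x * Real.logb 2 (f x)) +
          ∑ j, ∫ x in Box, f x * Real.logb 2 (lam j (x j)))) := by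
  classical
  have hlog2 : (0:ℝ) < Real.log 2 := Real.log_pos one_lt_two
  -- inverse companders
  choose g hgspec hg0 hwrange hwzero hgcell using fun j =>
    scalar_compander_inverse (w j) (lam j) (hw0 j) (hw1 j) (hw_deriv j) (hlam_pos j)
  -- Box basics
  have hBoxComp : IsCompact Box := hBox ▸ isCompact_univ_pi fun _ => isCompact_Icc
  have hBoxMeas : MeasurableSet Box := hBox ▸ MeasurableSet.univ_pi fun _ => measurableSet_Icc
  have hBoxNE : Box.Nonempty := by
    refine ⟨fun _ => 0, ?_⟩
    rw [hBox]; intro j _; exact ⟨le_refl 0, zero_le_one⟩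
  have hmemBox : ∀ x : Fin n → ℝ, x ∈ Box ↔ ∀ j, x j ∈ Icc (0:ℝ) 1 := by
    intro x; rw [hBox]
    exact ⟨fun h j => h j (Set.mem_univ j), fun h j _ => h j⟩
  have hf0 : ∀ x, 0 ≤ f x := by
    intro x
    by_cases hx : x ∈ Box
    · exact (hf_pos x hx).le
    · rw [hf_supp x hx]
  -- minima
  obtain ⟨x₀, hx₀B, hx₀min'⟩ := hBoxComp.exists_isMinOn hBoxNE hf_cont
  have hx₀min : ∀ y ∈ Box, f x₀ ≤ f y := fun y hy => hx₀min' hy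
  set mf : ℝ := f x₀ with hmf_def
  have hmf : 0 < mf := hf_pos x₀ hx₀B
  have hlmin : ∀ j, ∃ m : ℝ, 0 < m ∧ ∀ t ∈ Icc (0:ℝ) 1, m ≤ lam j t := by
    intro j
    obtain ⟨t₀, ht₀, hmin⟩ := isCompact_Icc.exists_isMinOn
      ⟨0, le_refl (0:ℝ), zero_le_one⟩ (hlam_cont j)
    exact ⟨lam j t₀, hlam_pos j t₀ ht₀, fun t ht => hmin ht⟩
  choose mlam hmlam_pos hmlam_le using hlmin
  -- uniform continuity
  have hfUC := (hBoxComp.uniformContinuousOn_of_continuous hf_cont)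
  rw [Metric.uniformContinuousOn_iff_le] at hfUC
  have hlamUC : ∀ j, ∀ ε > 0, ∃ δ > 0, ∀ x ∈ Icc (0:ℝ) 1, ∀ y ∈ Icc (0:ℝ) 1,
      dist x y ≤ δ → dist (lam j x) (lam j y) ≤ ε := by
    intro j
    have := (isCompact_Icc.uniformContinuousOn_of_continuous (hlam_cont j))
    rwa [Metric.uniformContinuousOn_iff_le] at this
  -- measure facts
  have hfae : AEStronglyMeasurable f (volume.restrict Box) :=
    hf_cont.aestronglyMeasurable hBoxMeas
  have hmeasInt : ∀ S : Set (Fin n → ℝ), MeasurableSet S → S ⊆ Box →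
      (μ (X ⁻¹' S)).toReal = ∫ x in S, f x := by
    intro S hS hSB
    rw [← Measure.map_apply hX hS, hf_density, withDensity_apply _ hS,
      integral_eq_lintegral_of_nonneg_ae (ae_of_all _ fun x => hf0 x)
        (hfae.mono_measure (Measure.restrict_mono hSB le_rfl))]
  have hXBox : μ (X ⁻¹' Box) = 1 := by
    have h1 : μ (X ⁻¹' Boxᶜ) = 0 := by
      rw [← Measure.map_apply hX hBoxMeas.compl, hf_density,
        withDensity_apply _ hBoxMeas.compl]
      have hz : ∀ᵐ x ∂(volume.restrict Boxᶜ), ENNReal.ofReal (f x) = 0 := by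
        refine (ae_restrict_iff' hBoxMeas.compl).mpr (ae_of_all _ fun x hx => ?_)
        rw [hf_supp x hx, ENNReal.ofReal_zero]
      rw [lintegral_congr_ae hz, lintegral_zero]
    have h2 := measure_add_measure_compl (μ := μ) (hX hBoxMeas)
    rw [← Set.preimage_compl, h1, add_zero, measure_univ] at h2
    exact h2
  have hintBox : ∫ x in Box, f x = 1 := by
    rw [← hmeasInt Box hBoxMeas (subset_refl _), hXBox, ENNReal.toReal_one]
  have hIntf : IntegrableOn f Box := hf_cont.integrableOn_compact hBoxComp
  -- continuity of the log-pieces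
  have hlogf_cont : ContinuousOn (fun x => f x * Real.logb 2 (f x)) Box := by
    refine hf_cont.mul ?_
    intro x hx
    exact (Real.continuousAt_logb (hf_pos x hx).ne').comp_continuousWithinAt (hf_cont x hx)
  have hloglam_cont : ∀ j, ContinuousOn
      (fun x : Fin n → ℝ => f x * Real.logb 2 (lam j (x j))) Box := by
    intro j
    refine hf_cont.mul ?_
    intro x hx
    have hxj : x j ∈ Icc (0:ℝ) 1 := (hmemBox x).mp hx j
    have h1 : ContinuousWithinAt (fun x : Fin n → ℝ => lam j (x j)) Box x := by
      exact ContinuousWithinAt.comp (g := lam j) (f := fun p : Fin n → ℝ => p j)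
        (s := Box) (t := Icc (0:ℝ) 1) (x := x) (hlam_cont j (x j) hxj)
        (continuous_apply j).continuousWithinAt (fun y hy => (hmemBox y).mp hy j)
    exact ContinuousAt.comp_continuousWithinAt (g := Real.logb 2)
      (f := fun x : Fin n → ℝ => lam j (x j))
      (Real.continuousAt_logb (hlam_pos j (x j) hxj).ne') h1
  have hIntflogf : IntegrableOn (fun x => f x * Real.logb 2 (f x)) Box :=
    hlogf_cont.integrableOn_compact hBoxComp
  have hIntfloglam : ∀ j, IntegrableOn
      (fun x : Fin n → ℝ => f x * Real.logb 2 (lam j (x j))) Box :=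
    fun j => (hloglam_cont j).integrableOn_compact hBoxComp
  -- the target T and its integral
  set T : (Fin n → ℝ) → ℝ :=
    fun x => Real.logb 2 (f x) - ∑ j, Real.logb 2 (lam j (x j)) with hT_def
  have hIntfT : IntegrableOn (fun x => f x * T x) Box := by
    have : (fun x => f x * T x) = (fun x =>
        f x * Real.logb 2 (f x) - ∑ j, f x * Real.logb 2 (lam j (x j))) := by
      funext x
      simp only [hT_def]
      rw [mul_sub, Finset.mul_sum]
    rw [this]
    exact hIntflogf.sub (integrable_finset_sum _ (fun j _ => hIntfloglam j))
  have hTtarget : ((-∫ x in Box, f x * Real.logb 2 (f x)) +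
      ∑ j, ∫ x in Box, f x * Real.logb 2 (lam j (x j))) = -∫ x in Box, f x * T x := by
    have h1 : ∫ x in Box, f x * T x =
        (∫ x in Box, f x * Real.logb 2 (f x)) -
          ∑ j, ∫ x in Box, f x * Real.logb 2 (lam j (x j)) := by
      have heq : ∀ x, f x * T x =
          f x * Real.logb 2 (f x) - ∑ j, f x * Real.logb 2 (lam j (x j)) := by
        intro x
        simp only [hT_def]
        rw [mul_sub, Finset.mul_sum]
      rw [setIntegral_congr_fun hBoxMeas (fun x _ => heq x)]
      rw [integral_sub hIntflogf (integrable_finset_sum _ (fun j _ => hIntfloglam j))]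
      rw [integral_finset_sum _ (fun j _ => hIntfloglam j)]
    rw [h1]; ring
  rw [hTtarget]
  rw [Metric.tendsto_atTop]
  intro ε hε
  -- constants
  set C : ℝ := 1 / ((mf/2) * Real.log 2) + ∑ j, 1 / (mlam j * Real.log 2) with hC_def
  have hCpos : 0 < C := by
    have h1 : 0 < 1 / ((mf/2) * Real.log 2) :=
      one_div_pos.mpr (mul_pos (by linarith) hlog2)
    have h2 : 0 ≤ ∑ j, 1 / (mlam j * Real.log 2) :=
      Finset.sum_nonneg fun j _ => (one_div_pos.mpr (mul_pos (hmlam_pos j) hlog2)).le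
    rw [hC_def]
    linarith
  set ε' : ℝ := min (mf/2) (ε/(4*C)) with hε'_def
  have hε'pos : 0 < ε' := lt_min (by linarith) (div_pos hε (by linarith))
  have hε'mf : ε' ≤ mf/2 := min_le_left _ _
  have hε'C : ε' * C ≤ ε/4 := by
    have h := min_le_right (mf/2) (ε/(4*C))
    have h2 : ε' * C ≤ (ε/(4*C)) * C := by
      apply mul_le_mul_of_nonneg_right _ hCpos.le
      rw [hε'_def]; exact h
    calc ε' * C ≤ (ε/(4*C)) * C := h2
      _ = ε/4 := by field_simp
  obtain ⟨δf, hδf, hδfspec⟩ := hfUC ε' hε'pos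
  choose dl hdlpos hdlspec using fun j => hlamUC j ε' hε'pos
  -- eventual condition
  have hev : ∀ᶠ K : ℕ in atTop, ∀ j, 1 ≤ Kres K j ∧
      (1:ℝ)/(Kres K j) ≤ (min δf (dl j)) * mlam j := by
    rw [eventually_all]
    intro j
    have hNj : Tendsto (fun K : ℕ => Kres K j) atTop atTop := by
      have h1 : Tendsto (fun K : ℕ => ((K:ℝ)) ^ (α j)) atTop atTop :=
        (tendsto_rpow_atTop (hα j)).comp tendsto_natCast_atTop_atTop
      have h2 := tendsto_nat_floor_atTop.comp h1
      have h3 : (fun K : ℕ => Kres K j) = (fun K : ℕ => ⌊((K:ℝ)) ^ (α j)⌋₊) := by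
        funext K; rw [hKres]
      rw [h3]
      exact h2
    have hcpos : 0 < (min δf (dl j)) * mlam j :=
      mul_pos (lt_min hδf (hdlpos j)) (hmlam_pos j)
    have ev1 : ∀ᶠ K : ℕ in atTop, 1 ≤ Kres K j := hNj.eventually_ge_atTop 1
    have ev2 : ∀ᶠ K : ℕ in atTop, (1:ℝ)/(Kres K j) ≤ (min δf (dl j)) * mlam j := by
      have ht : Tendsto (fun K : ℕ => (1:ℝ)/(Kres K j)) atTop (𝓝 0) :=
        tendsto_one_div_atTop_nhds_zero_nat.comp hNj
      exact ht.eventually (eventually_le_nhds hcpos)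
    exact ev1.and ev2
  rw [eventually_atTop] at hev
  obtain ⟨K₀, hK₀⟩ := hev
  refine ⟨K₀, fun K hK => ?_⟩
  have hP := hK₀ K hK
  rw [Real.dist_eq]
  set N : Fin n → ℕ := Kres K with hN_def
  have hN1 : ∀ j, 1 ≤ N j := fun j => (hP j).1
  have hNpos : ∀ j, (0:ℝ) < (N j : ℝ) := fun j => by
    have := hN1 j; positivity
  have hNsmall : ∀ j, (1:ℝ)/(N j) ≤ (min δf (dl j)) * mlam j := fun j => (hP j).2
  -- endpoints of scalar cells
  set a : Fin n → ℕ → ℝ := fun j m => g j (((m:ℝ) - 1) / (N j)) with ha_def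
  set b : Fin n → ℕ → ℝ := fun j m => g j ((m:ℝ) / (N j)) with hb_def
  have hy : ∀ j m, 1 ≤ m → m ≤ N j → 0 ≤ ((m:ℝ)-1)/(N j) ∧
      ((m:ℝ)-1)/(N j) < (m:ℝ)/(N j) ∧ (m:ℝ)/(N j) ≤ 1 := by
    intro j m h1 h2
    have hm1 : (1:ℝ) ≤ (m:ℝ) := by exact_mod_cast h1
    have hmN : (m:ℝ) ≤ (N j : ℝ) := by exact_mod_cast h2
    refine ⟨div_nonneg (by linarith) (hNpos j).le, ?_, ?_⟩
    · exact (div_lt_div_iff_of_pos_right (hNpos j)).mpr (by linarith)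
    · rw [div_le_one (hNpos j)]; exact hmN
  have hcell : ∀ j m, 1 ≤ m → m ≤ N j →
      Ssc j (N j) m = (if m = 1 then Icc (a j m) (b j m) else Ioc (a j m) (b j m)) := by
    intro j m h1 h2
    obtain ⟨hy0, hy12, hy21⟩ := hy j m h1 h2
    obtain ⟨hab, hIoc, -⟩ := hgcell j _ _ hy0 hy12 hy21
    rcases eq_or_ne m 1 with hm | hm
    · subst hm
      rw [if_pos rfl, hSsc]
      have ha0 : a j 1 = 0 := by
        show g j ((((1:ℕ):ℝ) - 1) / ((N j : ℕ):ℝ)) = 0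
        norm_num [hg0 j]
      ext t
      simp only [mem_setOf_eq, mem_Icc]
      constructor
      · rintro ⟨ht, hw | ⟨-, hwz⟩⟩
        · have htm : t ∈ Ioc (a j 1) (b j 1) := by
            rw [← hIoc]; exact ⟨ht, hw⟩
          exact ⟨htm.1.le, htm.2⟩
        · have ht0 := hwzero j t ht hwz
          subst ht0
          exact ⟨ha0.le, by rw [← ha0]; exact hab.le⟩
      · rintro ⟨hta, htb⟩
        rcases eq_or_lt_of_le hta with heq | hlt
        · have ht0 : t = 0 := by rw [← heq, ha0]
          subst ht0
          exact ⟨⟨le_refl _, zero_le_one⟩, Or.inr ⟨by simp, hw0 j⟩⟩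
        · have htm : t ∈ Ioc (a j 1) (b j 1) := ⟨hlt, htb⟩
          rw [← hIoc] at htm
          exact ⟨htm.1, Or.inl htm.2⟩
    · rw [if_neg hm, hSsc, ← hIoc]
      ext t
      simp only [mem_setOf_eq, hm, false_and, or_false]
  have hab_pos : ∀ j m, 1 ≤ m → m ≤ N j → a j m < b j m := by
    intro j m h1 h2
    obtain ⟨hy0, hy12, hy21⟩ := hy j m h1 h2
    exact (hgcell j _ _ hy0 hy12 hy21).1
  have hSsub : ∀ j m, 1 ≤ m → m ≤ N j → Ssc j (N j) m ⊆ Icc (a j m) (b j m) := by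
    intro j m h1 h2
    rw [hcell j m h1 h2]
    split_ifs
    · exact subset_rfl
    · exact Ioc_subset_Icc_self
  have hSmeas : ∀ j m, 1 ≤ m → m ≤ N j → MeasurableSet (Ssc j (N j) m) := by
    intro j m h1 h2; rw [hcell j m h1 h2]; split_ifs
    exacts [measurableSet_Icc, measurableSet_Ioc]
  have hSvol : ∀ j m, 1 ≤ m → m ≤ N j →
      volume (Ssc j (N j) m) = ENNReal.ofReal (b j m - a j m) := by
    intro j m h1 h2; rw [hcell j m h1 h2]; split_ifs
    exacts [Real.volume_Icc, Real.volume_Ioc]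
  have hzeta : ∀ j m, 1 ≤ m → m ≤ N j → ∃ ζ, ζ ∈ Icc (0:ℝ) 1 ∧ ζ ∈ Icc (a j m) (b j m) ∧
      b j m - a j m = ((1:ℝ)/(N j)) / lam j ζ := by
    intro j m h1 h2
    obtain ⟨hy0, hy12, hy21⟩ := hy j m h1 h2
    obtain ⟨ζ, hζ1, hζ2, hζ3⟩ := (hgcell j _ _ hy0 hy12 hy21).2.2
    refine ⟨ζ, hζ1, hζ2, ?_⟩
    rw [hζ3]
    congr 1
    rw [div_sub_div_same]
    norm_num
  have hlen : ∀ j m, 1 ≤ m → m ≤ N j → b j m - a j m ≤ min δf (dl j) := by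
    intro j m h1 h2
    obtain ⟨ζ, hζ1, -, hζ3⟩ := hzeta j m h1 h2
    rw [hζ3]
    have hl := hmlam_le j ζ hζ1
    have hlp := hmlam_pos j
    have h1N : (0:ℝ) ≤ 1/(N j) := by positivity
    calc (1:ℝ)/(N j) / lam j ζ ≤ (1:ℝ)/(N j) / mlam j := by gcongr
      _ ≤ min δf (dl j) := by
          rw [div_le_iff₀ hlp]
          calc (1:ℝ)/(N j) ≤ (min δf (dl j)) * mlam j := hNsmall j
            _ = min δf (dl j) * mlam j := rfl
  set I := Fintype.piFinset (fun j => Finset.Icc 1 (N j)) with hI_def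
  have hmemI : ∀ i : Fin n → ℕ, i ∈ I ↔ ∀ j, 1 ≤ i j ∧ i j ≤ N j := by
    intro i
    rw [hI_def, Fintype.mem_piFinset]
    simp [Finset.mem_Icc]
  have hScellpi : ∀ i : Fin n → ℕ, Scell K i = Set.univ.pi (fun j => Ssc j (N j) (i j)) := by
    intro i
    rw [hScell]
    ext x
    simp [Set.mem_univ_pi, hN_def]
  have hScellMeas : ∀ i ∈ I, MeasurableSet (Scell K i) := by
    intro i hi
    rw [hScellpi]
    exact MeasurableSet.univ_pi
      (fun j => hSmeas j (i j) ((hmemI i).mp hi j).1 ((hmemI i).mp hi j).2)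
  have hScellBox : ∀ i ∈ I, Scell K i ⊆ Box := by
    intro i hi x hx
    rw [hScellpi] at hx
    rw [hmemBox]
    intro j
    have hxj : x j ∈ Ssc j (N j) (i j) := hx j (mem_univ j)
    rw [hSsc] at hxj
    exact hxj.1
  have hScellvol : ∀ i ∈ I,
      volume (Scell K i) = ∏ j, ENNReal.ofReal (b j (i j) - a j (i j)) := by
    intro i hi
    rw [hScellpi, volume_pi_pi]
    exact Finset.prod_congr rfl
      (fun j _ => hSvol j (i j) ((hmemI i).mp hi j).1 ((hmemI i).mp hi j).2)
  have hdisj : (↑I : Set (Fin n → ℕ)).Pairwise (Function.onFun Disjoint fun i => Scell K i) := by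
    intro i hi i' hi' hne
    obtain ⟨j, hj⟩ := Function.ne_iff.mp hne
    rw [Finset.mem_coe] at hi hi'
    have hb1 := (hmemI i).mp hi j
    have hb2 := (hmemI i').mp hi' j
    have hdisj' : Disjoint (Scell K i) (Scell K i') := by
      apply Set.disjoint_left.mpr
      intro x hx hx'
      rw [hScellpi] at hx hx'
      have h1 : x j ∈ Ssc j (N j) (i j) := hx j (mem_univ j)
      have h2 : x j ∈ Ssc j (N j) (i' j) := hx' j (mem_univ j)
      rw [hSsc] at h1 h2
      have key : ∀ m m' : ℕ, 1 ≤ m → m < m' → m' ≤ N j →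
          (w j (x j) ∈ Ioc (((m:ℝ)-1)/(N j)) ((m:ℝ)/(N j)) ∨ (m = 1 ∧ w j (x j) = 0)) →
          (w j (x j) ∈ Ioc (((m':ℝ)-1)/(N j)) ((m':ℝ)/(N j)) ∨ (m' = 1 ∧ w j (x j) = 0)) →
          False := by
        intro m m' hm1 hmm' hm'N hA hB
        have hcast : (m:ℝ) ≤ (m':ℝ) - 1 := by
          have hle : m + 1 ≤ m' := hmm'
          have : ((m:ℝ) + 1) ≤ (m':ℝ) := by exact_mod_cast hle
          linarith
        rcases hB with hB | ⟨hB1, hB2⟩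
        · have hlb : ((m':ℝ)-1)/(N j) < w j (x j) := hB.1
          have hge : ((m:ℝ))/(N j) ≤ ((m':ℝ)-1)/(N j) :=
            (div_le_div_iff_of_pos_right (hNpos j)).mpr hcast
          have h0le : (0:ℝ) ≤ ((m':ℝ)-1)/(N j) := by
            apply div_nonneg _ (hNpos j).le
            have : (1:ℝ) ≤ (m':ℝ) := by exact_mod_cast Nat.one_le_of_lt hmm'
            linarith
          rcases hA with hA | hA
          · linarith [hA.2]
          · linarith [hA.2.symm ▸ hlb, hA.2]
        · omega
      rcases lt_or_gt_of_ne hj with hlt | hgt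
      · exact key (i j) (i' j) hb1.1 hlt hb2.2 h1.2 h2.2
      · exact key (i' j) (i j) hb2.1 hgt hb1.2 h2.2 h1.2
    exact hdisj'
  have hcover : ⋃ i ∈ I, Scell K i = Box := by
    apply Set.Subset.antisymm
    · intro x hx
      simp only [mem_iUnion] at hx
      obtain ⟨i, hi, hxi⟩ := hx
      exact hScellBox i hi hxi
    · intro x hx
      have hxj : ∀ j, x j ∈ Icc (0:ℝ) 1 := (hmemBox x).mp hx
      set i : Fin n → ℕ := fun j => if w j (x j) = 0 then 1 else ⌈w j (x j) * N j⌉₊ with hi_def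
      have hkey : ∀ j, (1 ≤ i j ∧ i j ≤ N j) ∧ x j ∈ Ssc j (N j) (i j) := by
        intro j
        have hw01 := hwrange j (x j) (hxj j)
        by_cases h0 : w j (x j) = 0
        · have hij1 : i j = 1 := by rw [hi_def]; simp [h0]
          rw [hij1, hSsc]
          exact ⟨⟨le_refl 1, hN1 j⟩, ⟨hxj j, Or.inr ⟨rfl, h0⟩⟩⟩
        · have hypos : 0 < w j (x j) := lt_of_le_of_ne hw01.1 (Ne.symm h0)
          have hij : i j = ⌈w j (x j) * N j⌉₊ := by rw [hi_def]; simp [h0]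
          have h1 : 1 ≤ i j := by
            rw [hij, Nat.one_le_ceil_iff]
            exact mul_pos hypos (hNpos j)
          have h2 : i j ≤ N j := by
            rw [hij]
            apply Nat.ceil_le.mpr
            calc w j (x j) * N j ≤ 1 * N j := by
                  apply mul_le_mul_of_nonneg_right hw01.2 (hNpos j).le
              _ = (N j : ℝ) := one_mul _
          refine ⟨⟨h1, h2⟩, ?_⟩
          rw [hSsc]
          refine ⟨hxj j, Or.inl ⟨?_, ?_⟩⟩
          · rw [hij, div_lt_iff₀ (hNpos j)]
            have hceil := Nat.ceil_lt_add_one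
              (show (0:ℝ) ≤ w j (x j) * N j from (mul_pos hypos (hNpos j)).le)
            have : (⌈w j (x j) * ↑(N j)⌉₊ : ℝ) < w j (x j) * ↑(N j) + 1 := hceil
            linarith
          · rw [hij, le_div_iff₀ (hNpos j)]
            exact Nat.le_ceil _
      refine Set.mem_biUnion ((hmemI i).mpr (fun j => (hkey j).1)) ?_
      rw [hScell]
      exact fun j => (hkey j).2
  set p : (Fin n → ℕ) → ℝ := fun i => (μ (X ⁻¹' Scell K i)).toReal with hp_def
  have hpint : ∀ i ∈ I, p i = ∫ x in Scell K i, f x := fun i hi =>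
    hmeasInt _ (hScellMeas i hi) (hScellBox i hi)
  have hIntOn : ∀ i ∈ I, IntegrableOn f (Scell K i) := fun i hi =>
    hIntf.mono_set (hScellBox i hi)
  have hbiun : ∀ (F : (Fin n → ℝ) → ℝ), IntegrableOn F Box →
      ∫ x in Box, F x = ∑ i ∈ I, ∫ x in Scell K i, F x := by
    intro F hF
    rw [← hcover]
    exact integral_biUnion_finset I hScellMeas hdisj
      (fun i hi => hF.mono_set (hScellBox i hi))
  have hpsum : ∑ i ∈ I, p i = 1 := by
    rw [Finset.sum_congr rfl hpint, ← hbiun f hIntf, hintBox]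
  set L : (Fin n → ℕ) → ℝ := fun i => Real.logb 2 (p i) + ∑ j, Real.logb 2 ((N j : ℝ))
    with hL_def
  have hF6 : ∀ i ∈ I, ∀ x ∈ Scell K i, |T x - L i| ≤ ε' * C := by
    intro i hi x hxS
    have hij : ∀ j, 1 ≤ i j ∧ i j ≤ N j := (hmemI i).mp hi
    have hxB : x ∈ Box := hScellBox i hi hxS
    have hxIcc : ∀ j, x j ∈ Icc (0:ℝ) 1 := (hmemBox x).mp hxB
    have hfx : mf ≤ f x := hx₀min x hxB
    have hxab : ∀ j, x j ∈ Icc (a j (i j)) (b j (i j)) := by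
      intro j
      have hm : x j ∈ Ssc j (N j) (i j) := by
        rw [hScellpi] at hxS; exact hxS j (mem_univ j)
      exact hSsub j (i j) (hij j).1 (hij j).2 hm
    choose ζ hζ01 hζab hζeq using fun j => hzeta j (i j) (hij j).1 (hij j).2
    set V : ℝ := ∏ j, (b j (i j) - a j (i j)) with hV_def
    have hbapos : ∀ j, 0 < b j (i j) - a j (i j) :=
      fun j => sub_pos.mpr (hab_pos j (i j) (hij j).1 (hij j).2)
    have hVpos : 0 < V := Finset.prod_pos (fun j _ => hbapos j)
    have hvol : (volume (Scell K i)).toReal = V := by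
      rw [hScellvol i hi, ENNReal.toReal_prod, hV_def]
      exact Finset.prod_congr rfl (fun j _ => ENNReal.toReal_ofReal (hbapos j).le)
    have hvolfin : volume (Scell K i) < ⊤ := by
      rw [hScellvol i hi]
      exact ENNReal.prod_lt_top (fun j _ => ENNReal.ofReal_lt_top)
    have hfbound : ∀ y ∈ Scell K i, f x - ε' ≤ f y ∧ f y ≤ f x + ε' := by
      intro y hy
      have hyB : y ∈ Box := hScellBox i hi hy
      have hyab : ∀ j, y j ∈ Icc (a j (i j)) (b j (i j)) := by
        intro j
        have hm : y j ∈ Ssc j (N j) (i j) := by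
          rw [hScellpi] at hy; exact hy j (mem_univ j)
        exact hSsub j (i j) (hij j).1 (hij j).2 hm
      have hdd : dist x y ≤ δf := by
        rw [dist_pi_le_iff hδf.le]
        intro j
        rw [Real.dist_eq]
        have h1 := hxab j; have h2 := hyab j
        have hl := hlen j (i j) (hij j).1 (hij j).2
        have habs : |x j - y j| ≤ b j (i j) - a j (i j) := abs_sub_le_iff.mpr
          ⟨by linarith [h1.1, h1.2, h2.1, h2.2], by linarith [h1.1, h1.2, h2.1, h2.2]⟩
        exact habs.trans (hl.trans (min_le_left _ _))
      have hdf := hδfspec x hxB y hyB hdd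
      rw [Real.dist_eq] at hdf
      obtain ⟨hu, hv⟩ := abs_le.mp hdf
      constructor <;> linarith
    have hintconst : ∀ c : ℝ, IntegrableOn (fun _ => c) (Scell K i) volume :=
      fun c => integrableOn_const hvolfin.ne
    have hplow : (f x - ε') * V ≤ p i := by
      rw [hpint i hi]
      calc (f x - ε') * V = ∫ _ in Scell K i, (f x - ε') := by
            rw [setIntegral_const, measureReal_def, hvol, smul_eq_mul, mul_comm]
        _ ≤ ∫ y in Scell K i, f y := setIntegral_mono_on (hintconst _)
            (hIntOn i hi) (hScellMeas i hi) (fun y hy => (hfbound y hy).1)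
    have hpup : p i ≤ (f x + ε') * V := by
      rw [hpint i hi]
      calc ∫ y in Scell K i, f y ≤ ∫ _ in Scell K i, (f x + ε') :=
            setIntegral_mono_on (hIntOn i hi) (hintconst _)
              (hScellMeas i hi) (fun y hy => (hfbound y hy).2)
        _ = (f x + ε') * V := by rw [setIntegral_const, measureReal_def, hvol, smul_eq_mul, mul_comm]
    have hfxl : mf/2 ≤ f x - ε' := by linarith
    have hppos : 0 < p i := lt_of_lt_of_le (mul_pos (by linarith) hVpos) hplow
    have hlb1 : Real.logb 2 ((f x - ε') * V) ≤ Real.logb 2 (p i) :=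
      Real.logb_le_logb_of_le one_lt_two (mul_pos (by linarith) hVpos) hplow
    have hlb2 : Real.logb 2 (p i) ≤ Real.logb 2 ((f x + ε') * V) :=
      Real.logb_le_logb_of_le one_lt_two hppos hpup
    have hexp : ∀ c : ℝ, 0 < c → Real.logb 2 (c * V) =
        Real.logb 2 c + (-∑ j, Real.logb 2 ((N j : ℝ)) - ∑ j, Real.logb 2 (lam j (ζ j))) := by
      intro c hc
      rw [hV_def, logb_mul_prod Finset.univ c _ hc (fun j _ => hbapos j)]
      congr 1
      have hterm : ∀ j : Fin n, Real.logb 2 (b j (i j) - a j (i j)) =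
          -Real.logb 2 ((N j : ℝ)) - Real.logb 2 (lam j (ζ j)) := by
        intro j
        rw [hζeq j, Real.logb_div (one_div_ne_zero (hNpos j).ne')
          (hlam_pos j (ζ j) (hζ01 j)).ne', one_div, Real.logb_inv]
      rw [Finset.sum_congr rfl (fun j _ => hterm j), Finset.sum_sub_distrib,
        ← Finset.sum_neg_distrib]
    have hlamclose : ∀ j, |Real.logb 2 (lam j (ζ j)) - Real.logb 2 (lam j (x j))| ≤
        ε' / (mlam j * Real.log 2) := by
      intro j
      have hdd : dist (ζ j) (x j) ≤ dl j := by
        rw [Real.dist_eq]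
        have h1 := hζab j; have h2 := hxab j
        have hl := hlen j (i j) (hij j).1 (hij j).2
        have habs : |ζ j - x j| ≤ b j (i j) - a j (i j) := abs_sub_le_iff.mpr
          ⟨by linarith [h1.1, h1.2, h2.1, h2.2], by linarith [h1.1, h1.2, h2.1, h2.2]⟩
        exact habs.trans (hl.trans (min_le_right _ _))
      have hcl := hdlspec j (ζ j) (hζ01 j) (x j) (hxIcc j) hdd
      rw [Real.dist_eq] at hcl
      calc |Real.logb 2 (lam j (ζ j)) - Real.logb 2 (lam j (x j))| ≤
          |lam j (ζ j) - lam j (x j)| / (mlam j * Real.log 2) :=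
            abs_logb_sub_le_of_le (hmlam_pos j) (hmlam_le j _ (hζ01 j)) (hmlam_le j _ (hxIcc j))
        _ ≤ ε' / (mlam j * Real.log 2) :=
            (div_le_div_iff_of_pos_right (mul_pos (hmlam_pos j) hlog2)).mpr hcl
    have hfclose_dn : |Real.logb 2 (f x) - Real.logb 2 (f x - ε')| ≤
        ε' / ((mf/2) * Real.log 2) := by
      have h := abs_logb_sub_le_of_le (c := mf/2) (u := f x) (v := f x - ε')
        (by linarith) (by linarith) hfxl
      calc |Real.logb 2 (f x) - Real.logb 2 (f x - ε')| ≤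
          |f x - (f x - ε')| / ((mf/2) * Real.log 2) := h
        _ = ε' / ((mf/2) * Real.log 2) := by
            rw [(by ring : f x - (f x - ε') = ε'), abs_of_pos hε'pos]
    have hfclose_up : |Real.logb 2 (f x + ε') - Real.logb 2 (f x)| ≤
        ε' / ((mf/2) * Real.log 2) := by
      have h := abs_logb_sub_le_of_le (c := mf/2) (u := f x + ε') (v := f x)
        (by linarith) (by linarith) (by linarith)
      calc |Real.logb 2 (f x + ε') - Real.logb 2 (f x)| ≤
          |(f x + ε') - f x| / ((mf/2) * Real.log 2) := h
        _ = ε' / ((mf/2) * Real.log 2) := by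
            rw [(by ring : (f x + ε') - f x = ε'), abs_of_pos hε'pos]
    have hsumbound : |∑ j, Real.logb 2 (lam j (ζ j)) - ∑ j, Real.logb 2 (lam j (x j))| ≤
        ∑ j, ε' / (mlam j * Real.log 2) := by
      rw [← Finset.sum_sub_distrib]
      exact (Finset.abs_sum_le_sum_abs _ _).trans
        (Finset.sum_le_sum fun j _ => hlamclose j)
    have hCeq : ε' * C = ε' / ((mf/2) * Real.log 2) + ∑ j, ε' / (mlam j * Real.log 2) := by
      rw [hC_def, mul_add, Finset.mul_sum]
      congr 1
      · rw [mul_one_div]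
      · exact Finset.sum_congr rfl fun j _ => by rw [mul_one_div]
    rw [hexp (f x - ε') (by linarith)] at hlb1
    rw [hexp (f x + ε') (by linarith)] at hlb2
    obtain ⟨hs1, hs2⟩ := abs_le.mp hsumbound
    obtain ⟨hd1, hd2⟩ := abs_le.mp hfclose_dn
    obtain ⟨hu1, hu2⟩ := abs_le.mp hfclose_up
    rw [abs_le]
    simp only [hL_def, hT_def]
    constructor
    · rw [hCeq]; linarith
    · rw [hCeq]; linarith
  -- assembly
  have hHp : H K = -∑ i ∈ I, p i * Real.logb 2 (p i) := hH K
  have hstep1 : H K - ∑ j, Real.logb 2 ((N j : ℝ)) = -∑ i ∈ I, p i * L i := by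
    rw [hHp]
    have hLs : ∑ i ∈ I, p i * L i = ∑ i ∈ I, p i * Real.logb 2 (p i) +
        (∑ i ∈ I, p i) * (∑ j, Real.logb 2 ((N j : ℝ))) := by
      rw [Finset.sum_mul, ← Finset.sum_add_distrib]
      apply Finset.sum_congr rfl
      intro i _
      simp only [hL_def]
      ring
    rw [hLs, hpsum, one_mul]
    ring
  have hstep2 : ∀ i ∈ I, p i * L i = ∫ x in Scell K i, f x * L i := by
    intro i hi
    rw [integral_mul_const, ← hpint i hi]
  have hstep3 : ∫ x in Box, f x * T x = ∑ i ∈ I, ∫ x in Scell K i, f x * T x :=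
    hbiun _ hIntfT
  have hmain : |(H K - ∑ j, Real.logb 2 ((N j : ℝ))) - (-∫ x in Box, f x * T x)| ≤ ε/4 := by
    rw [hstep1, hstep3]
    have hre : -∑ i ∈ I, p i * L i - -∑ i ∈ I, ∫ x in Scell K i, f x * T x
        = ∑ i ∈ I, ((∫ x in Scell K i, f x * T x) - ∫ x in Scell K i, f x * L i) := by
      rw [Finset.sum_sub_distrib, Finset.sum_congr rfl hstep2]
      ring
    rw [hre]
    calc |∑ i ∈ I, ((∫ x in Scell K i, f x * T x) - ∫ x in Scell K i, f x * L i)|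
        ≤ ∑ i ∈ I, |(∫ x in Scell K i, f x * T x) - ∫ x in Scell K i, f x * L i| :=
          Finset.abs_sum_le_sum_abs _ _
      _ ≤ ∑ i ∈ I, (ε' * C) * p i := by
          apply Finset.sum_le_sum
          intro i hi
          have hintT : IntegrableOn (fun x => f x * T x) (Scell K i) :=
            hIntfT.mono_set (hScellBox i hi)
          have hintL : IntegrableOn (fun x => f x * L i) (Scell K i) :=
            (hIntOn i hi).mul_const _
          rw [← integral_sub hintT hintL]
          calc |∫ x in Scell K i, (f x * T x - f x * L i)|
              ≤ ∫ x in Scell K i, |f x * T x - f x * L i| := by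
                rw [← Real.norm_eq_abs]
                exact (norm_integral_le_integral_norm _).trans
                  (le_of_eq (by simp [Real.norm_eq_abs]))
            _ ≤ ∫ x in Scell K i, f x * (ε' * C) := by
                apply setIntegral_mono_on (hintT.sub hintL).abs
                  ((hIntOn i hi).mul_const _) (hScellMeas i hi)
                intro x hx
                show |f x * T x - f x * L i| ≤ f x * (ε' * C)
                rw [← mul_sub, abs_mul, abs_of_nonneg (hf0 x)]
                exact mul_le_mul_of_nonneg_left (hF6 i hi x hx) (hf0 x)
            _ = (ε' * C) * p i := by rw [integral_mul_const, ← hpint i hi]; ring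
      _ = (ε' * C) * ∑ i ∈ I, p i := by rw [Finset.mul_sum]
      _ = ε' * C := by rw [hpsum, mul_one]
      _ ≤ ε/4 := hε'C
  calc |H K - ∑ j, Real.logb 2 ((N j : ℝ)) - -∫ x in Box, f x * T x| ≤ ε/4 := hmain
    _ < ε := by linarith
end

section
/- Let c ∈ ℝ and let h : {1, 2, 3, …} → ℝ satisfy lim_{K→∞} ( h(K) − log₂ K ) = c. For R ∈ ℝ with R ≥ h(1), the set {K ≥ 1 : h(K) ≤ R} is nonempty and bounded; let K(R) be its maximum. Then lim_{R→∞} ( log₂ K(R) − (R − c) ) = 0. -/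
open Filter
open scoped Topology

/-- Lemma 2 (abstract form): if the output entropy `h(K)` of a quantizer sequence
satisfies `h(K) = log₂ K + c + o(1)`, then for every rate `R ≥ h(1)` the set
`{K ≥ 1 : h(K) ≤ R}` is nonempty and bounded, and its maximum `K(R)` satisfies
`log₂ K(R) = R − c + o(1)` as `R → ∞`. -/
theorem resolution_rate_asymptotics (c : ℝ) (h : ℕ → ℝ)
    (hlim : Tendsto (fun K : ℕ => h K - Real.logb 2 K) atTop (𝓝 c)) :
    (∀ R : ℝ, h 1 ≤ R →
      ({K : ℕ | 1 ≤ K ∧ h K ≤ R}.Nonempty ∧ BddAbove {K : ℕ | 1 ≤ K ∧ h K ≤ R})) ∧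
    (∀ KR : ℝ → ℕ, (∀ R : ℝ, h 1 ≤ R → IsGreatest {K : ℕ | 1 ≤ K ∧ h K ≤ R} (KR R)) →
      Tendsto (fun R : ℝ => Real.logb 2 (KR R) - (R - c)) atTop (𝓝 0)) := by
  have hlogb : Tendsto (fun K : ℕ => Real.logb 2 (K : ℝ)) atTop atTop :=
    (Real.tendsto_logb_atTop (by norm_num)).comp tendsto_natCast_atTop_atTop
  have hhtop : Tendsto h atTop atTop := by
    have := hlim.add_atTop hlogb
    simpa using this
  -- gap between consecutive logs tends to 0
  have hgap : Tendsto (fun K : ℕ => Real.logb 2 ((K : ℝ) + 1) - Real.logb 2 (K : ℝ))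
      atTop (𝓝 0) := by
    have h1 : Tendsto (fun K : ℕ => (1 + 1 / (K : ℝ))) atTop (𝓝 1) := by
      have := tendsto_one_div_atTop_nhds_zero_nat (𝕜 := ℝ)
      simpa using (tendsto_const_nhds.add this)
    have hc : ContinuousAt (fun x : ℝ => Real.logb 2 x) 1 := by
      simp only [Real.logb]
      exact (Real.continuousAt_log one_ne_zero).div_const _
    have h2 : Tendsto (fun K : ℕ => Real.logb 2 (1 + 1 / (K : ℝ))) atTop (𝓝 0) := by
      have := hc.tendsto.comp h1
      simpa [Function.comp_def] using this
    refine h2.congr' ?_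
    filter_upwards [eventually_ge_atTop 1] with K hK
    have hK0 : (K : ℝ) ≠ 0 := by positivity
    have hK1 : (K : ℝ) + 1 ≠ 0 := by positivity
    have : (1 : ℝ) + 1 / K = ((K : ℝ) + 1) / K := by field_simp
    rw [this, Real.logb_div hK1 hK0]
  constructor
  · intro R hR
    refine ⟨⟨1, le_refl 1, hR⟩, ?_⟩
    have := tendsto_atTop.mp hhtop (R + 1)
    rw [eventually_atTop] at this
    obtain ⟨N, hN⟩ := this
    refine BddAbove.mono ?_ (Set.finite_Iio N).bddAbove
    intro K hK
    by_contra hlt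
    have hKN : N ≤ K := not_lt.mp hlt
    have := hN K hKN
    have := hK.2
    linarith
  · intro KR hKR
    have hKRtop : Tendsto (fun R => KR R) atTop atTop := by
      rw [tendsto_atTop]
      intro b
      filter_upwards [eventually_ge_atTop (h 1), eventually_ge_atTop (h (max b 1))]
        with R h1 h2
      have hmem : max b 1 ∈ {K : ℕ | 1 ≤ K ∧ h K ≤ R} := ⟨le_max_right _ _, h2⟩
      exact le_trans (le_max_left b 1) ((hKR R h1).2 hmem)
    rw [Metric.tendsto_atTop]
    intro ε hε
    obtain ⟨N₁, hN₁⟩ := Metric.tendsto_atTop.mp hlim (ε / 3) (by linarith)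
    obtain ⟨N₂, hN₂⟩ := Metric.tendsto_atTop.mp hgap (ε / 3) (by linarith)
    have hev : ∀ᶠ R in atTop, h 1 ≤ R ∧ max (max N₁ N₂) 1 ≤ KR R :=
      (eventually_ge_atTop (h 1)).and (hKRtop.eventually_ge_atTop _)
    rw [eventually_atTop] at hev
    obtain ⟨M, hM⟩ := hev
    refine ⟨M, fun R hRM => ?_⟩
    obtain ⟨hR1, hRK⟩ := hM R hRM
    set K := KR R with hKdef
    have hK1 : 1 ≤ K := le_trans (le_max_right _ _) hRK
    have hKN₁ : N₁ ≤ K := le_trans (le_trans (le_max_left _ _) (le_max_left _ _)) hRK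
    have hKN₂ : N₂ ≤ K := le_trans (le_trans (le_max_right _ _) (le_max_left _ _)) hRK
    have hmem := (hKR R hR1).1
    have hhK : h K ≤ R := hmem.2
    have hnot : R < h (K + 1) := by
      by_contra h'
      push_neg at h'
      have : K + 1 ≤ K := (hKR R hR1).2 ⟨Nat.le_add_left 1 K, h'⟩
      omega
    have e1 : |h K - Real.logb 2 K - c| < ε / 3 := by
      have := hN₁ K hKN₁
      rwa [Real.dist_eq] at this
    have e2 : |h (K + 1) - Real.logb 2 ((K : ℝ) + 1) - c| < ε / 3 := by
      have := hN₁ (K + 1) (le_trans hKN₁ (Nat.le_succ K))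
      rw [Real.dist_eq] at this
      convert this using 3
      push_cast
      ring
    have e3 : |Real.logb 2 ((K : ℝ) + 1) - Real.logb 2 (K : ℝ)| < ε / 3 := by
      have := hN₂ K hKN₂
      rwa [Real.dist_eq, sub_zero] at this
    rw [Real.dist_eq, sub_zero]
    rw [abs_lt] at e1 e2 e3 ⊢
    constructor <;> linarith
end

section
/- Let X be a random variable with density f supported on [0,1], and let γ : [0,1] → (0,∞) be measurable with 0 < ∫_0^1 γ(t) dt < ∞ and E[|ln γ(X)|] < ∞. Then for every measurable λ : [0,1] → (0,∞) with ∫_0^1 λ(t) dt = 1 and E[|ln λ(X)|] < ∞, one has E[(γ(X)/λ(X))²] · exp( 2·E[ln λ(X)] ) ≥ exp( 2·E[ln γ(X)] ), where E[(γ(X)/λ(X))²] is allowed to be +∞. Moreover, for the choice λ*(x) = γ(x)/∫_0^1 γ(t) dt, equality holds. -/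
open MeasureTheory Set
open scoped ENNReal NNReal

/-- Jensen-inequality point-density optimization (variable-rate part of Theorem 3):
for `X` with density `f` on `[0,1]` and a positive sensitivity profile `γ`,
`E[(γ(X)/λ(X))²]·exp(2 E[ln λ(X)]) ≥ exp(2 E[ln γ(X)])` for every point density `lam`
with `∫₀¹ lam = 1` and `E[|ln λ(X)|] < ∞`, with equality for `λ* = γ/∫₀¹ γ`. -/
theorem jensen_point_density_optimization (f γ : ℝ → ℝ)
    (hf_meas : Measurable f) (hf_nonneg : ∀ x, 0 ≤ f x)
    (hf_prob : (∫ x in Icc (0 : ℝ) 1, f x) = 1)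
    (hγ_meas : Measurable γ) (hγ_pos : ∀ x ∈ Icc (0 : ℝ) 1, 0 < γ x)
    (hγ_int : IntegrableOn γ (Icc 0 1) volume)
    (hγ_int_pos : 0 < ∫ t in Icc (0 : ℝ) 1, γ t)
    (hlogγ : IntegrableOn (fun x => f x * Real.log (γ x)) (Icc 0 1) volume) :
    (∀ lam : ℝ → ℝ, Measurable lam → (∀ x ∈ Icc (0 : ℝ) 1, 0 < lam x) →
      (∫ t in Icc (0 : ℝ) 1, lam t) = 1 →
      IntegrableOn (fun x => f x * Real.log (lam x)) (Icc 0 1) volume →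
      ENNReal.ofReal (Real.exp (2 * ∫ x in Icc (0 : ℝ) 1, f x * Real.log (γ x))) ≤
        (∫⁻ x in Icc (0 : ℝ) 1, ENNReal.ofReal (f x * (γ x / lam x) ^ 2)) *
          ENNReal.ofReal (Real.exp (2 * ∫ x in Icc (0 : ℝ) 1, f x * Real.log (lam x)))) ∧
    ((∫⁻ x in Icc (0 : ℝ) 1,
        ENNReal.ofReal (f x * (γ x / (γ x / ∫ t in Icc (0 : ℝ) 1, γ t)) ^ 2)) *
      ENNReal.ofReal (Real.exp (2 * ∫ x in Icc (0 : ℝ) 1,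
        f x * Real.log (γ x / ∫ t in Icc (0 : ℝ) 1, γ t)))
      = ENNReal.ofReal (Real.exp (2 * ∫ x in Icc (0 : ℝ) 1, f x * Real.log (γ x)))) := by
  have hIcc : MeasurableSet (Icc (0:ℝ) 1) := measurableSet_Icc
  set μ₀ := volume.restrict (Icc (0:ℝ) 1) with hμ₀
  -- f is integrable on [0,1]
  have hf_int : IntegrableOn f (Icc 0 1) volume := by
    by_contra h
    rw [MeasureTheory.integral_undef h] at hf_prob
    norm_num at hf_prob
  set A := ∫ x in Icc (0 : ℝ) 1, f x * Real.log (γ x) with hA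
  set w : ℝ → NNReal := fun x => (f x).toNNReal with hw
  have hw_meas : Measurable w := hf_meas.real_toNNReal
  have hw_eq : ∀ x, ((w x : ℝ≥0∞)) = ENNReal.ofReal (f x) := fun x => rfl
  set P := μ₀.withDensity (fun x => (w x : ℝ≥0∞)) with hP
  have hsmul : ∀ (x r : ℝ), w x • r = f x * r := by
    intro x r
    simp [hw, NNReal.smul_def, Real.coe_toNNReal _ (hf_nonneg x)]
  have hProb : IsProbabilityMeasure P := by
    constructor
    rw [hP, withDensity_apply _ MeasurableSet.univ, Measure.restrict_univ]
    have := MeasureTheory.ofReal_integral_eq_lintegral_ofReal hf_int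
      (Filter.Eventually.of_forall fun x => hf_nonneg x)
    rw [hf_prob] at this
    simp only [hμ₀, hw_eq]
    rw [← this]
    simp
  have hPae : ∀ᵐ x ∂P, x ∈ Icc (0:ℝ) 1 :=
    (withDensity_absolutelyContinuous μ₀ _).ae_le (ae_restrict_mem hIcc)
  constructor
  · intro lam hlam_meas hlam_pos hlam_int hloglam
    set B := ∫ x in Icc (0 : ℝ) 1, f x * Real.log (lam x) with hB
    set h : ℝ → ℝ := fun x => f x * (γ x / lam x) ^ 2 with hh
    by_cases hL : (∫⁻ x in Icc (0 : ℝ) 1, ENNReal.ofReal (h x)) = ⊤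
    · rw [hL, ENNReal.top_mul (by positivity)]
      exact le_top
    -- h integrable
    have hh_meas : Measurable h := (hf_meas.mul ((hγ_meas.div hlam_meas).pow_const 2))
    have hh_nonneg : ∀ x, 0 ≤ h x := fun x => mul_nonneg (hf_nonneg x) (sq_nonneg _)
    have hh_int : IntegrableOn h (Icc 0 1) volume := by
      refine ⟨hh_meas.aestronglyMeasurable, ?_⟩
      rw [hasFiniteIntegral_iff_ofReal (Filter.Eventually.of_forall hh_nonneg)]
      exact lt_top_iff_ne_top.2 hL
    have hL_eq : (∫⁻ x in Icc (0 : ℝ) 1, ENNReal.ofReal (h x)) = ENNReal.ofReal (∫ x in Icc (0:ℝ) 1, h x) :=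
      (MeasureTheory.ofReal_integral_eq_lintegral_ofReal hh_int
        (Filter.Eventually.of_forall hh_nonneg)).symm
    set g : ℝ → ℝ := fun x => 2 * (Real.log (γ x) - Real.log (lam x)) with hg
    have hfg_int : Integrable (fun x => f x * g x) μ₀ := by
      have : Integrable (fun x => 2 * (f x * Real.log (γ x)) - 2 * (f x * Real.log (lam x))) μ₀ :=
        ((hlogγ.const_mul 2).sub (hloglam.const_mul 2))
      refine this.congr (Filter.Eventually.of_forall fun x => ?_)
      simp only [hg]; ring
    have hg_int : Integrable g P := by
      rw [hP, integrable_withDensity_iff_integrable_smul hw_meas]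
      refine hfg_int.congr (Filter.Eventually.of_forall fun x => ?_)
      simp only [hsmul]
    have hexpg_eq : ∀ᵐ x ∂P, Real.exp (g x) = (γ x / lam x) ^ 2 := by
      filter_upwards [hPae] with x hx
      have hγx := hγ_pos x hx
      have hlx := hlam_pos x hx
      have hel : Real.exp (Real.log (γ x) - Real.log (lam x)) = γ x / lam x := by
        rw [← Real.log_div hγx.ne' hlx.ne', Real.exp_log (div_pos hγx hlx)]
      simp only [hg, two_mul, Real.exp_add, hel, pow_two]
    have hexpg_int : Integrable (fun x => Real.exp (g x)) P := by
      have h2 : Integrable (fun x => (γ x / lam x) ^ 2) P := by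
        rw [hP, integrable_withDensity_iff_integrable_smul hw_meas]
        refine hh_int.congr (Filter.Eventually.of_forall fun x => ?_)
        simp only [hsmul, hh]
      exact h2.congr (hexpg_eq.mono fun x hx => hx.symm)
    have hjensen := convexOn_exp.map_integral_le (μ := P) Real.continuous_exp.continuousOn
      isClosed_univ (Filter.Eventually.of_forall fun x => trivial) hg_int
      (hexpg_int.congr (Filter.Eventually.of_forall fun x => rfl))
    have hintg : ∫ x, g x ∂P = 2 * A - 2 * B := by
      rw [hP, integral_withDensity_eq_integral_smul hw_meas]
      have heq : ∫ x, w x • g x ∂μ₀ = ∫ x, (2 * (f x * Real.log (γ x)) - 2 * (f x * Real.log (lam x))) ∂μ₀ := by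
        refine integral_congr_ae (Filter.Eventually.of_forall fun x => ?_)
        simp only [hsmul, hg]; ring
      rw [heq, integral_sub (hlogγ.const_mul 2) (hloglam.const_mul 2),
        integral_const_mul, integral_const_mul]
    have hintexp : ∫ x, Real.exp (g x) ∂P = ∫ x in Icc (0:ℝ) 1, h x := by
      rw [integral_congr_ae hexpg_eq, hP, integral_withDensity_eq_integral_smul hw_meas]
      refine integral_congr_ae (Filter.Eventually.of_forall fun x => ?_)
      simp only [hsmul, hh]
    rw [hintg, hintexp] at hjensen
    rw [hL_eq, ← ENNReal.ofReal_mul (integral_nonneg fun x => hh_nonneg x)]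
    apply ENNReal.ofReal_le_ofReal
    calc Real.exp (2 * A) = Real.exp (2 * A - 2 * B) * Real.exp (2 * B) := by
          rw [← Real.exp_add]; ring_nf
      _ ≤ (∫ x in Icc (0:ℝ) 1, h x) * Real.exp (2 * B) :=
          mul_le_mul_of_nonneg_right hjensen (Real.exp_pos _).le
  · set c := ∫ t in Icc (0 : ℝ) 1, γ t with hc
    have hcpos : 0 < c := hγ_int_pos
    have hc0 : c ≠ 0 := ne_of_gt hcpos
    have h1 : (∫⁻ x in Icc (0 : ℝ) 1, ENNReal.ofReal (f x * (γ x / (γ x / c)) ^ 2))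
        = ENNReal.ofReal (c ^ 2) := by
      have hcongr : ∀ᵐ x ∂μ₀, ENNReal.ofReal (f x * (γ x / (γ x / c)) ^ 2)
          = ENNReal.ofReal (f x * c ^ 2) := by
        filter_upwards [ae_restrict_mem hIcc] with x hx
        have hne : γ x ≠ 0 := (hγ_pos x hx).ne'
        have : γ x / (γ x / c) = c := by
          rw [div_div_eq_mul_div, mul_comm, mul_div_assoc, div_self hne, mul_one]
        rw [this]
      rw [lintegral_congr_ae hcongr,
        ← MeasureTheory.ofReal_integral_eq_lintegral_ofReal (hf_int.mul_const _)
          (Filter.Eventually.of_forall fun x => mul_nonneg (hf_nonneg x) (sq_nonneg c))]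
      rw [integral_mul_const, hf_prob, one_mul]
    have h2 : (∫ x in Icc (0 : ℝ) 1, f x * Real.log (γ x / c)) = A - Real.log c := by
      have hcongr : ∀ᵐ x ∂μ₀, f x * Real.log (γ x / c)
          = f x * Real.log (γ x) - f x * Real.log c := by
        filter_upwards [ae_restrict_mem hIcc] with x hx
        rw [Real.log_div (hγ_pos x hx).ne' hc0, mul_sub]
      rw [integral_congr_ae hcongr, integral_sub hlogγ (hf_int.mul_const _),
        integral_mul_const, hf_prob, one_mul]
    rw [h1, h2]
    have hexp : Real.exp (2 * (A - Real.log c)) = Real.exp (2 * A) / c ^ 2 := by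
      rw [mul_sub, Real.exp_sub]
      congr 1
      rw [two_mul, Real.exp_add, Real.exp_log hcpos, pow_two]
    rw [hexp, ← ENNReal.ofReal_mul (sq_nonneg c)]
    rw [mul_div_cancel₀ _ (pow_ne_zero 2 hc0)]
end

section
/- Let n ≥ 1. For each j ∈ {1,…,n} let f_j be a probability density on [0,1] and γ_j : [0,1] → [0,∞) measurable with 0 < ∫_0^1 (f_j(t)·γ_j(t)²)^{1/3} dt < ∞. Then for every R ∈ ℝ, all α₁,…,αₙ > 0 with ∑_j α_j = 1, and all measurable λ_j : [0,1] → [0,∞) with ∫_0^1 λ_j = 1, one has ∑_{j=1}^n (1/12)·2^{−2α_j R} · ∫_0^1 f_j(x)·γ_j(x)²/λ_j(x)² dx ≥ (n/12) · ( ∏_{j=1}^n ‖γ_j² f_j‖_{1/3} )^{1/n} · 2^{−2R/n}, where ‖u‖_{1/3} := (∫_0^1 u(t)^{1/3} dt)³ and the integrals ∫ f_j γ_j²/λ_j² take values in [0,∞]. -/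
open MeasureTheory Set
open scoped BigOperators ENNReal

/-- Reverse-Hölder step: for a nonnegative `g` with integrable cube root and a
point density `lam` integrating to `1` on `[0,1]`,
`(∫ g^{1/3})³ ≤ ∫⁻ g / lam²`. -/
lemma holder_step_aux (g lam : ℝ → ℝ) (hg : Measurable g) (hgnn : ∀ x, 0 ≤ g x)
    (hl : Measurable lam) (hlnn : ∀ x, 0 ≤ lam x)
    (hint : IntegrableOn (fun t => g t ^ ((1 : ℝ) / 3)) (Icc 0 1) volume)
    (hlint : (∫ t in Icc (0 : ℝ) 1, lam t) = 1) :
    ENNReal.ofReal ((∫ t in Icc (0 : ℝ) 1, g t ^ ((1 : ℝ) / 3)) ^ 3) ≤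
      ∫⁻ x in Icc (0 : ℝ) 1, ENNReal.ofReal (g x) / (ENNReal.ofReal (lam x)) ^ 2 := by
  set μ := volume.restrict (Icc (0 : ℝ) 1) with hμ
  set G : ℝ → ℝ≥0∞ := fun x => ENNReal.ofReal (g x) with hG
  set L : ℝ → ℝ≥0∞ := fun x => ENNReal.ofReal (lam x) with hL
  have hGm : Measurable G := hg.ennreal_ofReal
  have hLm : Measurable L := hl.ennreal_ofReal
  have hDm : Measurable (fun x => G x / (L x) ^ 2) := hGm.div (hLm.pow_const 2)
  by_cases hD : (∫⁻ x, G x / (L x) ^ 2 ∂μ) = ⊤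
  · rw [hD]; exact le_top
  -- a.e. finiteness
  have hae : ∀ᵐ x ∂μ, G x / (L x) ^ 2 < ⊤ := ae_lt_top hDm hD
  have hpt : ∀ᵐ x ∂μ, (G x) ^ ((1 : ℝ) / 3) ≤
      ((G x / (L x) ^ 2) ^ ((1 : ℝ) / 3)) * ((L x) ^ ((2 : ℝ) / 3)) := by
    filter_upwards [hae] with x hx
    by_cases hL0 : L x = 0
    · have hG0 : G x = 0 := by
        by_contra hne
        rw [hL0] at hx
        simp [ENNReal.div_zero hne] at hx
      rw [hG0, ENNReal.zero_rpow_of_pos (by norm_num)]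
      exact zero_le
    · have hLt : L x ≠ ⊤ := ENNReal.ofReal_ne_top
      refine le_of_eq ?_
      have h1 : (G x / (L x) ^ 2) ^ ((1 : ℝ) / 3)
          = (G x) ^ ((1 : ℝ) / 3) / ((L x) ^ 2) ^ ((1 : ℝ) / 3) :=
        ENNReal.div_rpow_of_nonneg _ _ (by norm_num)
      have h2 : ((L x) ^ 2) ^ ((1 : ℝ) / 3) = (L x) ^ ((2 : ℝ) / 3) := by
        rw [← ENNReal.rpow_natCast (L x) 2, ← ENNReal.rpow_mul]
        norm_num
      rw [h1, h2, ENNReal.div_mul_cancel]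
      · exact (ENNReal.rpow_pos (pos_iff_ne_zero.mpr hL0) hLt).ne'
      · exact ENNReal.rpow_ne_top_of_nonneg (by norm_num) hLt
  have hmono := lintegral_mono_ae hpt
  have hconj : Real.HolderConjugate 3 (3 / 2) := by
    constructor <;> norm_num
  have hH := ENNReal.lintegral_mul_le_Lp_mul_Lq μ hconj
      (f := fun x => (G x / (L x) ^ 2) ^ ((1 : ℝ) / 3))
      (g := fun x => (L x) ^ ((2 : ℝ) / 3))
      ((hDm.pow_const _).aemeasurable) ((hLm.pow_const _).aemeasurable)
  have hfp : ∀ x, ((G x / (L x) ^ 2) ^ ((1 : ℝ) / 3)) ^ (3 : ℝ) = G x / (L x) ^ 2 := by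
    intro x; rw [← ENNReal.rpow_mul]; norm_num
  have hgq : ∀ x, ((L x) ^ ((2 : ℝ) / 3)) ^ ((3 : ℝ) / 2) = L x := by
    intro x; rw [← ENNReal.rpow_mul]; norm_num
  simp only [Pi.mul_apply, hfp, hgq] at hH
  -- integral of L is 1
  have hlInt : IntegrableOn lam (Icc (0 : ℝ) 1) volume := by
    by_contra hni
    rw [integral_undef hni] at hlint; norm_num at hlint
  have hLint : (∫⁻ x, L x ∂μ) = 1 := by
    rw [hL, ← ofReal_integral_eq_lintegral_ofReal hlInt
      (Filter.Eventually.of_forall fun x => hlnn x), hlint, ENNReal.ofReal_one]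
  rw [hLint, ENNReal.one_rpow, mul_one] at hH
  -- left side: ofReal of integral equals lintegral of G^{1/3}
  have hSnn : 0 ≤ ∫ t in Icc (0 : ℝ) 1, g t ^ ((1 : ℝ) / 3) :=
    integral_nonneg fun t => Real.rpow_nonneg (hgnn t) _
  have hS : ENNReal.ofReal (∫ t in Icc (0 : ℝ) 1, g t ^ ((1 : ℝ) / 3))
      = ∫⁻ x, (G x) ^ ((1 : ℝ) / 3) ∂μ := by
    rw [ofReal_integral_eq_lintegral_ofReal hint
      (Filter.Eventually.of_forall fun x => Real.rpow_nonneg (hgnn x) _)]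
    exact lintegral_congr fun x =>
      (ENNReal.ofReal_rpow_of_nonneg (hgnn x) (by norm_num : (0:ℝ) ≤ 1/3)).symm
  calc ENNReal.ofReal ((∫ t in Icc (0 : ℝ) 1, g t ^ ((1 : ℝ) / 3)) ^ 3)
      = (ENNReal.ofReal (∫ t in Icc (0 : ℝ) 1, g t ^ ((1 : ℝ) / 3))) ^ 3 :=
        ENNReal.ofReal_pow hSnn 3
    _ = (∫⁻ x, (G x) ^ ((1 : ℝ) / 3) ∂μ) ^ 3 := by rw [hS]
    _ ≤ ((∫⁻ x, G x / (L x) ^ 2 ∂μ) ^ ((1 : ℝ) / 3)) ^ 3 :=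
        pow_le_pow_left₀ zero_le (le_trans hmono hH) 3
    _ = ∫⁻ x, G x / (L x) ^ 2 ∂μ := by
        rw [← ENNReal.rpow_natCast _ 3, ← ENNReal.rpow_mul]; norm_num

/-- Weighted AM–GM specialization for the fractional-allocation optimization. -/
lemma amgm_step_aux (n : ℕ) (hn : 1 ≤ n) (R : ℝ) (α S : Fin n → ℝ)
    (hsum : (∑ j, α j) = 1) (hS : ∀ j, 0 < S j) :
    ((n : ℝ) / 12) * (∏ j, (S j) ^ 3) ^ ((1 : ℝ) / n) * (2 : ℝ) ^ (-2 * R / n) ≤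
      ∑ j, (1 / 12) * (2 : ℝ) ^ (-2 * α j * R) * (S j) ^ 3 := by
  have hn0 : (n : ℝ) ≠ 0 := Nat.cast_ne_zero.mpr (by omega)
  have hnpos : (0 : ℝ) < n := by positivity
  set c : Fin n → ℝ := fun j => (1 / 12) * (2 : ℝ) ^ (-2 * α j * R) * (S j) ^ 3 with hc
  have hcpos : ∀ j, 0 < c j := fun j => by
    have := Real.rpow_pos_of_pos (by norm_num : (0:ℝ) < 2) (-2 * α j * R)
    have := hS j; positivity
  have hw : (∑ _j : Fin n, (1 : ℝ) / n) = 1 := by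
    rw [Finset.sum_const, Finset.card_univ, Fintype.card_fin, nsmul_eq_mul]
    field_simp
  have hAM := Real.geom_mean_le_arith_mean_weighted Finset.univ (fun _ => (1 : ℝ) / n) c
    (fun i _ => by positivity) hw (fun i _ => (hcpos i).le)
  have hprod : (∏ j, c j ^ ((1 : ℝ) / n)) =
      (1 / 12) * (2 : ℝ) ^ (-2 * R / n) * (∏ j, (S j) ^ 3) ^ ((1 : ℝ) / n) := by
    have hsplit : ∀ j : Fin n, c j ^ ((1 : ℝ) / n) =
        ((1 : ℝ) / 12) ^ ((1 : ℝ) / n) * (2 : ℝ) ^ (-2 * α j * R * (1 / n)) *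
          ((S j) ^ 3) ^ ((1 : ℝ) / n) := by
      intro j
      rw [hc]
      rw [Real.mul_rpow (by positivity) (pow_nonneg (hS j).le 3),
        Real.mul_rpow (by norm_num) (Real.rpow_nonneg (by norm_num) _),
        ← Real.rpow_mul (by norm_num : (0:ℝ) ≤ 2)]
    calc (∏ j, c j ^ ((1 : ℝ) / n))
        = (∏ _j : Fin n, ((1 : ℝ) / 12) ^ ((1 : ℝ) / n)) *
          (∏ j, (2 : ℝ) ^ (-2 * α j * R * (1 / n))) *
          (∏ j, ((S j) ^ 3) ^ ((1 : ℝ) / n)) := by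
          simp_rw [hsplit, Finset.prod_mul_distrib]
      _ = (1 / 12) * (2 : ℝ) ^ (-2 * R / n) * (∏ j, (S j) ^ 3) ^ ((1 : ℝ) / n) := by
          congr 1
          · congr 1
            · rw [Finset.prod_const, Finset.card_univ, Fintype.card_fin,
                ← Real.rpow_natCast (((1:ℝ)/12) ^ ((1:ℝ)/n)) n,
                ← Real.rpow_mul (by norm_num : (0:ℝ) ≤ 1/12)]
              field_simp
              norm_num
            · rw [← Real.rpow_sum_of_pos (by norm_num : (0:ℝ) < 2)]
              congr 1
              rw [Finset.sum_congr rfl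
                (fun x _ => show -2 * α x * R * (1 / (n:ℝ)) = α x * (-2 * R / n) by ring),
                ← Finset.sum_mul, hsum, one_mul]
          · exact Real.finset_prod_rpow _ _ (fun i _ => pow_nonneg (hS i).le 3) _
  rw [hprod, ← Finset.mul_sum] at hAM
  calc ((n : ℝ) / 12) * (∏ j, (S j) ^ 3) ^ ((1 : ℝ) / n) * (2 : ℝ) ^ (-2 * R / n)
      = (n : ℝ) * ((1 / 12) * (2 : ℝ) ^ (-2 * R / n) * (∏ j, (S j) ^ 3) ^ ((1 : ℝ) / n)) := by
        ring
    _ ≤ (n : ℝ) * ((1 / n) * ∑ j, c j) := mul_le_mul_of_nonneg_left hAM hnpos.le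
    _ = ∑ j, c j := by field_simp

/-- Fixed-rate distortion lower bound with optimal point densities and fractional
allocation (Theorem 3, fixed-rate): for any rate `R`, fractional allocation `α`
(`α_j > 0`, `∑ α_j = 1`) and point densities `λ_j` with `∫₀¹ λ_j = 1`,
`∑_j (1/12) 2^{−2α_j R} ∫₀¹ f_j γ_j²/λ_j² ≥ (n/12)(∏_j ‖γ_j² f_j‖_{1/3})^{1/n} 2^{−2R/n}`,
where `‖u‖_{1/3} = (∫₀¹ u^{1/3})³`. -/
theorem fixed_rate_distortion_lower_bound (n : ℕ) (hn : 1 ≤ n)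
    (f γ : Fin n → ℝ → ℝ)
    (hf_meas : ∀ j, Measurable (f j)) (hf_nonneg : ∀ j x, 0 ≤ f j x)
    (hf_prob : ∀ j, (∫ x in Icc (0 : ℝ) 1, f j x) = 1)
    (hγ_meas : ∀ j, Measurable (γ j)) (hγ_nonneg : ∀ j x, 0 ≤ γ j x)
    (h13_int : ∀ j, IntegrableOn (fun t => (γ j t ^ 2 * f j t) ^ ((1 : ℝ) / 3))
      (Icc 0 1) volume)
    (h13_pos : ∀ j, 0 < ∫ t in Icc (0 : ℝ) 1, (γ j t ^ 2 * f j t) ^ ((1 : ℝ) / 3)) :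
    ∀ (R : ℝ) (α : Fin n → ℝ), (∀ j, 0 < α j) → (∑ j, α j) = 1 →
    ∀ lam : Fin n → ℝ → ℝ, (∀ j, Measurable (lam j)) → (∀ j x, 0 ≤ lam j x) →
      (∀ j, (∫ t in Icc (0 : ℝ) 1, lam j t) = 1) →
      ENNReal.ofReal (((n : ℝ) / 12) *
          (∏ j, (∫ t in Icc (0 : ℝ) 1, (γ j t ^ 2 * f j t) ^ ((1 : ℝ) / 3)) ^ 3) ^
            ((1 : ℝ) / n) *
          (2 : ℝ) ^ (-2 * R / n)) ≤
        ∑ j, ENNReal.ofReal ((1 / 12) * (2 : ℝ) ^ (-2 * α j * R)) *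
          ∫⁻ x in Icc (0 : ℝ) 1,
            ENNReal.ofReal (f j x * γ j x ^ 2) / (ENNReal.ofReal (lam j x)) ^ 2 := by
  intro R α hα hsum lam hlam_meas hlam_nn hlam_int
  set S : Fin n → ℝ := fun j => ∫ t in Icc (0 : ℝ) 1, (γ j t ^ 2 * f j t) ^ ((1 : ℝ) / 3)
    with hSdef
  -- per-coordinate Hölder bound
  have hholder : ∀ j, ENNReal.ofReal ((S j) ^ 3) ≤
      ∫⁻ x in Icc (0 : ℝ) 1,
        ENNReal.ofReal (f j x * γ j x ^ 2) / (ENNReal.ofReal (lam j x)) ^ 2 := by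
    intro j
    have h := holder_step_aux (fun t => γ j t ^ 2 * f j t) (lam j)
      (((hγ_meas j).pow_const 2).mul (hf_meas j))
      (fun x => mul_nonneg (pow_nonneg (hγ_nonneg j x) 2) (hf_nonneg j x))
      (hlam_meas j) (hlam_nn j) (h13_int j) (hlam_int j)
    refine le_trans h (le_of_eq (lintegral_congr fun x => ?_))
    simp [mul_comm (f j x) (γ j x ^ 2)]
  -- termwise bound
  have hterm : ∀ j, ENNReal.ofReal ((1 / 12) * (2 : ℝ) ^ (-2 * α j * R) * (S j) ^ 3) ≤
      ENNReal.ofReal ((1 / 12) * (2 : ℝ) ^ (-2 * α j * R)) *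
        ∫⁻ x in Icc (0 : ℝ) 1,
          ENNReal.ofReal (f j x * γ j x ^ 2) / (ENNReal.ofReal (lam j x)) ^ 2 := by
    intro j
    rw [ENNReal.ofReal_mul (by positivity)]
    exact mul_le_mul_right (hholder j) _
  calc ENNReal.ofReal (((n : ℝ) / 12) * (∏ j, (S j) ^ 3) ^ ((1 : ℝ) / n) *
        (2 : ℝ) ^ (-2 * R / n))
      ≤ ENNReal.ofReal (∑ j, (1 / 12) * (2 : ℝ) ^ (-2 * α j * R) * (S j) ^ 3) :=
        ENNReal.ofReal_le_ofReal (amgm_step_aux n hn R α S hsum h13_pos)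
    _ = ∑ j, ENNReal.ofReal ((1 / 12) * (2 : ℝ) ^ (-2 * α j * R) * (S j) ^ 3) :=
        ENNReal.ofReal_sum_of_nonneg fun j _ => by
          have := Real.rpow_pos_of_pos (by norm_num : (0:ℝ) < 2) (-2 * α j * R)
          have := h13_pos j
          positivity
    _ ≤ _ := Finset.sum_le_sum fun j _ => hterm j
end

section
/- Let p₀, p₁ > 0 with p₀ + p₁ = 1, let f₀, f₁ be probability densities on [0,1], and let γ₀, γ₁ : [0,1] → [0,∞) be measurable. Define f := p₀·f₀ + p₁·f₁ and define γ : [0,1] → [0,∞) on {f > 0} by γ(x)² := ( p₀·f₀(x)·γ₀(x)² + p₁·f₁(x)·γ₁(x)² ) / f(x) (and γ(x) := 0 where f(x) = 0). Then p₀·‖γ₀²·f₀‖_{1/3} + p₁·‖γ₁²·f₁‖_{1/3} ≥ (1/4)·‖γ²·f‖_{1/3}, where ‖u‖_{1/3} := (∫_0^1 u(t)^{1/3} dt)³. -/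
open MeasureTheory Set
open scoped ENNReal NNReal

/-- `(a+b)^3 ≤ 4 (a^3 + b^3)` in `ℝ≥0∞`. -/
lemma cube_add_le_four_mul (a b : ℝ≥0∞) : (a + b) ^ 3 ≤ 4 * (a ^ 3 + b ^ 3) := by
  rcases eq_or_ne a ⊤ with ha | ha
  · have : (4 : ℝ≥0∞) * (a ^ 3 + b ^ 3) = ⊤ := by
      rw [ha]; simp [ENNReal.top_pow]
    rw [this]; exact le_top
  rcases eq_or_ne b ⊤ with hb | hb
  · have : (4 : ℝ≥0∞) * (a ^ 3 + b ^ 3) = ⊤ := by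
      rw [hb]; simp [ENNReal.top_pow]
    rw [this]; exact le_top
  lift a to NNReal using ha
  lift b to NNReal using hb
  have h : ((a : ℝ) + b) ^ 3 ≤ 4 * ((a : ℝ) ^ 3 + (b : ℝ) ^ 3) := by
    nlinarith [a.coe_nonneg, b.coe_nonneg, sq_nonneg ((a : ℝ) - b),
      mul_nonneg (add_nonneg a.coe_nonneg b.coe_nonneg) (sq_nonneg ((a : ℝ) - b))]
  have h' : (a + b) ^ 3 ≤ 4 * (a ^ 3 + b ^ 3 : NNReal) := by
    rw [← NNReal.coe_le_coe]; push_cast; exact h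
  exact_mod_cast h'

/-- Theorem 7 (chatting encoders, fixed rate): with `f = p₀ f₀ + p₁ f₁` and the
unconditional sensitivity `γ` given by `γ² f = p₀ f₀ γ₀² + p₁ f₁ γ₁²`, one has
`p₀ ‖γ₀² f₀‖_{1/3} + p₁ ‖γ₁² f₁‖_{1/3} ≥ (1/4) ‖γ² f‖_{1/3}`, where
`‖u‖_{1/3} = (∫₀¹ u^{1/3})³` (integrals valued in `[0,∞]`): one chatting bit reduces
the fixed-rate distortion contribution by at most a factor of 4. -/
theorem chatting_fixed_rate_factor_four (p₀ p₁ : ℝ) (hp₀ : 0 < p₀) (hp₁ : 0 < p₁)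
    (hp : p₀ + p₁ = 1)
    (f₀ f₁ : ℝ → ℝ) (hf₀_meas : Measurable f₀) (hf₁_meas : Measurable f₁)
    (hf₀_nonneg : ∀ x, 0 ≤ f₀ x) (hf₁_nonneg : ∀ x, 0 ≤ f₁ x)
    (hf₀_prob : (∫ x in Icc (0 : ℝ) 1, f₀ x) = 1)
    (hf₁_prob : (∫ x in Icc (0 : ℝ) 1, f₁ x) = 1)
    (γ₀ γ₁ : ℝ → ℝ) (hγ₀_meas : Measurable γ₀) (hγ₁_meas : Measurable γ₁)
    (hγ₀_nonneg : ∀ x, 0 ≤ γ₀ x) (hγ₁_nonneg : ∀ x, 0 ≤ γ₁ x)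
    (f : ℝ → ℝ) (hf : ∀ x, f x = p₀ * f₀ x + p₁ * f₁ x)
    (γ : ℝ → ℝ) (hγ_nonneg : ∀ x, 0 ≤ γ x)
    (hγ : ∀ x, (f x = 0 → γ x = 0) ∧
      (f x ≠ 0 → γ x ^ 2 = (p₀ * f₀ x * γ₀ x ^ 2 + p₁ * f₁ x * γ₁ x ^ 2) / f x)) :
    (1 / 4 : ENNReal) *
        (∫⁻ t in Icc (0 : ℝ) 1, ENNReal.ofReal ((γ t ^ 2 * f t) ^ ((1 : ℝ) / 3))) ^ 3 ≤
      ENNReal.ofReal p₀ *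
          (∫⁻ t in Icc (0 : ℝ) 1, ENNReal.ofReal ((γ₀ t ^ 2 * f₀ t) ^ ((1 : ℝ) / 3))) ^ 3 +
        ENNReal.ofReal p₁ *
          (∫⁻ t in Icc (0 : ℝ) 1, ENNReal.ofReal ((γ₁ t ^ 2 * f₁ t) ^ ((1 : ℝ) / 3))) ^ 3 := by
  -- abbreviations
  set u₀ : ℝ → ℝ := fun t => p₀ * (γ₀ t ^ 2 * f₀ t) with hu₀
  set u₁ : ℝ → ℝ := fun t => p₁ * (γ₁ t ^ 2 * f₁ t) with hu₁
  have hu₀_nonneg : ∀ t, 0 ≤ u₀ t := fun t =>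
    mul_nonneg hp₀.le (mul_nonneg (sq_nonneg _) (hf₀_nonneg t))
  have hu₁_nonneg : ∀ t, 0 ≤ u₁ t := fun t =>
    mul_nonneg hp₁.le (mul_nonneg (sq_nonneg _) (hf₁_nonneg t))
  -- pointwise identity: γ² f = u₀ + u₁
  have hpt : ∀ t, γ t ^ 2 * f t = u₀ t + u₁ t := by
    intro t
    rcases eq_or_ne (f t) 0 with h0 | h0
    · have hsum : p₀ * f₀ t + p₁ * f₁ t = 0 := by rw [← hf t]; exact h0
      have h₀' : f₀ t = 0 := by
        have := (add_eq_zero_iff_of_nonneg (mul_nonneg hp₀.le (hf₀_nonneg t))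
          (mul_nonneg hp₁.le (hf₁_nonneg t))).mp hsum
        have := this.1
        exact (mul_eq_zero.mp this).resolve_left (ne_of_gt hp₀)
      have h₁' : f₁ t = 0 := by
        have := (add_eq_zero_iff_of_nonneg (mul_nonneg hp₀.le (hf₀_nonneg t))
          (mul_nonneg hp₁.le (hf₁_nonneg t))).mp hsum
        have := this.2
        exact (mul_eq_zero.mp this).resolve_left (ne_of_gt hp₁)
      simp [hu₀, hu₁, h0, h₀', h₁']
    · have hγ2 := (hγ t).2 h0
      rw [hγ2, div_mul_cancel₀ _ h0, hu₀, hu₁]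
      ring
  -- the three integrals
  set A₀ := ∫⁻ t in Icc (0 : ℝ) 1, ENNReal.ofReal ((γ₀ t ^ 2 * f₀ t) ^ ((1 : ℝ) / 3)) with hA₀
  set A₁ := ∫⁻ t in Icc (0 : ℝ) 1, ENNReal.ofReal ((γ₁ t ^ 2 * f₁ t) ^ ((1 : ℝ) / 3)) with hA₁
  -- measurability of cube-root integrands
  have hm₀ : Measurable fun t => ENNReal.ofReal ((γ₀ t ^ 2 * f₀ t) ^ ((1 : ℝ) / 3)) := by
    apply ENNReal.measurable_ofReal.comp
    exact ((hγ₀_meas.pow_const 2).mul hf₀_meas).pow measurable_const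
  have hm₁ : Measurable fun t => ENNReal.ofReal ((γ₁ t ^ 2 * f₁ t) ^ ((1 : ℝ) / 3)) := by
    apply ENNReal.measurable_ofReal.comp
    exact ((hγ₁_meas.pow_const 2).mul hf₁_meas).pow measurable_const
  -- Step 1: subadditivity of the 1/3 power under the integral
  have step1 : (∫⁻ t in Icc (0 : ℝ) 1, ENNReal.ofReal ((γ t ^ 2 * f t) ^ ((1 : ℝ) / 3)))
      ≤ ENNReal.ofReal (p₀ ^ ((1 : ℝ) / 3)) * A₀ + ENNReal.ofReal (p₁ ^ ((1 : ℝ) / 3)) * A₁ := by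
    have hmono : ∀ t, ENNReal.ofReal ((γ t ^ 2 * f t) ^ ((1 : ℝ) / 3))
        ≤ ENNReal.ofReal (p₀ ^ ((1 : ℝ) / 3)) * ENNReal.ofReal ((γ₀ t ^ 2 * f₀ t) ^ ((1 : ℝ) / 3))
          + ENNReal.ofReal (p₁ ^ ((1 : ℝ) / 3)) *
            ENNReal.ofReal ((γ₁ t ^ 2 * f₁ t) ^ ((1 : ℝ) / 3)) := by
      intro t
      have hsub : (u₀ t + u₁ t) ^ ((1 : ℝ) / 3) ≤ u₀ t ^ ((1 : ℝ) / 3) + u₁ t ^ ((1 : ℝ) / 3) := by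
        have := NNReal.rpow_add_le_add_rpow (⟨u₀ t, hu₀_nonneg t⟩ : NNReal)
          (⟨u₁ t, hu₁_nonneg t⟩ : NNReal) (by norm_num : (0 : ℝ) ≤ 1 / 3)
          (by norm_num : (1 : ℝ) / 3 ≤ 1)
        exact_mod_cast this
      have h₀r : u₀ t ^ ((1 : ℝ) / 3)
          = p₀ ^ ((1 : ℝ) / 3) * (γ₀ t ^ 2 * f₀ t) ^ ((1 : ℝ) / 3) :=
        Real.mul_rpow hp₀.le (mul_nonneg (sq_nonneg _) (hf₀_nonneg t))
      have h₁r : u₁ t ^ ((1 : ℝ) / 3)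
          = p₁ ^ ((1 : ℝ) / 3) * (γ₁ t ^ 2 * f₁ t) ^ ((1 : ℝ) / 3) :=
        Real.mul_rpow hp₁.le (mul_nonneg (sq_nonneg _) (hf₁_nonneg t))
      calc ENNReal.ofReal ((γ t ^ 2 * f t) ^ ((1 : ℝ) / 3))
          = ENNReal.ofReal ((u₀ t + u₁ t) ^ ((1 : ℝ) / 3)) := by rw [hpt t]
        _ ≤ ENNReal.ofReal (u₀ t ^ ((1 : ℝ) / 3) + u₁ t ^ ((1 : ℝ) / 3)) :=
            ENNReal.ofReal_le_ofReal hsub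
        _ = ENNReal.ofReal (u₀ t ^ ((1 : ℝ) / 3)) + ENNReal.ofReal (u₁ t ^ ((1 : ℝ) / 3)) :=
            ENNReal.ofReal_add (Real.rpow_nonneg (hu₀_nonneg t) _)
              (Real.rpow_nonneg (hu₁_nonneg t) _)
        _ = ENNReal.ofReal (p₀ ^ ((1 : ℝ) / 3)) * ENNReal.ofReal ((γ₀ t ^ 2 * f₀ t) ^ ((1 : ℝ) / 3))
            + ENNReal.ofReal (p₁ ^ ((1 : ℝ) / 3)) *
              ENNReal.ofReal ((γ₁ t ^ 2 * f₁ t) ^ ((1 : ℝ) / 3)) := by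
            rw [h₀r, h₁r, ENNReal.ofReal_mul (Real.rpow_nonneg hp₀.le _),
              ENNReal.ofReal_mul (Real.rpow_nonneg hp₁.le _)]
    calc (∫⁻ t in Icc (0 : ℝ) 1, ENNReal.ofReal ((γ t ^ 2 * f t) ^ ((1 : ℝ) / 3)))
        ≤ ∫⁻ t in Icc (0 : ℝ) 1,
            (ENNReal.ofReal (p₀ ^ ((1 : ℝ) / 3)) *
              ENNReal.ofReal ((γ₀ t ^ 2 * f₀ t) ^ ((1 : ℝ) / 3))
            + ENNReal.ofReal (p₁ ^ ((1 : ℝ) / 3)) *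
              ENNReal.ofReal ((γ₁ t ^ 2 * f₁ t) ^ ((1 : ℝ) / 3))) :=
          lintegral_mono (fun t => hmono t)
      _ = ENNReal.ofReal (p₀ ^ ((1 : ℝ) / 3)) * A₀ + ENNReal.ofReal (p₁ ^ ((1 : ℝ) / 3)) * A₁ := by
          rw [lintegral_add_left ((hm₀.const_mul _)) _,
            lintegral_const_mul _ hm₀, lintegral_const_mul _ hm₁]
  -- Step 2: cube both sides and use (a+b)³ ≤ 4(a³+b³)
  have cube_p : ∀ p : ℝ, 0 ≤ p →
      (ENNReal.ofReal (p ^ ((1 : ℝ) / 3))) ^ 3 = ENNReal.ofReal p := by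
    intro p hp'
    rw [← ENNReal.ofReal_pow (Real.rpow_nonneg hp' _)]
    congr 1
    rw [← Real.rpow_natCast (p ^ ((1 : ℝ) / 3)) 3, ← Real.rpow_mul hp']
    norm_num
  have key : (∫⁻ t in Icc (0 : ℝ) 1, ENNReal.ofReal ((γ t ^ 2 * f t) ^ ((1 : ℝ) / 3))) ^ 3
      ≤ 4 * (ENNReal.ofReal p₀ * A₀ ^ 3 + ENNReal.ofReal p₁ * A₁ ^ 3) := by
    calc (∫⁻ t in Icc (0 : ℝ) 1, ENNReal.ofReal ((γ t ^ 2 * f t) ^ ((1 : ℝ) / 3))) ^ 3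
        ≤ (ENNReal.ofReal (p₀ ^ ((1 : ℝ) / 3)) * A₀
            + ENNReal.ofReal (p₁ ^ ((1 : ℝ) / 3)) * A₁) ^ 3 :=
          pow_le_pow_left' step1 3
      _ ≤ 4 * ((ENNReal.ofReal (p₀ ^ ((1 : ℝ) / 3)) * A₀) ^ 3
            + (ENNReal.ofReal (p₁ ^ ((1 : ℝ) / 3)) * A₁) ^ 3) :=
          cube_add_le_four_mul _ _
      _ = 4 * (ENNReal.ofReal p₀ * A₀ ^ 3 + ENNReal.ofReal p₁ * A₁ ^ 3) := by
          rw [mul_pow, mul_pow, cube_p p₀ hp₀.le, cube_p p₁ hp₁.le]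
  calc (1 / 4 : ENNReal) *
        (∫⁻ t in Icc (0 : ℝ) 1, ENNReal.ofReal ((γ t ^ 2 * f t) ^ ((1 : ℝ) / 3))) ^ 3
      ≤ (1 / 4 : ENNReal) * (4 * (ENNReal.ofReal p₀ * A₀ ^ 3 + ENNReal.ofReal p₁ * A₁ ^ 3)) :=
        mul_le_mul_right key _
    _ = ENNReal.ofReal p₀ * A₀ ^ 3 + ENNReal.ofReal p₁ * A₁ ^ 3 := by
        rw [← mul_assoc, ENNReal.div_mul_cancel (by norm_num) (by norm_num), one_mul]
    _ = _ := rfl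
end
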